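/- arXiv:2112.14451 — 6 statements merged into one kernel-verified Lean document; each statement's English description precedes it below -/
import Mathlib

section
/- Let ξ be a positive integrable random variable whose CDF F_ξ is continuous and strictly increasing on (0,∞). Then for every lower-bounded random variable X with quantile function G_X, one has E[ξ · G_X(1 − F_ξ(ξ))] ≤ E[ξ X] (both sides valued in (−∞, +∞]). -/
open MeasureTheory ProbabilityTheory Set
open scoped ENNReal NNReal Classical

noncomputable section

/-- Quantile function `G_Y(z) = inf {y | F_Y(y) > z}` of `Y` under `μ`. -/
def qf {Ω : Type*} [MeasurableSpace Ω] (μ : Measure Ω) (Y : Ω → ℝ) (z : ℝ) : ℝ :=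
  sInf {y : ℝ | z < (μ {ω | Y ω ≤ y}).toReal}

/-- CDF `F_Y(y) = P(Y ≤ y)` of `Y` under `μ`. -/
def cdfOf {Ω : Type*} [MeasurableSpace Ω] (μ : Measure Ω) (Y : Ω → ℝ) (y : ℝ) : ℝ :=
  (μ {ω | Y ω ≤ y}).toReal

/-- Extended expectation of a real random variable, valued in `EReal`
(in particular it makes sense, with value in `(-∞, +∞]`, when the negative part is
integrable). -/
def expER {Ω : Type*} [MeasurableSpace Ω] (μ : Measure Ω) (f : Ω → ℝ) : EReal :=
  ((∫⁻ ω, ENNReal.ofReal (f ω) ∂μ : ℝ≥0∞) : EReal)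
    - ((∫⁻ ω, ENNReal.ofReal (-f ω) ∂μ : ℝ≥0∞) : EReal)

section Aux
variable {Ω : Type*} [MeasurableSpace Ω] {μ : Measure Ω}

lemma qf_eq (Y : Ω → ℝ) (z : ℝ) : qf μ Y z = sInf {y | z < cdfOf μ Y y} := rfl

lemma cdfOf_nonneg (Y : Ω → ℝ) (y : ℝ) : 0 ≤ cdfOf μ Y y := ENNReal.toReal_nonneg

lemma cdfOf_mono [IsFiniteMeasure μ] (Y : Ω → ℝ) : Monotone (cdfOf μ Y) := by
  intro a b hab
  exact ENNReal.toReal_mono (measure_ne_top μ _)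
    (measure_mono (fun ω (h : Y ω ≤ a) => h.trans hab))

lemma cdfOf_le_one [IsProbabilityMeasure μ] (Y : Ω → ℝ) (y : ℝ) : cdfOf μ Y y ≤ 1 := by
  have h : μ {ω | Y ω ≤ y} ≤ 1 := prob_le_one
  calc (μ {ω | Y ω ≤ y}).toReal ≤ (1 : ℝ≥0∞).toReal := ENNReal.toReal_mono (by simp) h
    _ = 1 := by simp

lemma exists_cdf_gt [IsProbabilityMeasure μ] {Y : Ω → ℝ} (hY : Measurable Y) {z : ℝ}
    (hz : z < 1) : ∃ n : ℕ, z < cdfOf μ Y n := by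
  by_contra h
  push_neg at h
  have hle : ∀ n : ℕ, μ {ω | Y ω ≤ (n : ℝ)} ≤ ENNReal.ofReal z := by
    intro n
    have h2 := ENNReal.ofReal_le_ofReal (h n)
    rwa [cdfOf, ENNReal.ofReal_toReal (measure_ne_top μ _)] at h2
  have hdir : Monotone (fun n : ℕ => {ω | Y ω ≤ (n : ℝ)}) := by
    intro a b hab ω (hω : Y ω ≤ (a : ℝ))
    exact hω.trans (by exact_mod_cast hab)
  have hU : (⋃ n : ℕ, {ω | Y ω ≤ (n : ℝ)}) = univ := by
    ext ω
    simp only [mem_iUnion, mem_univ, iff_true, mem_setOf_eq]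
    exact exists_nat_ge (Y ω)
  have hcontra : (1 : ℝ≥0∞) ≤ ENNReal.ofReal z := by
    calc (1 : ℝ≥0∞) = μ univ := (measure_univ).symm
      _ = μ (⋃ n : ℕ, {ω | Y ω ≤ (n : ℝ)}) := by rw [hU]
      _ = ⨆ n : ℕ, μ {ω | Y ω ≤ (n : ℝ)} := hdir.directed_le.measure_iUnion
      _ ≤ ENNReal.ofReal z := iSup_le hle
  exact absurd (lt_of_le_of_lt hcontra (ENNReal.ofReal_lt_one.2 hz)) (lt_irrefl _)

lemma lb_of_cdf_pos {Y : Ω → ℝ} {c z y : ℝ} (hc : ∀ ω, c ≤ Y ω) (hz : 0 ≤ z)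
    (hy : z < cdfOf μ Y y) : c ≤ y := by
  have hne : μ {ω | Y ω ≤ y} ≠ 0 := by
    intro h0
    rw [cdfOf, h0] at hy
    simp at hy
    linarith
  obtain ⟨ω, hω⟩ := nonempty_of_measure_ne_zero hne
  exact (hc ω).trans hω

lemma qf_set_bddBelow {Y : Ω → ℝ} {c z : ℝ} (hc : ∀ ω, c ≤ Y ω) (hz : 0 ≤ z) :
    BddBelow {y | z < cdfOf μ Y y} :=
  ⟨c, fun _ hy => lb_of_cdf_pos hc hz hy⟩

lemma qf_set_nonempty [IsProbabilityMeasure μ] {Y : Ω → ℝ} (hY : Measurable Y) {z : ℝ}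
    (hz : z < 1) : {y | z < cdfOf μ Y y}.Nonempty := by
  obtain ⟨n, hn⟩ := exists_cdf_gt (μ := μ) hY hz
  exact ⟨n, hn⟩

lemma qf_nonneg {Y : Ω → ℝ} (h0 : ∀ ω, 0 ≤ Y ω) {z : ℝ} (hz : 0 ≤ z) : 0 ≤ qf μ Y z :=
  Real.sInf_nonneg fun _ hy => lb_of_cdf_pos h0 hz hy

lemma qf_monotoneOn [IsProbabilityMeasure μ] {Y : Ω → ℝ} (hY : Measurable Y)
    (h0 : ∀ ω, 0 ≤ Y ω) : MonotoneOn (qf μ Y) (Ico (0 : ℝ) 1) := by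
  intro z₁ hz₁ z₂ hz₂ h12
  exact csInf_le_csInf (qf_set_bddBelow h0 hz₁.1) (qf_set_nonempty hY hz₂.2)
    (fun y hy => h12.trans_lt hy)


lemma qf_sub_const [IsProbabilityMeasure μ] {X : Ω → ℝ} (hXm : Measurable X) {c : ℝ}
    (hc : ∀ ω, c ≤ X ω) {z : ℝ} (hz0 : 0 ≤ z) (hz1 : z < 1) :
    qf μ X z = qf μ (fun ω => X ω - c) z + c := by
  have hX'm : Measurable fun ω => X ω - c := hXm.sub measurable_const
  have hX'0 : ∀ ω, (0 : ℝ) ≤ X ω - c := fun ω => sub_nonneg.2 (hc ω)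
  have hTS : ∀ y : ℝ, z < cdfOf μ (fun ω => X ω - c) y ↔ z < cdfOf μ X (y + c) := by
    intro y
    have hs : {ω | X ω - c ≤ y} = {ω | X ω ≤ y + c} := by
      ext ω; simp [sub_le_iff_le_add]
    rw [cdfOf, cdfOf, hs]
  have hSne := qf_set_nonempty (μ := μ) hXm hz1
  have hSbd : BddBelow {y | z < cdfOf μ X y} := qf_set_bddBelow hc hz0
  have hTne := qf_set_nonempty (μ := μ) hX'm hz1
  have hTbd : BddBelow {y | z < cdfOf μ (fun ω => X ω - c) y} := qf_set_bddBelow hX'0 hz0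
  rw [qf_eq, qf_eq]
  apply le_antisymm
  · have h1 : sInf {y | z < cdfOf μ X y} - c
        ≤ sInf {y | z < cdfOf μ (fun ω => X ω - c) y} := by
      apply le_csInf hTne
      intro y hy
      have hmem : y + c ∈ {y | z < cdfOf μ X y} := (hTS y).1 hy
      have := csInf_le hSbd hmem
      linarith
    linarith
  · apply le_csInf hSne
    intro y hy
    have hmem : y - c ∈ {y | z < cdfOf μ (fun ω => X ω - c) y} := by
      rw [mem_setOf_eq, hTS]
      simpa using hy
    have := csInf_le hTbd hmem
    linarith

lemma measurable_qf_comp [IsProbabilityMeasure μ] {X' : Ω → ℝ} (hX'm : Measurable X')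
    (hX'0 : ∀ ω, 0 ≤ X' ω) {ξ : Ω → ℝ} (hξm : Measurable ξ)
    (hFcont : Continuous (cdfOf μ ξ)) (hFpos : ∀ ω, 0 < cdfOf μ ξ (ξ ω))
    (hFle : ∀ ω, cdfOf μ ξ (ξ ω) ≤ 1) :
    Measurable fun ω => qf μ X' (1 - cdfOf μ ξ (ξ ω)) := by
  set q : ℝ → ℝ := fun v => qf μ X' (max 0 (1 - (max v 1)⁻¹)) with hq
  have key : ∀ v : ℝ, max 0 (1 - (max v 1)⁻¹) ∈ Ico (0 : ℝ) 1 := by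
    intro v
    constructor
    · exact le_max_left _ _
    · apply max_lt one_pos
      have h1 : (0 : ℝ) < max v 1 := lt_of_lt_of_le one_pos (le_max_right _ _)
      have h2 : 0 < (max v 1)⁻¹ := inv_pos.2 h1
      linarith
  have hmono : Monotone q := by
    intro v₁ v₂ h
    apply qf_monotoneOn hX'm hX'0 (key v₁) (key v₂)
    apply max_le_max le_rfl
    have h1 : (0 : ℝ) < max v₁ 1 := lt_of_lt_of_le one_pos (le_max_right _ _)
    have h2 : max v₁ 1 ≤ max v₂ 1 := max_le_max h le_rfl
    have h3 : (max v₂ 1)⁻¹ ≤ (max v₁ 1)⁻¹ := by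
      gcongr
    linarith
  have heq : (fun ω => qf μ X' (1 - cdfOf μ ξ (ξ ω)))
      = fun ω => q (cdfOf μ ξ (ξ ω))⁻¹ := by
    funext ω
    have h0 := hFpos ω
    have h1 := hFle ω
    have hv : (1 : ℝ) ≤ (cdfOf μ ξ (ξ ω))⁻¹ := by
      rw [le_inv_comm₀ one_pos h0]
      simpa using h1
    rw [hq]
    simp only
    rw [max_eq_left hv, inv_inv,
      max_eq_right (by linarith : (0 : ℝ) ≤ 1 - cdfOf μ ξ (ξ ω))]
  rw [heq]
  exact hmono.measurable.comp ((hFcont.measurable.comp hξm).inv)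


lemma lintegral_sublevel_le [IsFiniteMeasure μ] {ξ : Ω → ℝ} (hξm : Measurable ξ)
    {s : ℝ} {A : Set Ω} (hA : MeasurableSet A) (hDA : μ {ω | ξ ω ≤ s} ≤ μ A) :
    ∫⁻ ω in {ω | ξ ω ≤ s}, ENNReal.ofReal (ξ ω) ∂μ
      ≤ ∫⁻ ω in A, ENNReal.ofReal (ξ ω) ∂μ := by
  set D := {ω | ξ ω ≤ s} with hD
  have hDm : MeasurableSet D := hξm measurableSet_Iic
  have h1 : μ (D ∩ A) + μ (D \ A) = μ D := measure_inter_add_diff D hA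
  have h2 : μ (A ∩ D) + μ (A \ D) = μ A := measure_inter_add_diff A hDm
  have hmeas : μ (D \ A) ≤ μ (A \ D) := by
    have h3 : μ (D ∩ A) + μ (D \ A) ≤ μ (D ∩ A) + μ (A \ D) := by
      rw [h1, inter_comm D A, h2]
      exact hDA
    exact (ENNReal.add_le_add_iff_left (measure_ne_top μ _)).1 h3
  have hDsplit := lintegral_inter_add_diff (fun ω => ENNReal.ofReal (ξ ω)) D hA (μ := μ)
  have hAsplit := lintegral_inter_add_diff (fun ω => ENNReal.ofReal (ξ ω)) A hDm (μ := μ)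
  have hb1 : ∫⁻ ω in D \ A, ENNReal.ofReal (ξ ω) ∂μ ≤ ENNReal.ofReal s * μ (D \ A) := by
    calc ∫⁻ ω in D \ A, ENNReal.ofReal (ξ ω) ∂μ
        ≤ ∫⁻ _ in D \ A, ENNReal.ofReal s ∂μ :=
          setLIntegral_mono' (hDm.diff hA) (fun ω hω => ENNReal.ofReal_le_ofReal hω.1)
      _ = ENNReal.ofReal s * μ (D \ A) := setLIntegral_const _ _
  have hb2 : ENNReal.ofReal s * μ (A \ D) ≤ ∫⁻ ω in A \ D, ENNReal.ofReal (ξ ω) ∂μ := by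
    rw [← setLIntegral_const (A \ D) (ENNReal.ofReal s)]
    apply setLIntegral_mono' (hA.diff hDm)
    intro ω hω
    exact ENNReal.ofReal_le_ofReal (le_of_lt (not_le.1 hω.2))
  calc ∫⁻ ω in D, ENNReal.ofReal (ξ ω) ∂μ
      = (∫⁻ ω in D ∩ A, ENNReal.ofReal (ξ ω) ∂μ)
        + ∫⁻ ω in D \ A, ENNReal.ofReal (ξ ω) ∂μ := hDsplit.symm
    _ ≤ (∫⁻ ω in D ∩ A, ENNReal.ofReal (ξ ω) ∂μ) + ENNReal.ofReal s * μ (D \ A) :=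
        add_le_add_right hb1 _
    _ ≤ (∫⁻ ω in D ∩ A, ENNReal.ofReal (ξ ω) ∂μ) + ENNReal.ofReal s * μ (A \ D) :=
        add_le_add_right (mul_le_mul_right hmeas _) _
    _ ≤ (∫⁻ ω in D ∩ A, ENNReal.ofReal (ξ ω) ∂μ)
        + ∫⁻ ω in A \ D, ENNReal.ofReal (ξ ω) ∂μ := add_le_add_right hb2 _
    _ = (∫⁻ ω in A ∩ D, ENNReal.ofReal (ξ ω) ∂μ)
        + ∫⁻ ω in A \ D, ENNReal.ofReal (ξ ω) ∂μ := by rw [inter_comm]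
    _ = ∫⁻ ω in A, ENNReal.ofReal (ξ ω) ∂μ := hAsplit

lemma ereal_coe_ennreal_toReal {x : ℝ≥0∞} (hx : x ≠ ⊤) :
    ((x.toReal : ℝ) : EReal) = (x : EReal) := by
  lift x to ℝ≥0 using hx
  rw [EReal.coe_nnreal_eq_coe_real, ENNReal.coe_toReal]

lemma ereal_sub_le_sub {a b c d : ℝ≥0∞} (hb : b ≠ ⊤) (hd : d ≠ ⊤) (h : a + d ≤ c + b) :
    (a : EReal) - (b : EReal) ≤ (c : EReal) - (d : EReal) := by
  rcases eq_or_ne c ⊤ with hc | hc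
  · subst hc
    rw [EReal.coe_ennreal_top, ← ereal_coe_ennreal_toReal hd, EReal.top_sub_coe]
    exact le_top
  · have ha : a ≠ ⊤ := by
      intro h'
      subst h'
      exact (ENNReal.add_ne_top.2 ⟨hc, hb⟩) (top_le_iff.1 (by simpa using h))
    rw [← ereal_coe_ennreal_toReal ha, ← ereal_coe_ennreal_toReal hb,
      ← ereal_coe_ennreal_toReal hc, ← ereal_coe_ennreal_toReal hd,
      ← EReal.coe_sub, ← EReal.coe_sub, EReal.coe_le_coe_iff]
    have h' : (a + d).toReal ≤ (c + b).toReal :=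
      ENNReal.toReal_mono (ENNReal.add_ne_top.2 ⟨hc, hb⟩) h
    rw [ENNReal.toReal_add ha hd, ENNReal.toReal_add hc hb] at h'
    linarith


end Aux

section Aux2
variable {Ω : Type*} [MeasurableSpace Ω] {μ : Measure Ω}

lemma expER_add_mono {f₁ f₂ g : Ω → ℝ} (hf₁ : Measurable f₁) (hf₂ : Measurable f₂)
    (hg : Measurable g) (h10 : ∀ ω, 0 ≤ f₁ ω) (h20 : ∀ ω, 0 ≤ f₂ ω)
    (hgi : HasFiniteIntegral g μ)
    (hle : ∫⁻ ω, ENNReal.ofReal (f₁ ω) ∂μ ≤ ∫⁻ ω, ENNReal.ofReal (f₂ ω) ∂μ) :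
    expER μ (fun ω => f₁ ω + g ω) ≤ expER μ (fun ω => f₂ ω + g ω) := by
  have hGneg : ∫⁻ ω, ENNReal.ofReal (-g ω) ∂μ ≠ ⊤ := by
    have hbound : ∀ ω, ENNReal.ofReal (-g ω) ≤ (‖g ω‖₊ : ℝ≥0∞) := fun ω => by
      rw [← enorm_eq_nnnorm, Real.enorm_eq_ofReal_abs]
      exact ENNReal.ofReal_le_ofReal (neg_le_abs _)
    exact ne_top_of_le_ne_top hgi.ne (lintegral_mono hbound)
  have hid : ∀ (f : Ω → ℝ), (∀ ω, 0 ≤ f ω) → ∀ ω,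
      ENNReal.ofReal (f ω + g ω) + ENNReal.ofReal (-g ω)
        = ENNReal.ofReal (f ω) + ENNReal.ofReal (g ω)
          + ENNReal.ofReal (-(f ω + g ω)) := by
    intro f hf ω
    rcases le_total 0 (g ω) with hg0 | hg0
    · rw [ENNReal.ofReal_add (hf ω) hg0,
        ENNReal.ofReal_eq_zero.2 (by linarith : -g ω ≤ 0),
        ENNReal.ofReal_eq_zero.2 (by linarith [hf ω] : -(f ω + g ω) ≤ 0)]
    · rcases le_total 0 (f ω + g ω) with hfg | hfg
      · rw [ENNReal.ofReal_eq_zero.2 (by linarith : g ω ≤ 0),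
          ENNReal.ofReal_eq_zero.2 (by linarith : -(f ω + g ω) ≤ 0),
          add_zero, add_zero, ← ENNReal.ofReal_add hfg (by linarith : (0:ℝ) ≤ -g ω)]
        ring_nf
      · rw [ENNReal.ofReal_eq_zero.2 (by linarith : g ω ≤ 0),
          ENNReal.ofReal_eq_zero.2 hfg, add_zero, zero_add,
          ← ENNReal.ofReal_add (hf ω) (by linarith : (0:ℝ) ≤ -(f ω + g ω))]
        ring_nf
  have key : ∀ (f : Ω → ℝ), Measurable f → (∀ ω, 0 ≤ f ω) →
      (∫⁻ ω, ENNReal.ofReal (f ω + g ω) ∂μ) + ∫⁻ ω, ENNReal.ofReal (-g ω) ∂μ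
        = (∫⁻ ω, ENNReal.ofReal (f ω) ∂μ) + (∫⁻ ω, ENNReal.ofReal (g ω) ∂μ)
          + ∫⁻ ω, ENNReal.ofReal (-(f ω + g ω)) ∂μ := by
    intro f hf hf0
    rw [← lintegral_add_right _ (show Measurable fun ω => ENNReal.ofReal (-g ω) from hg.neg.ennreal_ofReal),
      ← lintegral_add_right _ hg.ennreal_ofReal,
      ← lintegral_add_right _
        (show Measurable fun ω => ENNReal.ofReal (-(f ω + g ω)) from (hf.add hg).neg.ennreal_ofReal)]
    exact lintegral_congr (hid f hf0)
  have k₁ := key f₁ hf₁ h10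
  have k₂ := key f₂ hf₂ h20
  have hN₁ : ∫⁻ ω, ENNReal.ofReal (-(f₁ ω + g ω)) ∂μ ≠ ⊤ := by
    refine ne_top_of_le_ne_top hGneg (lintegral_mono fun ω => ?_)
    exact ENNReal.ofReal_le_ofReal (by linarith [h10 ω])
  have hN₂ : ∫⁻ ω, ENNReal.ofReal (-(f₂ ω + g ω)) ∂μ ≠ ⊤ := by
    refine ne_top_of_le_ne_top hGneg (lintegral_mono fun ω => ?_)
    exact ENNReal.ofReal_le_ofReal (by linarith [h20 ω])
  have hkey : (∫⁻ ω, ENNReal.ofReal (f₁ ω + g ω) ∂μ)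
        + ∫⁻ ω, ENNReal.ofReal (-(f₂ ω + g ω)) ∂μ
      ≤ (∫⁻ ω, ENNReal.ofReal (f₂ ω + g ω) ∂μ)
        + ∫⁻ ω, ENNReal.ofReal (-(f₁ ω + g ω)) ∂μ := by
    rw [← ENNReal.add_le_add_iff_right hGneg]
    calc (∫⁻ ω, ENNReal.ofReal (f₁ ω + g ω) ∂μ)
          + (∫⁻ ω, ENNReal.ofReal (-(f₂ ω + g ω)) ∂μ)
          + ∫⁻ ω, ENNReal.ofReal (-g ω) ∂μ
        = ((∫⁻ ω, ENNReal.ofReal (f₁ ω + g ω) ∂μ)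
            + ∫⁻ ω, ENNReal.ofReal (-g ω) ∂μ)
          + ∫⁻ ω, ENNReal.ofReal (-(f₂ ω + g ω)) ∂μ := by ring
      _ = ((∫⁻ ω, ENNReal.ofReal (f₁ ω) ∂μ) + (∫⁻ ω, ENNReal.ofReal (g ω) ∂μ)
            + ∫⁻ ω, ENNReal.ofReal (-(f₁ ω + g ω)) ∂μ)
          + ∫⁻ ω, ENNReal.ofReal (-(f₂ ω + g ω)) ∂μ := by rw [k₁]
      _ ≤ ((∫⁻ ω, ENNReal.ofReal (f₂ ω) ∂μ) + (∫⁻ ω, ENNReal.ofReal (g ω) ∂μ)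
            + ∫⁻ ω, ENNReal.ofReal (-(f₁ ω + g ω)) ∂μ)
          + ∫⁻ ω, ENNReal.ofReal (-(f₂ ω + g ω)) ∂μ := by
            gcongr
      _ = ((∫⁻ ω, ENNReal.ofReal (f₂ ω) ∂μ) + (∫⁻ ω, ENNReal.ofReal (g ω) ∂μ)
            + ∫⁻ ω, ENNReal.ofReal (-(f₂ ω + g ω)) ∂μ)
          + ∫⁻ ω, ENNReal.ofReal (-(f₁ ω + g ω)) ∂μ := by ring
      _ = ((∫⁻ ω, ENNReal.ofReal (f₂ ω + g ω) ∂μ)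
            + ∫⁻ ω, ENNReal.ofReal (-g ω) ∂μ)
          + ∫⁻ ω, ENNReal.ofReal (-(f₁ ω + g ω)) ∂μ := by rw [k₂]
      _ = (∫⁻ ω, ENNReal.ofReal (f₂ ω + g ω) ∂μ)
            + (∫⁻ ω, ENNReal.ofReal (-(f₁ ω + g ω)) ∂μ)
          + ∫⁻ ω, ENNReal.ofReal (-g ω) ∂μ := by ring
  simp only [expER]
  exact ereal_sub_le_sub hN₁ hN₂ hkey


lemma core_ineq [IsProbabilityMeasure μ] {ξ : Ω → ℝ} (hξm : Measurable ξ)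
    (hξpos : ∀ ω, 0 < ξ ω) (hξint : Integrable ξ μ)
    (hFcont : Continuous (cdfOf μ ξ)) (hFmono : StrictMonoOn (cdfOf μ ξ) (Set.Ioi 0))
    {X' : Ω → ℝ} (hX'm : Measurable X') (hX'0 : ∀ ω, 0 ≤ X' ω) :
    ∫⁻ ω, ENNReal.ofReal (ξ ω * qf μ X' (1 - cdfOf μ ξ (ξ ω))) ∂μ
      ≤ ∫⁻ ω, ENNReal.ofReal (ξ ω * X' ω) ∂μ := by
  have hFpos : ∀ ω, 0 < cdfOf μ ξ (ξ ω) := by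
    intro ω
    have h2 : cdfOf μ ξ (ξ ω / 2) < cdfOf μ ξ (ξ ω) :=
      hFmono (mem_Ioi.2 (half_pos (hξpos ω))) (mem_Ioi.2 (hξpos ω)) (half_lt_self (hξpos ω))
    exact lt_of_le_of_lt (cdfOf_nonneg _ _) h2
  have hFle : ∀ ω, cdfOf μ ξ (ξ ω) ≤ 1 := fun ω => cdfOf_le_one _ _
  set Y : Ω → ℝ := fun ω => qf μ X' (1 - cdfOf μ ξ (ξ ω)) with hYdef
  have hYm : Measurable Y := measurable_qf_comp hX'm hX'0 hξm hFcont hFpos hFle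
  have hY0 : ∀ ω, 0 ≤ Y ω := fun ω => qf_nonneg hX'0 (by linarith [hFle ω])
  set dens : Ω → ℝ≥0∞ := fun ω => ENNReal.ofReal (ξ ω) with hdens
  have hdm : Measurable dens := hξm.ennreal_ofReal
  set ν := μ.withDensity dens with hν
  have hprod : ∀ (h : Ω → ℝ), (∀ ω, 0 ≤ h ω) → Measurable h →
      ∫⁻ ω, ENNReal.ofReal (ξ ω * h ω) ∂μ = ∫⁻ ω, ENNReal.ofReal (h ω) ∂ν := by
    intro h h0 hm
    rw [hν, lintegral_withDensity_eq_lintegral_mul μ hdm hm.ennreal_ofReal]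
    apply lintegral_congr
    intro ω
    simp only [Pi.mul_apply, hdens]
    rw [← ENNReal.ofReal_mul (le_of_lt (hξpos ω))]
  rw [hprod Y hY0 hYm, hprod X' hX'0 hX'm]
  rw [lintegral_eq_lintegral_meas_lt ν (ae_of_all _ hY0) hYm.aemeasurable,
    lintegral_eq_lintegral_meas_lt ν (ae_of_all _ hX'0) hX'm.aemeasurable]
  apply lintegral_mono
  intro t
  have hsub : {a | t < Y a} ⊆ {a | cdfOf μ X' t ≤ 1 - cdfOf μ ξ (ξ a)} := by
    intro ω hω
    by_contra hcon
    simp only [mem_setOf_eq, not_le] at hcon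
    have hmem : t ∈ {y | 1 - cdfOf μ ξ (ξ ω) < cdfOf μ X' y} := hcon
    have hbd : BddBelow {y | 1 - cdfOf μ ξ (ξ ω) < cdfOf μ X' y} :=
      qf_set_bddBelow hX'0 (by linarith [hFle ω])
    have hle : qf μ X' (1 - cdfOf μ ξ (ξ ω)) ≤ t := csInf_le hbd hmem
    have hω' : t < Y ω := hω
    rw [hYdef] at hω'
    simp only at hω'
    linarith
  have hAm : MeasurableSet {a | t < X' a} := hX'm measurableSet_Ioi
  rcases eq_or_lt_of_le (cdfOf_nonneg (μ := μ) X' t) with hF0 | hF0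
  · -- the level t is below the essential infimum of X'
    have hnull : μ {ω | X' ω ≤ t} = 0 := by
      have h' := hF0.symm
      rw [cdfOf, ENNReal.toReal_eq_zero_iff] at h'
      exact h'.resolve_right (measure_ne_top μ _)
    have hν0 : ν {ω | X' ω ≤ t} = 0 := withDensity_absolutelyContinuous μ dens hnull
    have hcover : (univ : Set Ω) = {a | t < X' a} ∪ {ω | X' ω ≤ t} := by
      ext ω; simp [lt_or_ge]
    calc ν {a | t < Y a} ≤ ν univ := measure_mono (subset_univ _)
      _ = ν ({a | t < X' a} ∪ {ω | X' ω ≤ t}) := by rw [← hcover]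
      _ ≤ ν {a | t < X' a} + ν {ω | X' ω ≤ t} := measure_union_le _ _
      _ = ν {a | t < X' a} := by rw [hν0, add_zero]
  · set p : ℝ := 1 - cdfOf μ X' t with hp
    have hp1 : p < 1 := by rw [hp]; linarith
    have hp0 : 0 ≤ p := by rw [hp]; linarith [cdfOf_le_one (μ := μ) X' t]
    set S : Set ℝ := {y | cdfOf μ ξ y ≤ p} with hSdef
    have h0S : (0 : ℝ) ∈ S := by
      have hc0 : cdfOf μ ξ 0 = 0 := by
        rw [cdfOf]
        have hempty : {ω | ξ ω ≤ (0 : ℝ)} = ∅ := by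
          ext ω
          simp only [mem_setOf_eq, mem_empty_iff_false, iff_false, not_le]
          exact hξpos ω
        rw [hempty, measure_empty]
        simp
      rw [hSdef, mem_setOf_eq, hc0]
      exact hp0
    have hbdd : BddAbove S := by
      obtain ⟨n, hn⟩ := exists_cdf_gt (μ := μ) hξm hp1
      refine ⟨n, fun y hy => ?_⟩
      by_contra hyn
      push_neg at hyn
      have hmono' := cdfOf_mono (μ := μ) ξ (le_of_lt hyn)
      rw [hSdef, mem_setOf_eq] at hy
      linarith
    have hclosed : IsClosed S := by
      have : S = cdfOf μ ξ ⁻¹' Iic p := rfl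
      rw [this]
      exact isClosed_Iic.preimage hFcont
    set s : ℝ := sSup S with hs
    have hsS : s ∈ S := hclosed.csSup_mem ⟨0, h0S⟩ hbdd
    have hCD : {a | t < Y a} ⊆ {ω | ξ ω ≤ s} := by
      intro ω hω
      have h1 := hsub hω
      have h2 : ξ ω ∈ S := by
        rw [hSdef, mem_setOf_eq]
        simp only [mem_setOf_eq] at h1
        rw [hp]
        linarith
      exact le_csSup hbdd h2
    have hDm : MeasurableSet {ω | ξ ω ≤ s} := hξm measurableSet_Iic
    have hDA : μ {ω | ξ ω ≤ s} ≤ μ {a | t < X' a} := by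
      have hAc : {a | t < X' a} = {ω | X' ω ≤ t}ᶜ := by
        ext ω; simp [not_le]
      have hμA : μ {a | t < X' a} = 1 - μ {ω | X' ω ≤ t} := by
        rw [hAc, prob_compl_eq_one_sub (s := {ω | X' ω ≤ t}) (hX'm measurableSet_Iic)]
      rw [hμA]
      rw [← ENNReal.toReal_le_toReal (measure_ne_top μ _)
        (ne_top_of_le_ne_top ENNReal.one_ne_top tsub_le_self)]
      rw [ENNReal.toReal_sub_of_le prob_le_one ENNReal.one_ne_top]
      simp only [ENNReal.toReal_one]
      have hsp : cdfOf μ ξ s ≤ p := hsS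
      rw [hp] at hsp
      exact hsp
    calc ν {a | t < Y a} ≤ ν {ω | ξ ω ≤ s} := measure_mono hCD
      _ ≤ ν {a | t < X' a} := by
          rw [hν, withDensity_apply _ hDm, withDensity_apply _ hAm]
          exact lintegral_sublevel_le hξm hAm hDA

end Aux2

/-- `E[ξ · G_X(1 − F_ξ(ξ))] ≤ E[ξ X]` for every lower-bounded random
variable `X`. -/
theorem quantile_rearrangement_le
    {Ω : Type*} [MeasurableSpace Ω] (μ : Measure Ω) [IsProbabilityMeasure μ]
    (ξ : Ω → ℝ) (hξm : Measurable ξ) (hξpos : ∀ ω, 0 < ξ ω) (hξint : Integrable ξ μ)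
    (hFcont : Continuous (cdfOf μ ξ)) (hFmono : StrictMonoOn (cdfOf μ ξ) (Set.Ioi 0))
    (X : Ω → ℝ) (hXm : Measurable X) (hXlb : ∃ c : ℝ, ∀ ω, c ≤ X ω) :
    expER μ (fun ω => ξ ω * qf μ X (1 - cdfOf μ ξ (ξ ω)))
      ≤ expER μ (fun ω => ξ ω * X ω) := by
  obtain ⟨c, hc⟩ := hXlb
  have hX'm : Measurable fun ω => X ω - c := hXm.sub measurable_const
  have hX'0 : ∀ ω, (0 : ℝ) ≤ X ω - c := fun ω => sub_nonneg.2 (hc ω)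
  have hFpos : ∀ ω, 0 < cdfOf μ ξ (ξ ω) := by
    intro ω
    have h2 : cdfOf μ ξ (ξ ω / 2) < cdfOf μ ξ (ξ ω) :=
      hFmono (mem_Ioi.2 (half_pos (hξpos ω))) (mem_Ioi.2 (hξpos ω)) (half_lt_self (hξpos ω))
    exact lt_of_le_of_lt (cdfOf_nonneg _ _) h2
  have hFle : ∀ ω, cdfOf μ ξ (ξ ω) ≤ 1 := fun ω => cdfOf_le_one _ _
  have hz0 : ∀ ω, 0 ≤ 1 - cdfOf μ ξ (ξ ω) := fun ω => by linarith [hFle ω]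
  have hz1 : ∀ ω, 1 - cdfOf μ ξ (ξ ω) < 1 := fun ω => by linarith [hFpos ω]
  have heq1 : (fun ω => ξ ω * qf μ X (1 - cdfOf μ ξ (ξ ω)))
      = fun ω => ξ ω * qf μ (fun ω' => X ω' - c) (1 - cdfOf μ ξ (ξ ω)) + c * ξ ω := by
    funext ω
    rw [qf_sub_const hXm hc (hz0 ω) (hz1 ω)]
    ring
  have heq2 : (fun ω => ξ ω * X ω) = fun ω => ξ ω * (X ω - c) + c * ξ ω := by
    funext ω
    ring
  rw [heq1, heq2]
  have hYm : Measurable fun ω => qf μ (fun ω' => X ω' - c) (1 - cdfOf μ ξ (ξ ω)) :=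
    measurable_qf_comp hX'm hX'0 hξm hFcont hFpos hFle
  exact expER_add_mono (hξm.mul hYm) (hξm.mul hX'm) (hξm.const_mul c)
    (fun ω => mul_nonneg (hξpos ω).le (qf_nonneg hX'0 (hz0 ω)))
    (fun ω => mul_nonneg (hξpos ω).le (hX'0 ω))
    (hξint.const_mul c).hasFiniteIntegral
    (core_ineq hξm hξpos hξint hFcont hFmono hX'm hX'0)

end
end

section
/- Let ξ be a positive integrable random variable whose CDF F_ξ is continuous and strictly increasing on (0,∞), and let X be a lower-bounded random variable with quantile function G_X such that E[ξ · G_X(1 − F_ξ(ξ))] < ∞. Then E[ξ · G_X(1 − F_ξ(ξ))] = E[ξ X] holds if and only if X = G_X(1 − F_ξ(ξ)) almost surely. -/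
open MeasureTheory ProbabilityTheory Set
open scoped ENNReal NNReal Classical

noncomputable section

set_option linter.unusedSectionVars false
namespace QRaux

variable {Ω : Type*} [MeasurableSpace Ω] (μ : Measure Ω) [IsProbabilityMeasure μ]

lemma cdf_mono (Y : Ω → ℝ) : Monotone (cdfOf μ Y) := by
  intro a b hab
  exact ENNReal.toReal_mono (measure_ne_top μ _)
    (measure_mono (fun ω h => le_trans h hab))

lemma cdf_nonneg (Y : Ω → ℝ) (y : ℝ) : 0 ≤ cdfOf μ Y y := ENNReal.toReal_nonneg

lemma cdf_le_one (Y : Ω → ℝ) (y : ℝ) : cdfOf μ Y y ≤ 1 := by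
  have : μ {ω | Y ω ≤ y} ≤ 1 := (measure_mono (subset_univ _)).trans_eq measure_univ
  simpa [cdfOf] using ENNReal.toReal_mono (by simp) this

lemma meas_le_eq (Y : Ω → ℝ) (y : ℝ) :
    μ {ω | Y ω ≤ y} = ENNReal.ofReal (cdfOf μ Y y) := by
  rw [cdfOf, ENNReal.ofReal_toReal (measure_ne_top μ _)]

lemma meas_gt_eq (Y : Ω → ℝ) (hY : Measurable Y) (y : ℝ) :
    μ {ω | y < Y ω} = ENNReal.ofReal (1 - cdfOf μ Y y) := by
  have h : {ω | y < Y ω} = {ω | Y ω ≤ y}ᶜ := by ext ω; simp [not_le]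
  rw [h, measure_compl (by exact hY measurableSet_Iic) (measure_ne_top μ _), measure_univ,
    meas_le_eq μ Y y, ENNReal.ofReal_sub _ (cdf_nonneg μ Y y), ENNReal.ofReal_one]

lemma cdf_tendsto_one (Y : Ω → ℝ) :
    Filter.Tendsto (cdfOf μ Y) Filter.atTop (nhds 1) := by
  have h1 : Filter.Tendsto (fun y : ℝ => μ {ω | Y ω ≤ y}) Filter.atTop (nhds (μ univ)) := by
    have := tendsto_measure_iUnion_atTop (μ := μ)
      (s := fun y : ℝ => {ω | Y ω ≤ y}) (fun a b hab ω h => le_trans h hab)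
    have hU : (⋃ y : ℝ, {ω | Y ω ≤ y}) = univ := by
      ext ω; simp only [mem_iUnion, mem_setOf_eq, mem_univ, iff_true]
      exact ⟨Y ω, le_refl _⟩
    rwa [hU] at this
  rw [measure_univ] at h1
  have := (ENNReal.tendsto_toReal (by simp : (1:ℝ≥0∞) ≠ ⊤)).comp h1
  exact this


section Quantile
variable {c z t : ℝ} {Y : Ω → ℝ}

lemma qf_nonempty (hz1 : z < 1) : {y : ℝ | z < cdfOf μ Y y}.Nonempty := by
  have := cdf_tendsto_one μ Y
  have h := this.eventually (eventually_gt_nhds hz1)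
  rcases h.exists with ⟨y, hy⟩
  exact ⟨y, hy⟩

lemma qf_bddBelow (hc : ∀ ω, c ≤ Y ω) (hz0 : 0 ≤ z) :
    BddBelow {y : ℝ | z < cdfOf μ Y y} := by
  refine ⟨c, fun y hy => ?_⟩
  by_contra hyc
  push_neg at hyc
  have : {ω | Y ω ≤ y} = ∅ := by
    ext ω; simp only [mem_setOf_eq, mem_empty_iff_false, iff_false, not_le]
    exact lt_of_lt_of_le hyc (hc ω)
  have : cdfOf μ Y y = 0 := by simp [cdfOf, this]
  simp only [mem_setOf_eq, this] at hy
  exact absurd (lt_of_le_of_lt hz0 hy) (lt_irrefl 0)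

lemma qf_le (hc : ∀ ω, c ≤ Y ω) (hz0 : 0 ≤ z) (h : z < cdfOf μ Y t) :
    qf μ Y z ≤ t :=
  csInf_le (qf_bddBelow μ hc hz0) h

lemma qf_ge (hc : ∀ ω, c ≤ Y ω) (hz0 : 0 ≤ z) (hz1 : z < 1) :
    c ≤ qf μ Y z := by
  refine le_csInf (qf_nonempty μ hz1) (fun y hy => ?_)
  by_contra hyc
  push_neg at hyc
  have he : {ω | Y ω ≤ y} = ∅ := by
    ext ω; simp only [mem_setOf_eq, mem_empty_iff_false, iff_false, not_le]
    exact lt_of_lt_of_le hyc (hc ω)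
  have h0 : (μ {ω | Y ω ≤ y}).toReal = 0 := by simp [he]
  simp only [mem_setOf_eq, h0] at hy
  exact absurd (lt_of_le_of_lt hz0 hy) (lt_irrefl (0:ℝ))

lemma cdf_right_cont_seq (hY : Measurable Y) (t : ℝ) {u : ℕ → ℝ}
    (hu_gt : ∀ n, t < u n) (hu_lim : Filter.Tendsto u Filter.atTop (nhds t)) :
    Filter.Tendsto (fun n => cdfOf μ Y (u n)) Filter.atTop (nhds (cdfOf μ Y t)) := by
  -- squeeze between cdf t and cdf (t + 1/(n+1)) -- instead, direct: use iInter along t + 1/(n+1)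
  have key : Filter.Tendsto (fun n : ℕ => cdfOf μ Y (t + 1/(n+1))) Filter.atTop
      (nhds (cdfOf μ Y t)) := by
    have hmono : Antitone (fun n : ℕ => {ω | Y ω ≤ t + 1/(n+1)}) := by
      intro a b hab ω h
      simp only [mem_setOf_eq] at h ⊢
      have hab' : (a:ℝ) ≤ b := by exact_mod_cast hab
      have h2 : 1/((b:ℝ)+1) ≤ 1/((a:ℝ)+1) :=
        one_div_le_one_div_of_le (by positivity) (by linarith)
      linarith
    have h1 := tendsto_measure_iInter_atTop (μ := μ)
      (fun n => (hY measurableSet_Iic).nullMeasurableSet) hmono ⟨0, measure_ne_top μ _⟩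
    have hI : (⋂ n : ℕ, {ω | Y ω ≤ t + 1/(n+1)}) = {ω | Y ω ≤ t} := by
      ext ω
      simp only [mem_iInter, mem_setOf_eq]
      constructor
      · intro h
        by_contra hlt
        push_neg at hlt
        obtain ⟨n, hn⟩ := exists_nat_one_div_lt (sub_pos.mpr hlt)
        exact absurd (h n) (by push_neg; linarith [hn])
      · intro h n
        have : (0:ℝ) < 1/(n+1) := by positivity
        linarith
    rw [show (⋂ n : ℕ, Y ⁻¹' Iic (t + 1/(n+1))) = {ω | Y ω ≤ t} from hI] at h1
    have := (ENNReal.tendsto_toReal (measure_ne_top μ _)).comp h1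
    exact this
  rw [Metric.tendsto_atTop]
  intro ε hε
  obtain ⟨k, hk⟩ : ∃ k : ℕ, cdfOf μ Y (t + 1/(k+1)) < cdfOf μ Y t + ε :=
    (key.eventually_lt_const (lt_add_of_pos_right _ hε)).exists
  have hev : ∀ᶠ n in Filter.atTop, u n < t + 1/(k+1) :=
    hu_lim.eventually_lt_const (by
      have : (0:ℝ) < 1/(k+1) := by positivity
      linarith)
  rw [Filter.eventually_atTop] at hev
  obtain ⟨N, hN⟩ := hev
  refine ⟨N, fun n hn => ?_⟩
  have h1 : cdfOf μ Y t ≤ cdfOf μ Y (u n) := cdf_mono μ Y (le_of_lt (hu_gt n))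
  have h2 : cdfOf μ Y (u n) ≤ cdfOf μ Y (t + 1/(k+1)) := cdf_mono μ Y (le_of_lt (hN n hn))
  rw [Real.dist_eq, abs_lt]
  constructor <;> linarith


lemma le_cdf_of_qf_le (hY : Measurable Y) (hc : ∀ ω, c ≤ Y ω) (hz0 : 0 ≤ z)
    (hz1 : z < 1) (h : qf μ Y z ≤ t) : z ≤ cdfOf μ Y t := by
  have key : ∀ n : ℕ, z < cdfOf μ Y (t + 1/(n+1)) := by
    intro n
    have hlt : sInf {y : ℝ | z < cdfOf μ Y y} < t + 1/(n+1) := by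
      have : (0:ℝ) < 1/(n+1) := by positivity
      calc sInf {y : ℝ | z < cdfOf μ Y y} ≤ t := h
      _ < t + 1/(n+1) := by linarith
    rw [csInf_lt_iff (qf_bddBelow μ hc hz0) (qf_nonempty μ hz1)] at hlt
    obtain ⟨y, hy, hyt⟩ := hlt
    exact lt_of_lt_of_le hy (cdf_mono μ Y (le_of_lt hyt))
  have hten := cdf_right_cont_seq μ hY t
    (u := fun n : ℕ => t + 1/(n+1))
    (fun n => by
      have : (0:ℝ) < 1/((n:ℝ)+1) := by positivity
      show t < t + 1/((n:ℝ)+1)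
      linarith)
    (by
      have : Filter.Tendsto (fun n : ℕ => 1/((n:ℝ)+1)) Filter.atTop (nhds 0) :=
        tendsto_one_div_add_atTop_nhds_zero_nat
      simpa using (tendsto_const_nhds (x := t)).add this)
  exact ge_of_tendsto hten (Filter.Eventually.of_forall (fun n => le_of_lt (key n)))

end Quantile

section Unif
variable {ξ : Ω → ℝ}

lemma cdf_zero_of_pos (hξpos : ∀ ω, 0 < ξ ω) {y : ℝ} (hy : y ≤ 0) :
    cdfOf μ ξ y = 0 := by
  have : {ω | ξ ω ≤ y} = ∅ := by
    ext ω; simp only [mem_setOf_eq, mem_empty_iff_false, iff_false, not_le]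
    exact lt_of_le_of_lt hy (hξpos ω)
  simp [cdfOf, this]

lemma U_pos (hξpos : ∀ ω, 0 < ξ ω) (hFmono : StrictMonoOn (cdfOf μ ξ) (Set.Ioi 0))
    (ω : Ω) : 0 < cdfOf μ ξ (ξ ω) := by
  have h1 : cdfOf μ ξ (ξ ω / 2) < cdfOf μ ξ (ξ ω) :=
    hFmono (by simpa using half_pos (hξpos ω)) (by simpa using hξpos ω)
      (half_lt_self (hξpos ω))
  exact lt_of_le_of_lt (cdf_nonneg μ ξ _) h1

lemma U_lt_one (hξpos : ∀ ω, 0 < ξ ω) (hFmono : StrictMonoOn (cdfOf μ ξ) (Set.Ioi 0))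
    (ω : Ω) : cdfOf μ ξ (ξ ω) < 1 := by
  have h1 : cdfOf μ ξ (ξ ω) < cdfOf μ ξ (ξ ω + 1) :=
    hFmono (by simpa using hξpos ω) (by simp; linarith [hξpos ω]) (by linarith)
  exact lt_of_lt_of_le h1 (cdf_le_one μ ξ _)

lemma exists_F_eq (hξpos : ∀ ω, 0 < ξ ω) (hFcont : Continuous (cdfOf μ ξ))
    {t : ℝ} (h0 : 0 < t) (h1 : t < 1) : ∃ s, 0 < s ∧ cdfOf μ ξ s = t := by
  obtain ⟨y, hy⟩ := ((cdf_tendsto_one μ ξ).eventually (eventually_gt_nhds h1)).exists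
  have hy0 : (0:ℝ) < y := by
    by_contra hc
    push_neg at hc
    rw [cdf_zero_of_pos μ hξpos hc] at hy
    linarith
  have : t ∈ Icc (cdfOf μ ξ 0) (cdfOf μ ξ y) := by
    rw [cdf_zero_of_pos μ hξpos (le_refl 0)]
    exact ⟨le_of_lt h0, le_of_lt hy⟩
  obtain ⟨s, hs, hst⟩ := intermediate_value_Icc (le_of_lt hy0) (hFcont.continuousOn) this
  refine ⟨s, ?_, hst⟩
  rcases eq_or_lt_of_le hs.1 with h | h
  · exfalso
    rw [← h, cdf_zero_of_pos μ hξpos (le_refl 0)] at hst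
    linarith
  · exact h

lemma event_le_eq (hξm : Measurable ξ) (hFmono : StrictMonoOn (cdfOf μ ξ) (Set.Ioi 0))
    (hξpos : ∀ ω, 0 < ξ ω) {s : ℝ} (hs : 0 < s) :
    {ω | ξ ω ≤ s} = {ω | cdfOf μ ξ (ξ ω) ≤ cdfOf μ ξ s} := by
  ext ω
  simp only [mem_setOf_eq]
  constructor
  · exact fun h => cdf_mono μ ξ h
  · intro h
    by_contra hc
    push_neg at hc
    exact absurd (hFmono hs (hξpos ω) hc) (not_lt.mpr h)

lemma U_cdf (hξm : Measurable ξ) (hξpos : ∀ ω, 0 < ξ ω)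
    (hFcont : Continuous (cdfOf μ ξ)) (hFmono : StrictMonoOn (cdfOf μ ξ) (Set.Ioi 0))
    {t : ℝ} (ht0 : 0 ≤ t) (ht1 : t ≤ 1) :
    μ {ω | cdfOf μ ξ (ξ ω) ≤ t} = ENNReal.ofReal t := by
  rcases eq_or_lt_of_le ht0 with h0 | h0
  · have he : {ω | cdfOf μ ξ (ξ ω) ≤ t} = ∅ := by
      ext ω
      simp only [mem_setOf_eq, mem_empty_iff_false, iff_false, not_le]
      rw [← h0]
      exact U_pos μ hξpos hFmono ω
    rw [he, measure_empty, ← h0, ENNReal.ofReal_zero]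
  rcases eq_or_lt_of_le ht1 with h1 | h1
  · have he : {ω | cdfOf μ ξ (ξ ω) ≤ t} = univ := by
      ext ω
      simp only [mem_setOf_eq, mem_univ, iff_true]
      rw [h1]
      exact le_of_lt (U_lt_one μ hξpos hFmono ω)
    rw [he, measure_univ, h1, ENNReal.ofReal_one]
  obtain ⟨s, hs0, hst⟩ := exists_F_eq μ hξpos hFcont h0 h1
  have hev : {ω | cdfOf μ ξ (ξ ω) ≤ t} = {ω | ξ ω ≤ s} := by
    rw [event_le_eq μ hξm hFmono hξpos hs0, hst]
  rw [hev, meas_le_eq, hst]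

lemma U_lt_meas (hξm : Measurable ξ) (hξpos : ∀ ω, 0 < ξ ω)
    (hFcont : Continuous (cdfOf μ ξ)) (hFmono : StrictMonoOn (cdfOf μ ξ) (Set.Ioi 0))
    {t : ℝ} (ht0 : 0 ≤ t) (ht1 : t ≤ 1) :
    μ {ω | cdfOf μ ξ (ξ ω) < t} = ENNReal.ofReal t := by
  refine le_antisymm ?_ ?_
  · rw [← U_cdf μ hξm hξpos hFcont hFmono ht0 ht1]
    exact measure_mono (fun ω h => le_of_lt (show cdfOf μ ξ (ξ ω) < t from h))
  · have key : ∀ n : ℕ, ENNReal.ofReal (t - 1/(n+1)) ≤ μ {ω | cdfOf μ ξ (ξ ω) < t} := by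
      intro n
      rcases le_or_gt (t - 1/(n+1)) 0 with h | h
      · rw [ENNReal.ofReal_eq_zero.mpr h]
        exact zero_le
      · have h1 : t - 1/(n+1) ≤ 1 := by
          have : (0:ℝ) < 1/(n+1) := by positivity
          linarith
        rw [← U_cdf μ hξm hξpos hFcont hFmono (le_of_lt h) h1]
        refine measure_mono (fun ω hω => ?_)
        simp only [mem_setOf_eq] at hω ⊢
        have : (0:ℝ) < 1/(n+1) := by positivity
        linarith
    have hlim : Filter.Tendsto (fun n : ℕ => ENNReal.ofReal (t - 1/(n+1))) Filter.atTop
        (nhds (ENNReal.ofReal t)) := by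
      refine (ENNReal.continuous_ofReal.tendsto t).comp ?_
      have : Filter.Tendsto (fun n : ℕ => 1/((n:ℝ)+1)) Filter.atTop (nhds 0) :=
        tendsto_one_div_add_atTop_nhds_zero_nat
      simpa using (tendsto_const_nhds (x := t)).sub this
    exact le_of_tendsto hlim (Filter.Eventually.of_forall key)

lemma U_eq_meas (hξm : Measurable ξ) (hξpos : ∀ ω, 0 < ξ ω)
    (hFcont : Continuous (cdfOf μ ξ)) (hFmono : StrictMonoOn (cdfOf μ ξ) (Set.Ioi 0))
    {t : ℝ} (ht0 : 0 ≤ t) (ht1 : t ≤ 1) :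
    μ {ω | cdfOf μ ξ (ξ ω) = t} = 0 := by
  have hsub : {ω | cdfOf μ ξ (ξ ω) = t} ⊆
      {ω | cdfOf μ ξ (ξ ω) ≤ t} \ {ω | cdfOf μ ξ (ξ ω) < t} := by
    intro ω h
    simp only [mem_setOf_eq] at h
    exact ⟨le_of_eq h, by simp [h]⟩
  refine le_antisymm (le_trans (measure_mono hsub) ?_) zero_le
  have hd := measure_diff (μ := μ) (s₁ := {ω | cdfOf μ ξ (ξ ω) ≤ t})
    (s₂ := {ω | cdfOf μ ξ (ξ ω) < t})
    (fun ω h => le_of_lt (show cdfOf μ ξ (ξ ω) < t from h))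
    (((hFcont.measurable.comp hξm) measurableSet_Iio).nullMeasurableSet)
    (measure_ne_top μ _)
  rw [hd, U_cdf μ hξm hξpos hFcont hFmono ht0 ht1,
    U_lt_meas μ hξm hξpos hFcont hFmono ht0 ht1]
  simp

end Unif

section Pfacts
variable {ξ X : Ω → ℝ} {c : ℝ}

/-- the candidate optimum -/
def pfun (μ : Measure Ω) (ξ X : Ω → ℝ) (ω : Ω) : ℝ :=
  qf μ X (1 - cdfOf μ ξ (ξ ω))

lemma p_ge (hc : ∀ ω, c ≤ X ω) (hξpos : ∀ ω, 0 < ξ ω)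
    (hFmono : StrictMonoOn (cdfOf μ ξ) (Set.Ioi 0)) (ω : Ω) :
    c ≤ pfun μ ξ X ω :=
  qf_ge μ hc (by linarith [U_lt_one μ hξpos hFmono ω]) (by linarith [U_pos μ hξpos hFmono ω])

lemma p_le_iff_aux (hXm : Measurable X) (hc : ∀ ω, c ≤ X ω) (hξpos : ∀ ω, 0 < ξ ω)
    (hFmono : StrictMonoOn (cdfOf μ ξ) (Set.Ioi 0)) (r : ℝ) (ω : Ω) :
    (pfun μ ξ X ω ≤ r ↔ (1 - cdfOf μ ξ (ξ ω) < cdfOf μ X r ∨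
      (1 - cdfOf μ ξ (ξ ω) = cdfOf μ X r ∧ qf μ X (cdfOf μ X r) ≤ r))) := by
  have hz0 : 0 ≤ 1 - cdfOf μ ξ (ξ ω) := by linarith [U_lt_one μ hξpos hFmono ω]
  have hz1 : 1 - cdfOf μ ξ (ξ ω) < 1 := by linarith [U_pos μ hξpos hFmono ω]
  constructor
  · intro h
    have hle : 1 - cdfOf μ ξ (ξ ω) ≤ cdfOf μ X r :=
      le_cdf_of_qf_le μ hXm hc hz0 hz1 h
    rcases eq_or_lt_of_le hle with heq | hlt
    · right
      exact ⟨heq, by rw [← heq]; exact h⟩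
    · left; exact hlt
  · rintro (hlt | ⟨heq, hle⟩)
    · exact qf_le μ hc hz0 hlt
    · show qf μ X (1 - cdfOf μ ξ (ξ ω)) ≤ r
      rw [heq]; exact hle

lemma p_measurable (hXm : Measurable X) (hξm : Measurable ξ) (hc : ∀ ω, c ≤ X ω)
    (hξpos : ∀ ω, 0 < ξ ω) (hFcont : Continuous (cdfOf μ ξ))
    (hFmono : StrictMonoOn (cdfOf μ ξ) (Set.Ioi 0)) :
    Measurable (pfun μ ξ X) := by
  have hU : Measurable (fun ω => cdfOf μ ξ (ξ ω)) := hFcont.measurable.comp hξm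
  apply measurable_of_Iic
  intro r
  have hset : pfun μ ξ X ⁻¹' Iic r =
      {ω | 1 - cdfOf μ ξ (ξ ω) < cdfOf μ X r} ∪
      ({ω | 1 - cdfOf μ ξ (ξ ω) = cdfOf μ X r} ∩
        (if qf μ X (cdfOf μ X r) ≤ r then univ else ∅)) := by
    ext ω
    simp only [mem_preimage, mem_Iic, mem_union, mem_inter_iff, mem_setOf_eq]
    rw [p_le_iff_aux μ hXm hc hξpos hFmono r ω]
    by_cases hq : qf μ X (cdfOf μ X r) ≤ r <;> simp [hq]
  rw [hset]
  refine MeasurableSet.union ?_ (MeasurableSet.inter ?_ ?_)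
  · exact measurableSet_lt ((measurable_const.sub hU)) measurable_const
  · exact (measurable_const.sub hU) (measurableSet_singleton _)
  · by_cases hq : qf μ X (cdfOf μ X r) ≤ r <;> simp [hq]

/-- sandwich: `{U < 1 - F_X r} ⊆ {p > r} ⊆ {U ≤ 1 - F_X r}` -/
lemma p_sandwich_lower (hXm : Measurable X) (hc : ∀ ω, c ≤ X ω) (hξpos : ∀ ω, 0 < ξ ω)
    (hFmono : StrictMonoOn (cdfOf μ ξ) (Set.Ioi 0)) (r : ℝ) :
    {ω | cdfOf μ ξ (ξ ω) < 1 - cdfOf μ X r} ⊆ {ω | r < pfun μ ξ X ω} := by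
  intro ω hω
  simp only [mem_setOf_eq] at hω ⊢
  by_contra hcon
  push_neg at hcon
  have hz0 : 0 ≤ 1 - cdfOf μ ξ (ξ ω) := by linarith [U_lt_one μ hξpos hFmono ω]
  have hz1 : 1 - cdfOf μ ξ (ξ ω) < 1 := by linarith [U_pos μ hξpos hFmono ω]
  have := le_cdf_of_qf_le μ hXm hc hz0 hz1 hcon
  linarith

lemma p_sandwich_upper (hc : ∀ ω, c ≤ X ω) (hξpos : ∀ ω, 0 < ξ ω)
    (hFmono : StrictMonoOn (cdfOf μ ξ) (Set.Ioi 0)) (r : ℝ) :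
    {ω | r < pfun μ ξ X ω} ⊆ {ω | cdfOf μ ξ (ξ ω) ≤ 1 - cdfOf μ X r} := by
  intro ω hω
  simp only [mem_setOf_eq] at hω ⊢
  by_contra hcon
  push_neg at hcon
  have hz0 : 0 ≤ 1 - cdfOf μ ξ (ξ ω) := by linarith [U_lt_one μ hξpos hFmono ω]
  have : pfun μ ξ X ω ≤ r := qf_le μ hc hz0 (by linarith)
  linarith

end Pfacts

section Layer

lemma layercake2 (f g : Ω → ℝ) (hf : Measurable f) (hg : Measurable g)
    (hgnn : ∀ ω, 0 ≤ g ω) :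
    ∫⁻ ω, ENNReal.ofReal (f ω) * ENNReal.ofReal (g ω) ∂μ
      = ∫⁻ s in Ioi (0:ℝ), (∫⁻ t in Ioi (0:ℝ),
          μ ({ω | t < g ω} ∩ {ω | s < f ω})) := by
  have step1 : ∀ ω, ENNReal.ofReal (f ω) * ENNReal.ofReal (g ω)
      = ∫⁻ s in Ioi (0:ℝ), (if s < f ω then ENNReal.ofReal (g ω) else 0) := by
    intro ω
    have : (fun s : ℝ => if s < f ω then ENNReal.ofReal (g ω) else 0)
        = (Iio (f ω)).indicator (fun _ => ENNReal.ofReal (g ω)) := by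
      ext s; simp [Set.indicator, mem_Iio]
    rw [this, lintegral_indicator measurableSet_Iio, setLIntegral_const,
      Measure.restrict_apply measurableSet_Iio]
    rw [show Iio (f ω) ∩ Ioi (0:ℝ) = Ioo 0 (f ω) by ext x; simp [mem_Ioo, and_comm],
      Real.volume_Ioo, mul_comm]
    simp
  calc ∫⁻ ω, ENNReal.ofReal (f ω) * ENNReal.ofReal (g ω) ∂μ
      = ∫⁻ ω, (∫⁻ s in Ioi (0:ℝ), (if s < f ω then ENNReal.ofReal (g ω) else 0)) ∂μ := by
        exact lintegral_congr (fun ω => step1 ω)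
    _ = ∫⁻ s in Ioi (0:ℝ), (∫⁻ ω, (if s < f ω then ENNReal.ofReal (g ω) else 0) ∂μ) := by
        apply lintegral_lintegral_swap
        apply Measurable.aemeasurable
        have hset : MeasurableSet {p : Ω × ℝ | p.2 < f p.1} :=
          measurableSet_lt measurable_snd (hf.comp measurable_fst)
        exact Measurable.ite hset
          ((ENNReal.measurable_ofReal.comp hg).comp measurable_fst) measurable_const
    _ = ∫⁻ s in Ioi (0:ℝ), (∫⁻ t in Ioi (0:ℝ), μ ({ω | t < g ω} ∩ {ω | s < f ω})) := by
        refine lintegral_congr (fun s => ?_)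
        have h1 : (fun ω => if s < f ω then ENNReal.ofReal (g ω) else 0)
            = {ω | s < f ω}.indicator (fun ω => ENNReal.ofReal (g ω)) := by
          ext ω; simp [Set.indicator, mem_setOf_eq]
        rw [h1, lintegral_indicator (measurableSet_lt measurable_const hf)]
        rw [lintegral_eq_lintegral_meas_lt _ (Filter.Eventually.of_forall hgnn)
          hg.aemeasurable]
        refine lintegral_congr (fun t => ?_)
        rw [Measure.restrict_apply (measurableSet_lt measurable_const hg)]

end Layer

section Joint
variable {ξ X : Ω → ℝ} {c : ℝ}

lemma jointlaw_p (hXm : Measurable X) (hξm : Measurable ξ) (hc : ∀ ω, c ≤ X ω)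
    (hξpos : ∀ ω, 0 < ξ ω) (hFcont : Continuous (cdfOf μ ξ))
    (hFmono : StrictMonoOn (cdfOf μ ξ) (Set.Ioi 0)) {s : ℝ} (r : ℝ) (hs : 0 < s) :
    μ ({ω | r < pfun μ ξ X ω} ∩ {ω | s < ξ ω})
      = ENNReal.ofReal ((1 - cdfOf μ X r) - min (1 - cdfOf μ X r) (cdfOf μ ξ s)) := by
  have ha0 : 0 ≤ 1 - cdfOf μ X r := by linarith [cdf_le_one μ X r]
  have ha1 : 1 - cdfOf μ X r ≤ 1 := by linarith [cdf_nonneg μ X r]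
  have hb0 : 0 ≤ cdfOf μ ξ s := cdf_nonneg μ ξ s
  have hU : Measurable (fun ω => cdfOf μ ξ (ξ ω)) := hFcont.measurable.comp hξm
  have hmin0 : 0 ≤ min (1 - cdfOf μ X r) (cdfOf μ ξ s) := le_min ha0 hb0
  have hmin1 : min (1 - cdfOf μ X r) (cdfOf μ ξ s) ≤ 1 :=
    le_trans (min_le_left _ _) ha1
  have hBeq : {ω | ξ ω ≤ s} = {ω | cdfOf μ ξ (ξ ω) ≤ cdfOf μ ξ s} :=
    event_le_eq μ hξm hFmono hξpos hs
  have hBcompl : {ω | s < ξ ω} = {ω | cdfOf μ ξ (ξ ω) ≤ cdfOf μ ξ s}ᶜ := by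
    rw [← hBeq]
    ext ω; simp only [mem_setOf_eq, mem_compl_iff, not_le]
  have hinter : {ω | cdfOf μ ξ (ξ ω) ≤ 1 - cdfOf μ X r}
      ∩ {ω | cdfOf μ ξ (ξ ω) ≤ cdfOf μ ξ s}
      = {ω | cdfOf μ ξ (ξ ω) ≤ min (1 - cdfOf μ X r) (cdfOf μ ξ s)} := by
    ext ω; simp only [mem_inter_iff, mem_setOf_eq, le_min_iff]
  have hdiff_eq : {ω | cdfOf μ ξ (ξ ω) ≤ 1 - cdfOf μ X r}
      \ {ω | cdfOf μ ξ (ξ ω) ≤ cdfOf μ ξ s}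
      = {ω | cdfOf μ ξ (ξ ω) ≤ 1 - cdfOf μ X r}
      \ ({ω | cdfOf μ ξ (ξ ω) ≤ 1 - cdfOf μ X r}
          ∩ {ω | cdfOf μ ξ (ξ ω) ≤ cdfOf μ ξ s}) := by
    ext ω; simp only [mem_diff, mem_inter_iff]; tauto
  have hV : μ ({ω | cdfOf μ ξ (ξ ω) ≤ 1 - cdfOf μ X r}
      \ {ω | cdfOf μ ξ (ξ ω) ≤ cdfOf μ ξ s})
      = ENNReal.ofReal (1 - cdfOf μ X r)
        - ENNReal.ofReal (min (1 - cdfOf μ X r) (cdfOf μ ξ s)) := by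
    rw [hdiff_eq, measure_diff inter_subset_left
      (show NullMeasurableSet ({ω | cdfOf μ ξ (ξ ω) ≤ 1 - cdfOf μ X r}
          ∩ {ω | cdfOf μ ξ (ξ ω) ≤ cdfOf μ ξ s}) μ from
        ((hU measurableSet_Iic).inter (hU measurableSet_Iic)).nullMeasurableSet)
      (measure_ne_top μ _), hinter,
      U_cdf μ hξm hξpos hFcont hFmono hmin0 hmin1,
      U_cdf μ hξm hξpos hFcont hFmono ha0 ha1]
  have hofsub : ENNReal.ofReal (1 - cdfOf μ X r)
      - ENNReal.ofReal (min (1 - cdfOf μ X r) (cdfOf μ ξ s))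
      = ENNReal.ofReal ((1 - cdfOf μ X r) - min (1 - cdfOf μ X r) (cdfOf μ ξ s)) :=
    (ENNReal.ofReal_sub _ hmin0).symm
  refine le_antisymm ?_ ?_
  · rw [← hofsub, ← hV]
    refine measure_mono ?_
    rintro ω ⟨h1, h2⟩
    refine ⟨p_sandwich_upper μ hc hξpos hFmono r h1, ?_⟩
    rw [hBcompl] at h2
    exact h2
  · rw [← hofsub, ← hV]
    have hsub2 : {ω | cdfOf μ ξ (ξ ω) ≤ 1 - cdfOf μ X r}
        \ {ω | cdfOf μ ξ (ξ ω) ≤ cdfOf μ ξ s}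
        ⊆ ({ω | cdfOf μ ξ (ξ ω) < 1 - cdfOf μ X r}
            \ {ω | cdfOf μ ξ (ξ ω) ≤ cdfOf μ ξ s})
          ∪ {ω | cdfOf μ ξ (ξ ω) = 1 - cdfOf μ X r} := by
      rintro ω ⟨h1, h2⟩
      rcases lt_or_eq_of_le (show cdfOf μ ξ (ξ ω) ≤ 1 - cdfOf μ X r from h1) with h | h
      · exact Or.inl ⟨h, h2⟩
      · exact Or.inr h
    calc μ ({ω | cdfOf μ ξ (ξ ω) ≤ 1 - cdfOf μ X r}
        \ {ω | cdfOf μ ξ (ξ ω) ≤ cdfOf μ ξ s})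
        ≤ μ (({ω | cdfOf μ ξ (ξ ω) < 1 - cdfOf μ X r}
            \ {ω | cdfOf μ ξ (ξ ω) ≤ cdfOf μ ξ s})
          ∪ {ω | cdfOf μ ξ (ξ ω) = 1 - cdfOf μ X r}) := measure_mono hsub2
      _ ≤ μ ({ω | cdfOf μ ξ (ξ ω) < 1 - cdfOf μ X r}
            \ {ω | cdfOf μ ξ (ξ ω) ≤ cdfOf μ ξ s})
          + μ {ω | cdfOf μ ξ (ξ ω) = 1 - cdfOf μ X r} := measure_union_le _ _
      _ = μ ({ω | cdfOf μ ξ (ξ ω) < 1 - cdfOf μ X r}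
            \ {ω | cdfOf μ ξ (ξ ω) ≤ cdfOf μ ξ s}) := by
          rw [U_eq_meas μ hξm hξpos hFcont hFmono ha0 ha1, add_zero]
      _ ≤ μ ({ω | r < pfun μ ξ X ω} ∩ {ω | s < ξ ω}) := by
          refine measure_mono ?_
          rintro ω ⟨h1, h2⟩
          refine ⟨p_sandwich_lower μ hXm hc hξpos hFmono r h1, ?_⟩
          rw [hBcompl]
          exact h2

lemma jointlaw_X_ge (hXm : Measurable X) (hξm : Measurable ξ) (s r : ℝ) :
    ENNReal.ofReal ((1 - cdfOf μ X r) - min (1 - cdfOf μ X r) (cdfOf μ ξ s))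
      ≤ μ ({ω | r < X ω} ∩ {ω | s < ξ ω}) := by
  have ha0 : 0 ≤ 1 - cdfOf μ X r := by linarith [cdf_le_one μ X r]
  have hb0 : 0 ≤ cdfOf μ ξ s := cdf_nonneg μ ξ s
  have key : ENNReal.ofReal ((1 - cdfOf μ X r) - min (1 - cdfOf μ X r) (cdfOf μ ξ s))
      = ENNReal.ofReal (1 - cdfOf μ X r) - ENNReal.ofReal (cdfOf μ ξ s) := by
    rcases le_total (cdfOf μ ξ s) (1 - cdfOf μ X r) with h | h
    · rw [min_eq_right h, ENNReal.ofReal_sub _ hb0]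
    · rw [min_eq_left h]
      simp only [sub_self, ENNReal.ofReal_zero]
      symm
      rw [tsub_eq_zero_iff_le]
      exact ENNReal.ofReal_le_ofReal h
  rw [key, ← meas_gt_eq μ X hXm r, ← meas_le_eq μ ξ s]
  rw [tsub_le_iff_right]
  have hcover : {ω | r < X ω} ⊆ ({ω | r < X ω} ∩ {ω | s < ξ ω}) ∪ {ω | ξ ω ≤ s} := by
    intro ω h
    rcases le_or_gt (ξ ω) s with h2 | h2
    · exact Or.inr h2
    · exact Or.inl ⟨h, h2⟩
  exact le_trans (measure_mono hcover) (measure_union_le _ _)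

end Joint

section Helpers

/-- If `g ≤ f`, `∫ f ≤ ∫ g` and `∫ g < ∞` then `f = g` a.e. -/
lemma helper_ae_eq {α : Type*} [MeasurableSpace α] (ν : Measure α) {f g : α → ℝ≥0∞}
    (hf : Measurable f) (hg : Measurable g) (hle : ∀ x, g x ≤ f x)
    (hint : ∫⁻ x, f x ∂ν ≤ ∫⁻ x, g x ∂ν) (hfin : ∫⁻ x, g x ∂ν ≠ ⊤) :
    ∀ᵐ x ∂ν, f x = g x := by
  have hsub : ∫⁻ x, (f x - g x) ∂ν = ∫⁻ x, f x ∂ν - ∫⁻ x, g x ∂ν :=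
    lintegral_sub hg hfin (Filter.Eventually.of_forall hle)
  have hzero : ∫⁻ x, (f x - g x) ∂ν = 0 := by
    rw [hsub, tsub_eq_zero_iff_le]
    exact hint
  have := (lintegral_eq_zero_iff (hf.sub hg)).mp hzero
  filter_upwards [this] with x hx
  have : f x - g x = 0 := hx
  exact le_antisymm (tsub_eq_zero_iff_le.mp this) (hle x)

/-- a conull set (w.r.t. `volume.restrict (Ioi 0)`) admits points in any
`Ioo t₀ (t₀+δ)` with `t₀ ≥ 0`. -/
lemma exists_seq_in_conull {T : Set ℝ} (hT : volume ((Set.Ioi (0:ℝ) \ T)) = 0)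
    {t₀ : ℝ} (ht₀ : 0 ≤ t₀) :
    ∃ u : ℕ → ℝ, (∀ n, u n ∈ T) ∧ (∀ n, t₀ < u n) ∧ (∀ n, u n < t₀ + 1/(n+1)) := by
  have key : ∀ n : ℕ, ∃ t, t ∈ T ∧ t₀ < t ∧ t < t₀ + 1/(n+1) := by
    intro n
    by_contra hcon
    push_neg at hcon
    have hsub : Ioo t₀ (t₀ + 1/(n+1)) ⊆ Set.Ioi (0:ℝ) \ T := by
      intro t ht
      refine ⟨lt_of_le_of_lt ht₀ ht.1, fun htT => ?_⟩
      exact absurd ht.2 (not_lt.mpr (hcon t htT ht.1))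
    have h1 : volume (Ioo t₀ (t₀ + 1/(n+1))) = 0 :=
      measure_mono_null hsub hT
    rw [Real.volume_Ioo] at h1
    have : (0:ℝ) < 1/(n+1) := by positivity
    simp only [ENNReal.ofReal_eq_zero] at h1
    linarith
  choose u hu1 hu2 hu3 using key
  exact ⟨u, hu1, hu2, hu3⟩

end Helpers

section Core
variable {ξ X : Ω → ℝ} {c : ℝ}

/-- joint tail of `(X, ξ)`, shifted by `c`. -/
def Phi (μ : Measure Ω) (X ξ : Ω → ℝ) (c s t : ℝ) : ℝ≥0∞ :=
  μ ({ω | t + c < X ω} ∩ {ω | s < ξ ω})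

/-- the counter-monotone joint tail. -/
def Gam (μ : Measure Ω) (X ξ : Ω → ℝ) (c s t : ℝ) : ℝ≥0∞ :=
  ENNReal.ofReal ((1 - cdfOf μ X (t+c)) - min (1 - cdfOf μ X (t+c)) (cdfOf μ ξ s))

lemma real_aux_mono {b : ℝ} : Monotone (fun x : ℝ => x - min x b) := by
  intro x y hxy
  show x - min x b ≤ y - min y b
  rcases le_total x b with h | h
  · rw [min_eq_left h, sub_self]
    rcases le_total y b with h2 | h2
    · rw [min_eq_left h2, sub_self]
    · rw [min_eq_right h2]; linarith
  · rw [min_eq_right h]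
    rcases le_total y b with h2 | h2
    · rw [min_eq_left h2, sub_self]; linarith
    · rw [min_eq_right h2]; linarith

lemma Phi_anti_s (t : ℝ) : Antitone (fun s => Phi μ X ξ c s t) := by
  intro s1 s2 h
  exact measure_mono (fun ω hω => ⟨hω.1, lt_of_le_of_lt h hω.2⟩)

lemma Phi_anti_t (s : ℝ) : Antitone (fun t => Phi μ X ξ c s t) := by
  intro t1 t2 h
  refine measure_mono (fun ω hω => ⟨?_, hω.2⟩)
  have := hω.1
  simp only [mem_setOf_eq] at this ⊢
  linarith

lemma Gam_anti_s (t : ℝ) : Antitone (fun s => Gam μ X ξ c s t) := by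
  intro s1 s2 h
  apply ENNReal.ofReal_le_ofReal
  have : min (1 - cdfOf μ X (t+c)) (cdfOf μ ξ s1)
      ≤ min (1 - cdfOf μ X (t+c)) (cdfOf μ ξ s2) :=
    min_le_min (le_refl _) (cdf_mono μ ξ h)
  linarith

lemma Gam_anti_t (s : ℝ) : Antitone (fun t => Gam μ X ξ c s t) := by
  intro t1 t2 h
  apply ENNReal.ofReal_le_ofReal
  have h' : 1 - cdfOf μ X (t2 + c) ≤ 1 - cdfOf μ X (t1 + c) := by
    have := cdf_mono μ X (show t1 + c ≤ t2 + c by linarith)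
    linarith
  exact real_aux_mono h'

lemma Gam_le_Phi (hXm : Measurable X) (hξm : Measurable ξ) (s t : ℝ) :
    Gam μ X ξ c s t ≤ Phi μ X ξ c s t :=
  jointlaw_X_ge μ hXm hξm s (t+c)

lemma repX (hξm : Measurable ξ) (hXm : Measurable X) (hc : ∀ ω, c ≤ X ω) :
    ∫⁻ ω, ENNReal.ofReal (ξ ω) * ENNReal.ofReal (X ω - c) ∂μ
      = ∫⁻ s in Ioi (0:ℝ), (∫⁻ t in Ioi (0:ℝ), Phi μ X ξ c s t) := by
  rw [layercake2 μ ξ (fun ω => X ω - c) hξm (hXm.sub measurable_const)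
    (fun ω => by show (0:ℝ) ≤ X ω - c; linarith [hc ω])]
  simp only [Phi, lt_sub_iff_add_lt]

lemma repP (hξm : Measurable ξ) (hXm : Measurable X) (hc : ∀ ω, c ≤ X ω)
    (hξpos : ∀ ω, 0 < ξ ω) (hFcont : Continuous (cdfOf μ ξ))
    (hFmono : StrictMonoOn (cdfOf μ ξ) (Set.Ioi 0)) :
    ∫⁻ ω, ENNReal.ofReal (ξ ω) * ENNReal.ofReal (pfun μ ξ X ω - c) ∂μ
      = ∫⁻ s in Ioi (0:ℝ), (∫⁻ t in Ioi (0:ℝ), Gam μ X ξ c s t) := by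
  rw [layercake2 μ ξ (fun ω => pfun μ ξ X ω - c) hξm
    ((p_measurable μ hXm hξm hc hξpos hFcont hFmono).sub measurable_const)
    (fun ω => by show (0:ℝ) ≤ pfun μ ξ X ω - c; linarith [p_ge μ hc hξpos hFmono ω])]
  refine setLIntegral_congr_fun measurableSet_Ioi (fun s hs => ?_)
  refine setLIntegral_congr_fun measurableSet_Ioi (fun t ht => ?_)
  rw [show {ω | t < pfun μ ξ X ω - c} = {ω | t + c < pfun μ ξ X ω} by
    ext ω; simp [lt_sub_iff_add_lt]]
  exact jointlaw_p μ hXm hξm hc hξpos hFcont hFmono (t+c) hs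

lemma conull_of_ae {P : ℝ → Prop}
    (h : ∀ᵐ s ∂(volume.restrict (Ioi (0:ℝ))), P s) :
    volume (Ioi (0:ℝ) \ {s | P s}) = 0 := by
  have h0 : volume.restrict (Ioi (0:ℝ)) {s | ¬ P s} = 0 := ae_iff.mp h
  rw [Measure.restrict_apply' measurableSet_Ioi] at h0
  rw [show Ioi (0:ℝ) \ {s | P s} = {s | ¬ P s} ∩ Ioi 0 by
    ext x; simp only [mem_diff, mem_inter_iff, mem_setOf_eq]; tauto]
  exact h0

lemma tendsto_Phi_right (s t₀ : ℝ) {u : ℕ → ℝ} (h1 : ∀ n, t₀ < u n)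
    (h2 : ∀ n, u n < t₀ + 1/(n+1)) :
    Filter.Tendsto (fun n => Phi μ X ξ c s (u n)) Filter.atTop
      (nhds (Phi μ X ξ c s t₀)) := by
  have hlow : Filter.Tendsto (fun n : ℕ => Phi μ X ξ c s (t₀ + 1/(n+1)))
      Filter.atTop (nhds (Phi μ X ξ c s t₀)) := by
    have hmono : Monotone (fun n : ℕ =>
        {ω | t₀ + 1/(n+1) + c < X ω} ∩ {ω | s < ξ ω}) := by
      intro a b hab ω hω
      refine ⟨?_, hω.2⟩
      have h3 := hω.1
      simp only [mem_setOf_eq] at h3 ⊢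
      have hab' : (a:ℝ) ≤ b := by exact_mod_cast hab
      have : 1/((b:ℝ)+1) ≤ 1/((a:ℝ)+1) :=
        one_div_le_one_div_of_le (by positivity) (by linarith)
      linarith
    have hun := tendsto_measure_iUnion_atTop (μ := μ) hmono
    have hU : (⋃ n : ℕ, {ω | t₀ + 1/(n+1) + c < X ω} ∩ {ω | s < ξ ω})
        = {ω | t₀ + c < X ω} ∩ {ω | s < ξ ω} := by
      ext ω
      simp only [mem_iUnion, mem_inter_iff, mem_setOf_eq]
      constructor
      · rintro ⟨n, hn1, hn2⟩
        have : (0:ℝ) < 1/(n+1) := by positivity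
        exact ⟨by linarith, hn2⟩
      · rintro ⟨hn1, hn2⟩
        obtain ⟨n, hn⟩ := exists_nat_one_div_lt (show (0:ℝ) < X ω - (t₀ + c) by linarith)
        exact ⟨n, by linarith, hn2⟩
    rw [hU] at hun
    exact hun
  refine tendsto_of_tendsto_of_tendsto_of_le_of_le hlow tendsto_const_nhds
    (fun n => Phi_anti_t μ s (le_of_lt (h2 n))) (fun n => Phi_anti_t μ s (le_of_lt (h1 n)))

lemma tendsto_Gam_right (hXm : Measurable X) (s t₀ : ℝ) {u : ℕ → ℝ}
    (h1 : ∀ n, t₀ < u n) (h2 : ∀ n, u n < t₀ + 1/(n+1)) :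
    Filter.Tendsto (fun n => Gam μ X ξ c s (u n)) Filter.atTop
      (nhds (Gam μ X ξ c s t₀)) := by
  have hu_lim : Filter.Tendsto u Filter.atTop (nhds t₀) := by
    have hup : Filter.Tendsto (fun n : ℕ => t₀ + 1/(n+1)) Filter.atTop (nhds t₀) := by
      have : Filter.Tendsto (fun n : ℕ => 1/((n:ℝ)+1)) Filter.atTop (nhds 0) :=
        tendsto_one_div_add_atTop_nhds_zero_nat
      simpa using (tendsto_const_nhds (x := t₀)).add this
    exact tendsto_of_tendsto_of_tendsto_of_le_of_le tendsto_const_nhds hup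
      (fun n => le_of_lt (h1 n)) (fun n => le_of_lt (h2 n))
  have hcdf := cdf_right_cont_seq μ hXm (t₀ + c) (u := fun n => u n + c)
    (fun n => by show t₀ + c < u n + c; linarith [h1 n])
    (by simpa using hu_lim.add_const c)
  have hcont : Continuous (fun x : ℝ =>
      ENNReal.ofReal ((1 - x) - min (1 - x) (cdfOf μ ξ s))) :=
    ENNReal.continuous_ofReal.comp (((continuous_const.sub continuous_id).sub
      ((continuous_const.sub continuous_id).min continuous_const)))
  have := (hcont.tendsto (cdfOf μ X (t₀ + c))).comp hcdf
  simpa [Gam, Function.comp_def] using this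

lemma exists_good_s (hξpos : ∀ ω, 0 < ξ ω) (hFcont : Continuous (cdfOf μ ξ))
    (hFmono : StrictMonoOn (cdfOf μ ξ) (Set.Ioi 0)) (S : Set ℝ)
    (hS : volume (Ioi (0:ℝ) \ S) = 0) {a ε : ℝ} (ha1 : a ≤ 1) (hε : 0 < ε)
    (hεa : ε < a) :
    ∃ s, s ∈ S ∧ 0 < s ∧ a - ε ≤ cdfOf μ ξ s ∧ cdfOf μ ξ s < a := by
  obtain ⟨s₁, hs₁0, hFs₁⟩ := exists_F_eq μ hξpos hFcont
    (show (0:ℝ) < a - ε by linarith) (show a - ε < 1 by linarith)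
  have hmem : ∀ s₂ : ℝ, s₁ < s₂ → ∃ s, s ∈ S ∧ s ∈ Ico s₁ s₂ := by
    intro s₂ hs₂
    by_contra hcon
    push_neg at hcon
    have hsub : Ico s₁ s₂ ⊆ Ioi (0:ℝ) \ S := by
      intro x hx
      refine ⟨lt_of_lt_of_le hs₁0 hx.1, fun hxS => hcon x hxS hx⟩
    have h0 : volume (Ico s₁ s₂) = 0 := measure_mono_null hsub hS
    rw [Real.volume_Ico] at h0
    simp only [ENNReal.ofReal_eq_zero] at h0
    linarith
  rcases lt_or_eq_of_le ha1 with ha1' | ha1'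
  · obtain ⟨s₂, hs₂0, hFs₂⟩ := exists_F_eq μ hξpos hFcont (by linarith) ha1'
    have hs₁₂ : s₁ < s₂ := by
      by_contra hcon
      push_neg at hcon
      have := cdf_mono μ ξ hcon
      rw [hFs₁, hFs₂] at this
      linarith
    obtain ⟨s, hsS, hs⟩ := hmem s₂ hs₁₂
    refine ⟨s, hsS, lt_of_lt_of_le hs₁0 hs.1, ?_, ?_⟩
    · rw [← hFs₁]; exact cdf_mono μ ξ hs.1
    · rw [← hFs₂]
      exact hFmono (mem_Ioi.mpr (lt_of_lt_of_le hs₁0 hs.1)) (mem_Ioi.mpr hs₂0) hs.2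
  · obtain ⟨s, hsS, hs⟩ := hmem (s₁ + 1) (by linarith)
    refine ⟨s, hsS, lt_of_lt_of_le hs₁0 hs.1, ?_, ?_⟩
    · rw [← hFs₁]; exact cdf_mono μ ξ hs.1
    · rw [ha1']
      have hs0 : 0 < s := lt_of_lt_of_le hs₁0 hs.1
      calc cdfOf μ ξ s < cdfOf μ ξ (s+1) :=
            hFmono (mem_Ioi.mpr hs0) (mem_Ioi.mpr (by linarith)) (by linarith)
        _ ≤ 1 := cdf_le_one μ ξ _

lemma eps_limit {m : ℝ≥0∞} {a : ℝ} (ha : 0 < a)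
    (h : ∀ n : ℕ, m ≤ ENNReal.ofReal ((a/2) * (1/(n+1)))) : m = 0 := by
  have hlim : Filter.Tendsto (fun n : ℕ => ENNReal.ofReal ((a/2) * (1/(n+1))))
      Filter.atTop (nhds 0) := by
    have h1 : Filter.Tendsto (fun n : ℕ => (a/2) * (1/((n:ℝ)+1))) Filter.atTop (nhds 0) := by
      have : Filter.Tendsto (fun n : ℕ => 1/((n:ℝ)+1)) Filter.atTop (nhds 0) :=
        tendsto_one_div_add_atTop_nhds_zero_nat
      simpa using this.const_mul (a/2)
    have := (ENNReal.continuous_ofReal.tendsto 0).comp h1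
    simpa [Function.comp_def] using this
  have := ge_of_tendsto hlim (Filter.Eventually.of_forall h)
  simpa using this

lemma badA_null (hXm : Measurable X) (hξm : Measurable ξ) (hc : ∀ ω, c ≤ X ω)
    (hξpos : ∀ ω, 0 < ξ ω) (hFcont : Continuous (cdfOf μ ξ))
    (hFmono : StrictMonoOn (cdfOf μ ξ) (Set.Ioi 0)) (S : Set ℝ)
    (hS : volume (Ioi (0:ℝ) \ S) = 0)
    (hEq : ∀ s ∈ S, 0 < s → ∀ t, 0 < t → Phi μ X ξ c s t = Gam μ X ξ c s t)
    {r : ℝ} (hr : c < r) :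
    μ ({ω | r < X ω} ∩ {ω | 1 - cdfOf μ X r ≤ cdfOf μ ξ (ξ ω)}) = 0 := by
  have ha0 : 0 ≤ 1 - cdfOf μ X r := by linarith [cdf_le_one μ X r]
  have ha1 : 1 - cdfOf μ X r ≤ 1 := by linarith [cdf_nonneg μ X r]
  rcases eq_or_lt_of_le ha0 with h0 | h0
  · refine measure_mono_null inter_subset_left ?_
    rw [meas_gt_eq μ X hXm r, ← h0, ENNReal.ofReal_zero]
  · apply eps_limit h0
    intro n
    have hn1 : (0:ℝ) < 1/(n+1) := by positivity
    have hn2 : (1:ℝ)/(n+1) ≤ 1 := by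
      rw [div_le_one (by positivity)]
      simp
    have hε : 0 < (1 - cdfOf μ X r)/2 * (1/(n+1)) := by positivity
    have hεa : (1 - cdfOf μ X r)/2 * (1/(n+1)) < 1 - cdfOf μ X r := by
      nlinarith
    obtain ⟨s, hsS, hs0, hFs1, hFs2⟩ := exists_good_s μ hξpos hFcont hFmono S hS
      ha1 hε hεa
    have h1 := hEq s hsS hs0 (r - c) (by linarith)
    simp only [Phi, Gam, sub_add_cancel] at h1
    rw [min_eq_right (le_of_lt hFs2)] at h1
    have hsub : {ω | r < X ω} ∩ {ω | 1 - cdfOf μ X r ≤ cdfOf μ ξ (ξ ω)}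
        ⊆ {ω | r < X ω} ∩ {ω | s < ξ ω} := by
      rintro ω ⟨hω1, hω2⟩
      refine ⟨hω1, ?_⟩
      show s < ξ ω
      by_contra hcon
      push_neg at hcon
      have := cdf_mono μ ξ hcon
      have hω2' : 1 - cdfOf μ X r ≤ cdfOf μ ξ (ξ ω) := hω2
      linarith
    calc μ ({ω | r < X ω} ∩ {ω | 1 - cdfOf μ X r ≤ cdfOf μ ξ (ξ ω)})
        ≤ μ ({ω | r < X ω} ∩ {ω | s < ξ ω}) := measure_mono hsub
      _ = ENNReal.ofReal ((1 - cdfOf μ X r) - cdfOf μ ξ s) := h1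
      _ ≤ ENNReal.ofReal ((1 - cdfOf μ X r)/2 * (1/(n+1))) :=
          ENNReal.ofReal_le_ofReal (by linarith)

lemma badB_null (hXm : Measurable X) (hξm : Measurable ξ) (hc : ∀ ω, c ≤ X ω)
    (hξpos : ∀ ω, 0 < ξ ω) (hFcont : Continuous (cdfOf μ ξ))
    (hFmono : StrictMonoOn (cdfOf μ ξ) (Set.Ioi 0)) (S : Set ℝ)
    (hS : volume (Ioi (0:ℝ) \ S) = 0)
    (hEq : ∀ s ∈ S, 0 < s → ∀ t, 0 < t → Phi μ X ξ c s t = Gam μ X ξ c s t)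
    {r : ℝ} (hr : c < r) :
    μ ({ω | X ω ≤ r} ∩ {ω | cdfOf μ ξ (ξ ω) < 1 - cdfOf μ X r}) = 0 := by
  have ha0 : 0 ≤ 1 - cdfOf μ X r := by linarith [cdf_le_one μ X r]
  have ha1 : 1 - cdfOf μ X r ≤ 1 := by linarith [cdf_nonneg μ X r]
  have hU : Measurable (fun ω => cdfOf μ ξ (ξ ω)) := hFcont.measurable.comp hξm
  rcases eq_or_lt_of_le ha0 with h0 | h0
  · have : {ω | X ω ≤ r} ∩ {ω | cdfOf μ ξ (ξ ω) < 1 - cdfOf μ X r} = ∅ := by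
      ext ω
      simp only [mem_inter_iff, mem_setOf_eq, mem_empty_iff_false, iff_false, not_and,
        not_lt]
      intro _
      rw [← h0]
      exact cdf_nonneg μ ξ _
    simp [this]
  · apply eps_limit h0
    intro n
    have hn1 : (0:ℝ) < 1/(n+1) := by positivity
    have hn2 : (1:ℝ)/(n+1) ≤ 1 := by
      rw [div_le_one (by positivity)]
      simp
    have hε : 0 < (1 - cdfOf μ X r)/2 * (1/(n+1)) := by positivity
    have hεa : (1 - cdfOf μ X r)/2 * (1/(n+1)) < 1 - cdfOf μ X r := by nlinarith
    obtain ⟨s, hsS, hs0, hFs1, hFs2⟩ := exists_good_s μ hξpos hFcont hFmono S hS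
      ha1 hε hεa
    have hFsb0 : 0 ≤ cdfOf μ ξ s := cdf_nonneg μ ξ s
    have hFsb1 : cdfOf μ ξ s ≤ 1 := cdf_le_one μ ξ s
    have h1 := hEq s hsS hs0 (r - c) (by linarith)
    simp only [Phi, Gam, sub_add_cancel] at h1
    rw [min_eq_right (le_of_lt hFs2)] at h1
    -- μ ({r<X} ∩ {ξ≤s}) = ofReal (F s)
    have hBeq : {ω | ξ ω ≤ s} = {ω | cdfOf μ ξ (ξ ω) ≤ cdfOf μ ξ s} :=
      event_le_eq μ hξm hFmono hξpos hs0
    have hseteq1 : {ω | r < X ω} ∩ {ω | ξ ω ≤ s}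
        = {ω | r < X ω} \ ({ω | r < X ω} ∩ {ω | s < ξ ω}) := by
      ext ω
      simp only [mem_inter_iff, mem_setOf_eq, mem_diff, not_and, not_lt]
      tauto
    have hmeas_inter : MeasurableSet ({ω | r < X ω} ∩ {ω | s < ξ ω}) := by
      exact (hXm measurableSet_Ioi).inter (hξm measurableSet_Ioi)
    have hc1 : μ ({ω | r < X ω} ∩ {ω | ξ ω ≤ s}) = ENNReal.ofReal (cdfOf μ ξ s) := by
      rw [hseteq1, measure_diff inter_subset_left hmeas_inter.nullMeasurableSet
        (measure_ne_top μ _), h1, meas_gt_eq μ X hXm r,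
        ← ENNReal.ofReal_sub _ (by linarith : (0:ℝ) ≤ (1 - cdfOf μ X r) - cdfOf μ ξ s)]
      congr 1
      ring
    have hc2 : μ ({ω | X ω ≤ r} ∩ {ω | cdfOf μ ξ (ξ ω) ≤ cdfOf μ ξ s}) = 0 := by
      have hseteq2 : {ω | X ω ≤ r} ∩ {ω | cdfOf μ ξ (ξ ω) ≤ cdfOf μ ξ s}
          = {ω | cdfOf μ ξ (ξ ω) ≤ cdfOf μ ξ s}
            \ ({ω | r < X ω} ∩ {ω | cdfOf μ ξ (ξ ω) ≤ cdfOf μ ξ s}) := by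
        ext ω
        constructor
        · rintro ⟨hω1, hω2⟩
          refine ⟨hω2, fun hcon => ?_⟩
          exact absurd hcon.1 (not_lt.mpr (show X ω ≤ r from hω1))
        · rintro ⟨hω1, hω2⟩
          refine ⟨?_, hω1⟩
          show X ω ≤ r
          by_contra hcon
          push_neg at hcon
          exact hω2 ⟨hcon, hω1⟩
      have hCeq : {ω | r < X ω} ∩ {ω | ξ ω ≤ s}
          = {ω | r < X ω} ∩ {ω | cdfOf μ ξ (ξ ω) ≤ cdfOf μ ξ s} := by
        rw [← hBeq]
      rw [hseteq2, measure_diff inter_subset_right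
        (show NullMeasurableSet ({ω | r < X ω}
            ∩ {ω | cdfOf μ ξ (ξ ω) ≤ cdfOf μ ξ s}) μ from
          ((hXm measurableSet_Ioi).inter (hU measurableSet_Iic)).nullMeasurableSet)
        (measure_ne_top μ _), ← hCeq, hc1,
        U_cdf μ hξm hξpos hFcont hFmono hFsb0 hFsb1, tsub_self]
    -- the small strip
    have hc3 : μ ({ω | cdfOf μ ξ (ξ ω) < 1 - cdfOf μ X r}
        \ {ω | cdfOf μ ξ (ξ ω) ≤ cdfOf μ ξ s})
        = ENNReal.ofReal ((1 - cdfOf μ X r) - cdfOf μ ξ s) := by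
      rw [measure_diff (show {ω | cdfOf μ ξ (ξ ω) ≤ cdfOf μ ξ s}
            ⊆ {ω | cdfOf μ ξ (ξ ω) < 1 - cdfOf μ X r} from
          fun ω hω => lt_of_le_of_lt (show cdfOf μ ξ (ξ ω) ≤ cdfOf μ ξ s from hω) hFs2)
        (show NullMeasurableSet {ω | cdfOf μ ξ (ξ ω) ≤ cdfOf μ ξ s} μ from
          (hU measurableSet_Iic).nullMeasurableSet) (measure_ne_top μ _),
        U_lt_meas μ hξm hξpos hFcont hFmono ha0 ha1,
        U_cdf μ hξm hξpos hFcont hFmono hFsb0 hFsb1,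
        ← ENNReal.ofReal_sub _ hFsb0]
    have hcover : {ω | X ω ≤ r} ∩ {ω | cdfOf μ ξ (ξ ω) < 1 - cdfOf μ X r}
        ⊆ ({ω | X ω ≤ r} ∩ {ω | cdfOf μ ξ (ξ ω) ≤ cdfOf μ ξ s})
          ∪ ({ω | cdfOf μ ξ (ξ ω) < 1 - cdfOf μ X r}
            \ {ω | cdfOf μ ξ (ξ ω) ≤ cdfOf μ ξ s}) := by
      rintro ω ⟨hω1, hω2⟩
      rcases le_or_gt (cdfOf μ ξ (ξ ω)) (cdfOf μ ξ s) with h | h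
      · exact Or.inl ⟨hω1, h⟩
      · exact Or.inr ⟨hω2, not_le.mpr h⟩
    calc μ ({ω | X ω ≤ r} ∩ {ω | cdfOf μ ξ (ξ ω) < 1 - cdfOf μ X r})
        ≤ μ (({ω | X ω ≤ r} ∩ {ω | cdfOf μ ξ (ξ ω) ≤ cdfOf μ ξ s}))
          + μ ({ω | cdfOf μ ξ (ξ ω) < 1 - cdfOf μ X r}
            \ {ω | cdfOf μ ξ (ξ ω) ≤ cdfOf μ ξ s}) :=
          le_trans (measure_mono hcover) (measure_union_le _ _)
      _ = ENNReal.ofReal ((1 - cdfOf μ X r) - cdfOf μ ξ s) := by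
          rw [hc2, hc3, zero_add]
      _ ≤ ENNReal.ofReal ((1 - cdfOf μ X r)/2 * (1/(n+1))) :=
          ENNReal.ofReal_le_ofReal (by linarith)


lemma core (hXm : Measurable X) (hξm : Measurable ξ) (hc : ∀ ω, c ≤ X ω)
    (hξpos : ∀ ω, 0 < ξ ω) (hFcont : Continuous (cdfOf μ ξ))
    (hFmono : StrictMonoOn (cdfOf μ ξ) (Set.Ioi 0))
    (hfin : ∫⁻ ω, ENNReal.ofReal (ξ ω) * ENNReal.ofReal (pfun μ ξ X ω - c) ∂μ ≠ ⊤)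
    (heq : ∫⁻ ω, ENNReal.ofReal (ξ ω) * ENNReal.ofReal (X ω - c) ∂μ
      = ∫⁻ ω, ENNReal.ofReal (ξ ω) * ENNReal.ofReal (pfun μ ξ X ω - c) ∂μ) :
    ∀ᵐ ω ∂μ, X ω = pfun μ ξ X ω := by
  have hgle : ∀ s, (∫⁻ t in Ioi (0:ℝ), Gam μ X ξ c s t)
      ≤ (∫⁻ t in Ioi (0:ℝ), Phi μ X ξ c s t) :=
    fun s => lintegral_mono (fun t => Gam_le_Phi μ hXm hξm s t)
  have hfmeas : Measurable (fun s => ∫⁻ t in Ioi (0:ℝ), Phi μ X ξ c s t) :=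
    Antitone.measurable (fun s1 s2 h => lintegral_mono (fun t => Phi_anti_s μ t h))
  have hgmeas : Measurable (fun s => ∫⁻ t in Ioi (0:ℝ), Gam μ X ξ c s t) :=
    Antitone.measurable (fun s1 s2 h => lintegral_mono (fun t => Gam_anti_s μ t h))
  have hfing : (∫⁻ s in Ioi (0:ℝ), (∫⁻ t in Ioi (0:ℝ), Gam μ X ξ c s t)) ≠ ⊤ := by
    rw [← repP μ hξm hXm hc hξpos hFcont hFmono]
    exact hfin
  have hinteq : (∫⁻ s in Ioi (0:ℝ), (∫⁻ t in Ioi (0:ℝ), Phi μ X ξ c s t))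
      ≤ ∫⁻ s in Ioi (0:ℝ), (∫⁻ t in Ioi (0:ℝ), Gam μ X ξ c s t) := by
    rw [← repX μ hξm hXm hc, ← repP μ hξm hXm hc hξpos hFcont hFmono]
    exact le_of_eq heq
  have houter := helper_ae_eq (volume.restrict (Ioi (0:ℝ))) hfmeas hgmeas hgle
    hinteq hfing
  have hgfin_ae : ∀ᵐ s ∂(volume.restrict (Ioi (0:ℝ))),
      (∫⁻ t in Ioi (0:ℝ), Gam μ X ξ c s t) ≠ ⊤ := by
    filter_upwards [ae_lt_top hgmeas hfing] with s hs
    exact hs.ne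
  have hae2 : ∀ᵐ s ∂(volume.restrict (Ioi (0:ℝ))), ∀ t, 0 < t →
      Phi μ X ξ c s t = Gam μ X ξ c s t := by
    filter_upwards [houter, hgfin_ae] with s hs1 hs2
    have hinner := helper_ae_eq (volume.restrict (Ioi (0:ℝ)))
      (Antitone.measurable (Phi_anti_t μ s)) (Antitone.measurable (Gam_anti_t μ s))
      (fun t => Gam_le_Phi μ hXm hξm s t) (le_of_eq hs1) hs2
    intro t₀ ht₀
    have hT := conull_of_ae hinner
    obtain ⟨u, hu1, hu2, hu3⟩ := exists_seq_in_conull hT (le_of_lt ht₀)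
    have l1 := tendsto_Phi_right (μ := μ) (X := X) (ξ := ξ) (c := c) s t₀ hu2 hu3
    have l2 := tendsto_Gam_right (μ := μ) (ξ := ξ) (c := c) hXm s t₀ hu2 hu3
    exact tendsto_nhds_unique (l1.congr (fun n => hu1 n)) l2
  have hS := conull_of_ae hae2
  set S := {s : ℝ | ∀ t, 0 < t → Phi μ X ξ c s t = Gam μ X ξ c s t} with hS_def
  have hEqS : ∀ s ∈ S, 0 < s → ∀ t, 0 < t → Phi μ X ξ c s t = Gam μ X ξ c s t :=
    fun s hs _ => hs
  -- null sets for every rational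
  have hbad : ∀ᵐ ω ∂μ, ∀ q : ℚ, c < (q:ℝ) →
      (¬ (((q:ℝ) < X ω) ∧ 1 - cdfOf μ X q ≤ cdfOf μ ξ (ξ ω)))
      ∧ (¬ ((X ω ≤ (q:ℝ)) ∧ cdfOf μ ξ (ξ ω) < 1 - cdfOf μ X q)) := by
    rw [ae_all_iff]
    intro q
    by_cases hq : c < (q:ℝ)
    · have hA := badA_null μ hXm hξm hc hξpos hFcont hFmono S hS hEqS hq
      have hB := badB_null μ hXm hξm hc hξpos hFcont hFmono S hS hEqS hq
      rw [ae_iff]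
      refine measure_mono_null ?_ (measure_union_null hA hB)
      intro ω hω
      have hω'' : ¬ ((c:ℝ) < (q:ℝ) → (¬ (((q:ℝ) < X ω) ∧ 1 - cdfOf μ X q ≤ cdfOf μ ξ (ξ ω)))
          ∧ (¬ ((X ω ≤ (q:ℝ)) ∧ cdfOf μ ξ (ξ ω) < 1 - cdfOf μ X q))) := hω
      have hω' : ¬ ((¬ (((q:ℝ) < X ω) ∧ 1 - cdfOf μ X q ≤ cdfOf μ ξ (ξ ω)))
          ∧ (¬ ((X ω ≤ (q:ℝ)) ∧ cdfOf μ ξ (ξ ω) < 1 - cdfOf μ X q))) :=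
        fun hcontra => hω'' (fun _ => hcontra)
      rcases not_and_or.mp hω' with h | h
      · exact Or.inl (not_not.mp h)
      · exact Or.inr (not_not.mp h)
    · exact Filter.Eventually.of_forall (fun ω hq' => absurd hq' hq)
  have hU_eq : ∀ᵐ ω ∂μ, ∀ q : ℚ, cdfOf μ ξ (ξ ω) ≠ 1 - cdfOf μ X q := by
    rw [ae_all_iff]
    intro q
    rw [ae_iff]
    have h := U_eq_meas μ hξm hξpos hFcont hFmono
      (show (0:ℝ) ≤ 1 - cdfOf μ X q by linarith [cdf_le_one μ X (q:ℝ)])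
      (show 1 - cdfOf μ X (q:ℝ) ≤ 1 by linarith [cdf_nonneg μ X (q:ℝ)])
    refine measure_mono_null ?_ h
    intro ω hω
    simp only [mem_setOf_eq, not_not] at hω ⊢
    exact hω
  filter_upwards [hbad, hU_eq] with ω hω hω3
  by_contra hne
  rcases lt_or_gt_of_ne hne with hlt | hgt
  · -- X ω < p ω
    obtain ⟨q, hq1, hq2⟩ := exists_rat_btwn hlt
    have hqc : c < (q:ℝ) := lt_of_le_of_lt (hc ω) hq1
    have hUle : cdfOf μ ξ (ξ ω) ≤ 1 - cdfOf μ X q :=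
      p_sandwich_upper μ hc hξpos hFmono (q:ℝ) hq2
    rcases lt_or_eq_of_le hUle with h | h
    · exact (hω q hqc).2 ⟨le_of_lt hq1, h⟩
    · exact hω3 q h
  · -- p ω < X ω
    obtain ⟨q, hq1, hq2⟩ := exists_rat_btwn hgt
    have hqc : c < (q:ℝ) := lt_of_le_of_lt (p_ge μ hc hξpos hFmono ω) hq1
    have hUge : 1 - cdfOf μ X q ≤ cdfOf μ ξ (ξ ω) := by
      by_contra hcon
      push_neg at hcon
      have := p_sandwich_lower μ hXm hc hξpos hFmono (q:ℝ) hcon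
      exact absurd hq1 (not_lt.mpr (le_of_lt this))
    exact (hω q hqc).1 ⟨hq2, hUge⟩

end Core

section Final
variable {ξ : Ω → ℝ} {c : ℝ}

lemma ofReal_add_aux {u v : ℝ} (hv : 0 ≤ v) (huv : 0 ≤ u + v) :
    ENNReal.ofReal (u+v) + ENNReal.ofReal (-u)
      = ENNReal.ofReal u + ENNReal.ofReal v := by
  rcases le_total 0 u with h | h
  · rw [ENNReal.ofReal_eq_zero.mpr (neg_nonpos.mpr h), add_zero,
      ENNReal.ofReal_add h hv]
  · rw [ENNReal.ofReal_eq_zero.mpr h, zero_add,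
      ← ENNReal.ofReal_add huv (neg_nonneg.mpr h)]
    congr 1
    ring

lemma expER_repr (hξm : Measurable ξ) (hξpos : ∀ ω, 0 < ξ ω)
    (hξint : Integrable ξ μ) {f : Ω → ℝ} (hfm : Measurable f)
    (hcf : ∀ ω, c ≤ f ω) (hc0 : c ≤ 0) :
    expER μ (fun ω => ξ ω * f ω)
      = (if (∫⁻ ω, ENNReal.ofReal (ξ ω) * ENNReal.ofReal (f ω - c) ∂μ) = ⊤
        then (⊤:EReal)
        else (((∫⁻ ω, ENNReal.ofReal (ξ ω) * ENNReal.ofReal (f ω - c) ∂μ).toReal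
          - (∫⁻ ω, ENNReal.ofReal (ξ ω * (-c)) ∂μ).toReal : ℝ) : EReal)) := by
  have hKfin : (∫⁻ ω, ENNReal.ofReal (ξ ω * (-c)) ∂μ) ≠ ⊤ := by
    have hint : Integrable (fun ω => ξ ω * (-c)) μ := hξint.mul_const (-c)
    exact hint.lintegral_lt_top.ne
  have hBK : (∫⁻ ω, ENNReal.ofReal (-(ξ ω * f ω)) ∂μ)
      ≤ ∫⁻ ω, ENNReal.ofReal (ξ ω * (-c)) ∂μ := by
    refine lintegral_mono (fun ω => ENNReal.ofReal_le_ofReal ?_)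
    have h1 : ξ ω * c ≤ ξ ω * f ω :=
      mul_le_mul_of_nonneg_left (hcf ω) (le_of_lt (hξpos ω))
    linarith
  have hBfin : (∫⁻ ω, ENNReal.ofReal (-(ξ ω * f ω)) ∂μ) ≠ ⊤ :=
    (lt_of_le_of_lt hBK (lt_top_iff_ne_top.mpr hKfin)).ne
  have hm1 : Measurable (fun ω => ENNReal.ofReal (ξ ω) * ENNReal.ofReal (f ω - c)) :=
    (ENNReal.measurable_ofReal.comp hξm).mul
      (ENNReal.measurable_ofReal.comp (hfm.sub measurable_const))
  have hm2 : Measurable (fun ω => ENNReal.ofReal (ξ ω * f ω)) :=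
    ENNReal.measurable_ofReal.comp (hξm.mul hfm)
  have hpw : ∀ ω, ENNReal.ofReal (ξ ω) * ENNReal.ofReal (f ω - c)
      + ENNReal.ofReal (-(ξ ω * f ω))
      = ENNReal.ofReal (ξ ω * f ω) + ENNReal.ofReal (ξ ω * (-c)) := by
    intro ω
    rw [← ENNReal.ofReal_mul (le_of_lt (hξpos ω))]
    have h1 : ξ ω * (f ω - c) = (ξ ω * f ω) + (ξ ω * (-c)) := by ring
    rw [h1]
    refine ofReal_add_aux (by nlinarith [hξpos ω]) ?_
    nlinarith [hξpos ω, hcf ω]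
  have key : (∫⁻ ω, ENNReal.ofReal (ξ ω) * ENNReal.ofReal (f ω - c) ∂μ)
      + (∫⁻ ω, ENNReal.ofReal (-(ξ ω * f ω)) ∂μ)
      = (∫⁻ ω, ENNReal.ofReal (ξ ω * f ω) ∂μ)
        + (∫⁻ ω, ENNReal.ofReal (ξ ω * (-c)) ∂μ) := by
    rw [← lintegral_add_left hm1, ← lintegral_add_left hm2]
    exact lintegral_congr hpw
  by_cases hA' : (∫⁻ ω, ENNReal.ofReal (ξ ω) * ENNReal.ofReal (f ω - c) ∂μ) = ⊤
  · rw [if_pos hA']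
    have hA : (∫⁻ ω, ENNReal.ofReal (ξ ω * f ω) ∂μ) = ⊤ := by
      by_contra hcon
      rw [hA'] at key
      have : (⊤:ℝ≥0∞) = ∫⁻ ω, ENNReal.ofReal (ξ ω * f ω) ∂μ
          + ∫⁻ ω, ENNReal.ofReal (ξ ω * (-c)) ∂μ := by
        rw [← key, top_add]
      exact absurd this.symm (by
        simp only [ENNReal.add_eq_top, not_or]
        exact ⟨hcon, hKfin⟩)
    show ((∫⁻ ω, ENNReal.ofReal (ξ ω * f ω) ∂μ : ℝ≥0∞) : EReal)
        - ((∫⁻ ω, ENNReal.ofReal (-(ξ ω * f ω)) ∂μ : ℝ≥0∞) : EReal) = ⊤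
    rw [hA]
    rw [show ((∫⁻ ω, ENNReal.ofReal (-(ξ ω * f ω)) ∂μ : ℝ≥0∞) : EReal)
        = (((∫⁻ ω, ENNReal.ofReal (-(ξ ω * f ω)) ∂μ).toReal : ℝ) : EReal) by
      rw [← EReal.toReal_coe_ennreal (x := ∫⁻ ω, ENNReal.ofReal (-(ξ ω * f ω)) ∂μ)]
      exact (EReal.coe_toReal (by simpa using hBfin) (by simp)).symm]
    simp only [EReal.coe_ennreal_top]
    exact EReal.top_sub_coe _
  · rw [if_neg hA']
    have hA : (∫⁻ ω, ENNReal.ofReal (ξ ω * f ω) ∂μ) ≠ ⊤ := by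
      intro hcon
      rw [hcon] at key
      have h2 : (∫⁻ ω, ENNReal.ofReal (ξ ω) * ENNReal.ofReal (f ω - c) ∂μ)
          + (∫⁻ ω, ENNReal.ofReal (-(ξ ω * f ω)) ∂μ) = ⊤ := by
        rw [key, top_add]
      rcases ENNReal.add_eq_top.mp h2 with h | h
      · exact hA' h
      · exact hBfin h
    have hreal : (∫⁻ ω, ENNReal.ofReal (ξ ω * f ω) ∂μ).toReal
        + (∫⁻ ω, ENNReal.ofReal (ξ ω * (-c)) ∂μ).toReal
        = (∫⁻ ω, ENNReal.ofReal (ξ ω) * ENNReal.ofReal (f ω - c) ∂μ).toReal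
          + (∫⁻ ω, ENNReal.ofReal (-(ξ ω * f ω)) ∂μ).toReal := by
      rw [← ENNReal.toReal_add hA hKfin, ← ENNReal.toReal_add hA' hBfin, key]
    show ((∫⁻ ω, ENNReal.ofReal (ξ ω * f ω) ∂μ : ℝ≥0∞) : EReal)
        - ((∫⁻ ω, ENNReal.ofReal (-(ξ ω * f ω)) ∂μ : ℝ≥0∞) : EReal) = _
    rw [show ((∫⁻ ω, ENNReal.ofReal (ξ ω * f ω) ∂μ : ℝ≥0∞) : EReal)
        = (((∫⁻ ω, ENNReal.ofReal (ξ ω * f ω) ∂μ).toReal : ℝ) : EReal) by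
      rw [← EReal.toReal_coe_ennreal (x := ∫⁻ ω, ENNReal.ofReal (ξ ω * f ω) ∂μ)]
      exact (EReal.coe_toReal (by simpa using hA) (by simp)).symm]
    rw [show ((∫⁻ ω, ENNReal.ofReal (-(ξ ω * f ω)) ∂μ : ℝ≥0∞) : EReal)
        = (((∫⁻ ω, ENNReal.ofReal (-(ξ ω * f ω)) ∂μ).toReal : ℝ) : EReal) by
      rw [← EReal.toReal_coe_ennreal (x := ∫⁻ ω, ENNReal.ofReal (-(ξ ω * f ω)) ∂μ)]
      exact (EReal.coe_toReal (by simpa using hBfin) (by simp)).symm]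
    rw [← EReal.coe_sub]
    rw [EReal.coe_eq_coe_iff]
    linarith

end Final
end QRaux


open QRaux in
/-- if `E[ξ · G_X(1 − F_ξ(ξ))] < ∞`, then equality
`E[ξ · G_X(1 − F_ξ(ξ))] = E[ξ X]` holds iff `X = G_X(1 − F_ξ(ξ))` almost surely. -/
theorem quantile_rearrangement_eq_iff
    {Ω : Type*} [MeasurableSpace Ω] (μ : Measure Ω) [IsProbabilityMeasure μ]
    (ξ : Ω → ℝ) (hξm : Measurable ξ) (hξpos : ∀ ω, 0 < ξ ω) (hξint : Integrable ξ μ)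
    (hFcont : Continuous (cdfOf μ ξ)) (hFmono : StrictMonoOn (cdfOf μ ξ) (Set.Ioi 0))
    (X : Ω → ℝ) (hXm : Measurable X) (hXlb : ∃ c : ℝ, ∀ ω, c ≤ X ω)
    (hfin : expER μ (fun ω => ξ ω * qf μ X (1 - cdfOf μ ξ (ξ ω))) < ⊤) :
    expER μ (fun ω => ξ ω * qf μ X (1 - cdfOf μ ξ (ξ ω))) = expER μ (fun ω => ξ ω * X ω)
      ↔ (∀ᵐ ω ∂μ, X ω = qf μ X (1 - cdfOf μ ξ (ξ ω))) := by
  classical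
  obtain ⟨c₀, hc₀⟩ := hXlb
  set c := min c₀ 0 with hc_def
  have hc0 : c ≤ 0 := min_le_right _ _
  have hc : ∀ ω, c ≤ X ω := fun ω => le_trans (min_le_left _ _) (hc₀ ω)
  have hcp : ∀ ω, c ≤ pfun μ ξ X ω := p_ge μ hc hξpos hFmono
  have hpm : Measurable (pfun μ ξ X) :=
    p_measurable μ hXm hξm hc hξpos hFcont hFmono
  have hps : (fun ω => ξ ω * qf μ X (1 - cdfOf μ ξ (ξ ω)))
      = (fun ω => ξ ω * pfun μ ξ X ω) := rfl
  have hrepX := expER_repr μ hξm hξpos hξint hXm hc hc0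
  have hrepP := expER_repr μ hξm hξpos hξint hpm hcp hc0
  rw [hps, hrepP] at hfin ⊢
  rw [hrepX]
  have hPfin : (∫⁻ ω, ENNReal.ofReal (ξ ω)
      * ENNReal.ofReal (pfun μ ξ X ω - c) ∂μ) ≠ ⊤ := by
    intro hcon
    rw [if_pos hcon] at hfin
    exact absurd hfin (lt_irrefl _)
  rw [if_neg hPfin]
  constructor
  · intro heq
    have hXfin : (∫⁻ ω, ENNReal.ofReal (ξ ω)
        * ENNReal.ofReal (X ω - c) ∂μ) ≠ ⊤ := by
      intro hcon
      rw [if_pos hcon] at heq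
      exact absurd heq (EReal.coe_ne_top _)
    rw [if_neg hXfin, EReal.coe_eq_coe_iff] at heq
    have heq2 : (∫⁻ ω, ENNReal.ofReal (ξ ω) * ENNReal.ofReal (pfun μ ξ X ω - c) ∂μ).toReal
        = (∫⁻ ω, ENNReal.ofReal (ξ ω) * ENNReal.ofReal (X ω - c) ∂μ).toReal := by
      linarith
    have heq3 : (∫⁻ ω, ENNReal.ofReal (ξ ω) * ENNReal.ofReal (X ω - c) ∂μ)
        = ∫⁻ ω, ENNReal.ofReal (ξ ω) * ENNReal.ofReal (pfun μ ξ X ω - c) ∂μ :=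
      ((ENNReal.toReal_eq_toReal_iff' hPfin hXfin).mp heq2).symm
    exact core μ hXm hξm hc hξpos hFcont hFmono hPfin heq3
  · intro hae
    have h1 : (∫⁻ ω, ENNReal.ofReal (ξ ω) * ENNReal.ofReal (X ω - c) ∂μ)
        = ∫⁻ ω, ENNReal.ofReal (ξ ω) * ENNReal.ofReal (pfun μ ξ X ω - c) ∂μ := by
      refine lintegral_congr_ae ?_
      filter_upwards [hae] with ω hω
      rw [show pfun μ ξ X ω = qf μ X (1 - cdfOf μ ξ (ξ ω)) from rfl, ← hω]
    rw [h1, if_neg hPfin]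

end
end

section
/- Let λ > 0 and c ∈ (0,1). Let v : [0,1] → [0,1] be continuous and strictly increasing with v(0) = 0 and v(1) = 1, continuously differentiable and strictly convex on (0,1), and with v'(s) → +∞ as s ↑ 1. Define φ(s) = λ v(s)/(1+λ) for 0 ≤ s ≤ c and φ(s) = (1 + λ v(s))/(1+λ) for c < s ≤ 1. Then there exists a unique s* ∈ (c, 1) such that φ'(s*) = (φ(s*) − λ v(c)/(1+λ))/(s* − c); equivalently, λ v'(s*)(s* − c) = 1 + λ(v(s*) − v(c)). -/
open Set Filter

/-- existence and uniqueness of the tangency point `s* ∈ (c,1)` for the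
VaR distorted function `φ(s) = λ v(s)/(1+λ)` on `[0,c]`, `φ(s) = (1 + λ v(s))/(1+λ)` on
`(c,1]`: the unique `s*` with `φ'(s*) = (φ(s*) − λ v(c)/(1+λ))/(s* − c)`, equivalently
`λ v'(s*)(s* − c) = 1 + λ(v(s*) − v(c))`. -/
theorem VaR_tangency_exists_unique
    (lam c : ℝ) (hlam : 0 < lam) (hc : c ∈ Set.Ioo (0:ℝ) 1)
    (v v' : ℝ → ℝ)
    (hvc : ContinuousOn v (Set.Icc 0 1))
    (hvmono : StrictMonoOn v (Set.Icc 0 1))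
    (hv0 : v 0 = 0) (hv1 : v 1 = 1)
    (hvmaps : Set.MapsTo v (Set.Icc 0 1) (Set.Icc 0 1))
    (hdiff : ∀ s ∈ Set.Ioo (0:ℝ) 1, HasDerivAt v (v' s) s)
    (hv'cont : ContinuousOn v' (Set.Ioo 0 1))
    (hconv : StrictConvexOn ℝ (Set.Ioo 0 1) v)
    (hlim : Tendsto v' (nhdsWithin 1 (Set.Iio 1)) atTop) :
    ∃! s : ℝ, s ∈ Set.Ioo c 1 ∧ lam * v' s * (s - c) = 1 + lam * (v s - v c) := by
  obtain ⟨hc0, hc1⟩ := hc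
  set F : ℝ → ℝ := fun s => lam * v' s * (s - c) - lam * (v s - v c) - 1 with hF
  have hsub : Ioo c 1 ⊆ Ioo (0:ℝ) 1 := fun x hx => ⟨hc0.trans hx.1, hx.2⟩
  -- F is strictly monotone on (c,1)
  have hmonoF : ∀ s1 ∈ Ioo c 1, ∀ s2 ∈ Ioo c 1, s1 < s2 → F s1 < F s2 := by
    intro s1 h1 s2 h2 h12
    have h1' := hsub h1; have h2' := hsub h2
    have hslope2 := hconv.slope_lt_of_hasDerivAt h1' h2' h12 (hdiff s2 h2')
    have hslope1 := hconv.lt_slope_of_hasDerivAt h1' h2' h12 (hdiff s1 h1')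
    rw [slope_def_field] at hslope2 hslope1
    have hpos : (0:ℝ) < s2 - s1 := by linarith
    have hv2 : v s2 - v s1 < v' s2 * (s2 - s1) := by
      have := (div_lt_iff₀ hpos).mp hslope2; linarith
    have hv' : v' s1 < v' s2 := by
      have := (lt_div_iff₀ hpos).mp hslope1
      have := (div_lt_iff₀ hpos).mp hslope2
      nlinarith
    have hcs1 : (0:ℝ) < s1 - c := by linarith [h1.1]
    have key : v' s1 * (s1 - c) < v' s2 * (s2 - c) - (v s2 - v s1) := by
      nlinarith [mul_lt_mul_of_pos_right hv' hcs1]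
    simp only [hF]
    nlinarith [mul_lt_mul_of_pos_left key hlam]
  -- find b near 1 with F b > 0
  set M : ℝ := (4 * (1 + lam)) / (lam * (1 - c)) with hM
  have hnb : ∀ᶠ s in nhdsWithin 1 (Iio (1:ℝ)), s ∈ Ioo ((1+c)/2) 1 := by
    apply Ioo_mem_nhdsLT_of_mem
    constructor <;> linarith
  obtain ⟨b, hbM, hb⟩ := ((hlim.eventually_ge_atTop M).and hnb).exists
  have hbc : b ∈ Ioo c 1 := ⟨by have := hb.1; linarith, hb.2⟩
  have hvb : v b ∈ Icc (0:ℝ) 1 := hvmaps ⟨by linarith [hbc.1], hbc.2.le⟩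
  have hvcm : v c ∈ Icc (0:ℝ) 1 := hvmaps ⟨hc0.le, hc1.le⟩
  have hMeq : lam * M * ((1 - c) / 2) = 2 * (1 + lam) := by
    show lam * (4 * (1 + lam) / (lam * (1 - c))) * ((1 - c) / 2) = 2 * (1 + lam)
    have h1 : lam ≠ 0 := ne_of_gt hlam
    have h2 : (1 - c) ≠ 0 := by intro h; linarith [sub_eq_zero.mp h]
    field_simp
    ring
  have hbF : 0 < F b := by
    have h1 : (1 - c) / 2 ≤ b - c := by have := hb.1; linarith
    have hMpos : 0 < M := by
      apply div_pos (by linarith) (mul_pos hlam (by linarith))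
    have hv'b : M ≤ v' b := hbM
    have h2 : (0:ℝ) < (1-c)/2 := by linarith
    have hmm : M * ((1-c)/2) ≤ v' b * (b - c) :=
      mul_le_mul hbM h1 h2.le (hMpos.le.trans hbM)
    have : lam * M * ((1-c)/2) ≤ lam * v' b * (b - c) := by
      nlinarith
    simp only [hF]
    nlinarith [hvb.2, hvcm.1]
  have hFc : F c = -1 := by simp [hF]
  -- intermediate value theorem on [c,b]
  have hIcc : Icc c b ⊆ Ioo (0:ℝ) 1 := fun x hx => ⟨lt_of_lt_of_le hc0 hx.1, lt_of_le_of_lt hx.2 hbc.2⟩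
  have hIcc' : Icc c b ⊆ Icc (0:ℝ) 1 := fun x hx => ⟨hc0.le.trans hx.1, hx.2.trans hbc.2.le⟩
  have hFcont : ContinuousOn F (Icc c b) := by
    apply ContinuousOn.sub
    apply ContinuousOn.sub
    · exact (continuousOn_const.mul (hv'cont.mono hIcc)).mul
        (continuousOn_id.sub continuousOn_const)
    · exact continuousOn_const.mul ((hvc.mono hIcc').sub continuousOn_const)
    · exact continuousOn_const
  have hmem : (0:ℝ) ∈ Ioo (F c) (F b) := ⟨by rw [hFc]; linarith, hbF⟩
  obtain ⟨s, hs, hFs⟩ := intermediate_value_Ioo hbc.1.le hFcont hmem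
  have hsI : s ∈ Ioo c 1 := ⟨hs.1, hs.2.trans hbc.2⟩
  refine ⟨s, ⟨hsI, by simp only [hF] at hFs; linarith⟩, ?_⟩
  rintro t ⟨htI, hteq⟩
  have hFt : F t = 0 := by simp only [hF]; linarith
  have hFs0 : F s = 0 := hFs
  rcases lt_trichotomy t s with h | h | h
  · exact absurd (hmonoF t htI s hsI h) (by rw [hFt, hFs0]; simp)
  · exact h
  · exact absurd (hmonoF s hsI t htI h) (by rw [hFt, hFs0]; simp)
end

section
/- Let λ > 0 and c ∈ (0,1). Let v : [0,1] → [0,1] be continuous and strictly increasing with v(0) = 0 and v(1) = 1, continuously differentiable and strictly convex on (0,1), and with v'(s) → +∞ as s ↑ 1. Define the left-continuous function φ⁻(s) = λ v(s)/(1+λ) for 0 ≤ s ≤ c and φ⁻(s) = (1 + λ v(s))/(1+λ) for c < s ≤ 1, and let s* ∈ (c,1) be the unique point with λ v'(s*)(s* − c) = 1 + λ(v(s*) − v(c)). Then the convex envelope of φ⁻ on [0,1] is δ(s) = φ⁻(s) for 0 ≤ s ≤ c, δ(s) = λ v(c)/(1+λ) + (λ v'(s*)/(1+λ))(s − c) for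 c < s ≤ s*, and δ(s) = φ⁻(s) for s* < s ≤ 1. -/
open Set Filter
open scoped Classical

/-- `δ` is the convex envelope of `ψ` on the set `s`: the largest convex function
on `s` that is pointwise dominated by `ψ` on `s`. -/
def IsConvexEnvelopeOn (s : Set ℝ) (ψ δ : ℝ → ℝ) : Prop :=
  ConvexOn ℝ s δ ∧ (∀ t ∈ s, δ t ≤ ψ t) ∧
    ∀ g : ℝ → ℝ, ConvexOn ℝ s g → (∀ t ∈ s, g t ≤ ψ t) → ∀ t ∈ s, g t ≤ δ t


private lemma convexOn_affine {p q : ℝ} {s : Set ℝ} (hs : Convex ℝ s) :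
    ConvexOn ℝ s (fun x => p * x + q) := by
  refine ⟨hs, fun x _ y _ a b _ _ hab => le_of_eq ?_⟩
  simp only [smul_eq_mul]
  linear_combination (-q) * hab

private lemma glue_convexOn {a b d : ℝ} {f : ℝ → ℝ} (hab : a ≤ b) (hbd : b ≤ d)
    (h1 : ConvexOn ℝ (Set.Icc a b) f) (h2 : ConvexOn ℝ (Set.Icc b d) f)
    (hsl : ∀ x ∈ Set.Ico a b, ∀ z ∈ Set.Ioc b d,
      (f b - f x) / (b - x) ≤ (f z - f b) / (z - b)) :
    ConvexOn ℝ (Set.Icc a d) f := by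
  apply convexOn_of_slope_mono_adjacent (convex_Icc a d)
  intro x y z hx hz hxy hyz
  rcases le_or_gt z b with hzb | hbz
  · exact h1.slope_mono_adjacent ⟨hx.1, by linarith⟩ ⟨by linarith [hx.1], hzb⟩ hxy hyz
  rcases le_or_gt b x with hbx | hxb
  · exact h2.slope_mono_adjacent ⟨hbx, hx.2⟩ ⟨by linarith, hz.2⟩ hxy hyz
  -- x < b < z
  rcases lt_trichotomy y b with hyb | rfl | hby
  · have s1 : (f y - f x)/(y - x) ≤ (f b - f y)/(b - y) :=
      h1.slope_mono_adjacent ⟨hx.1, hxb.le⟩ ⟨hab, le_rfl⟩ hxy hyb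
    have s2 : (f b - f y)/(b - y) ≤ (f z - f b)/(z - b) :=
      hsl y ⟨by linarith [hx.1], hyb⟩ z ⟨hbz, hz.2⟩
    have hyb' : (0:ℝ) < b - y := by linarith
    have hzb' : (0:ℝ) < z - b := by linarith
    have hzy' : (0:ℝ) < z - y := by linarith
    have hyx' : (0:ℝ) < y - x := by linarith
    set A := (f y - f x)/(y - x) with hA
    have e1 : A * (b - y) ≤ f b - f y := by
      rw [← le_div_iff₀ hyb']; exact s1
    have e2 : A * (z - b) ≤ f z - f b := by
      rw [← le_div_iff₀ hzb']; exact s1.trans s2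
    rw [le_div_iff₀ hzy']
    nlinarith [e1, e2]
  · exact hsl x ⟨hx.1, hxb⟩ z ⟨hyz, hz.2⟩
  · have s2 : (f z - f y)/(z - y) ≥ (f y - f b)/(y - b) :=
      h2.slope_mono_adjacent ⟨le_rfl, hbd⟩ ⟨hbz.le, hz.2⟩ hby hyz
    have s1 : (f b - f x)/(b - x) ≤ (f y - f b)/(y - b) :=
      hsl x ⟨hx.1, hxb⟩ y ⟨hby, by linarith [hz.2]⟩
    have hby' : (0:ℝ) < y - b := by linarith
    have hbx' : (0:ℝ) < b - x := by linarith
    have hyx' : (0:ℝ) < y - x := by linarith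
    set B := (f z - f y)/(z - y) with hB
    have e0 : (f y - f b)/(y - b) ≤ B := s2
    have e1 : f y - f b ≤ B * (y - b) := by
      rw [← div_le_iff₀ hby']; exact e0
    have e2 : f b - f x ≤ B * (b - x) := by
      rw [← div_le_iff₀ hbx']; exact s1.trans e0
    rw [div_le_iff₀ hyx']
    nlinarith [e1, e2]

/-- the convex envelope of the (left-continuous) VaR distorted function
`φ⁻(s) = λ v(s)/(1+λ)` on `[0,c]`, `φ⁻(s) = (1 + λ v(s))/(1+λ)` on `(c,1]`, equals `φ⁻`
outside `(c, s*]` and the tangent line drawn from `(c, λv(c)/(1+λ))` with slope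
`λ v'(s*)/(1+λ)` on `(c, s*]`, where `s*` is the tangency point. -/
theorem VaR_convex_envelope
    (lam c sstar : ℝ) (hlam : 0 < lam) (hc : c ∈ Set.Ioo (0:ℝ) 1)
    (v v' : ℝ → ℝ)
    (hvc : ContinuousOn v (Set.Icc 0 1))
    (hvmono : StrictMonoOn v (Set.Icc 0 1))
    (hv0 : v 0 = 0) (hv1 : v 1 = 1)
    (hvmaps : Set.MapsTo v (Set.Icc 0 1) (Set.Icc 0 1))
    (hdiff : ∀ s ∈ Set.Ioo (0:ℝ) 1, HasDerivAt v (v' s) s)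
    (hv'cont : ContinuousOn v' (Set.Ioo 0 1))
    (hconv : StrictConvexOn ℝ (Set.Ioo 0 1) v)
    (hlim : Tendsto v' (nhdsWithin 1 (Set.Iio 1)) atTop)
    (hs : sstar ∈ Set.Ioo c 1)
    (heq : lam * v' sstar * (sstar - c) = 1 + lam * (v sstar - v c)) :
    IsConvexEnvelopeOn (Set.Icc 0 1)
      (fun s => if s ≤ c then lam * v s / (1 + lam) else (1 + lam * v s) / (1 + lam))
      (fun s => if s ≤ c then lam * v s / (1 + lam)
        else if s ≤ sstar then lam * v c / (1 + lam) + lam * v' sstar / (1 + lam) * (s - c)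
        else (1 + lam * v s) / (1 + lam)) := by
  obtain ⟨hc0, hc1⟩ := hc
  obtain ⟨hsc, hs1⟩ := hs
  have hs0 : (0:ℝ) < sstar := hc0.trans hsc
  have hP : (0:ℝ) < 1 + lam := by linarith
  have hmemc : c ∈ Set.Icc (0:ℝ) 1 := ⟨hc0.le, hc1.le⟩
  have hmems : sstar ∈ Set.Icc (0:ℝ) 1 := ⟨hs0.le, hs1.le⟩
  have hds : HasDerivAt v (v' sstar) sstar := hdiff sstar ⟨hs0, hs1⟩
  set δ : ℝ → ℝ := fun s => if s ≤ c then lam * v s / (1 + lam)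
        else if s ≤ sstar then lam * v c / (1 + lam) + lam * v' sstar / (1 + lam) * (s - c)
        else (1 + lam * v s) / (1 + lam) with hδ
  set ψ : ℝ → ℝ := fun s => if s ≤ c then lam * v s / (1 + lam)
        else (1 + lam * v s) / (1 + lam) with hψ
  -- evaluation lemmas
  have e1 : ∀ s, s ≤ c → δ s = lam * v s / (1 + lam) := fun s h => if_pos h
  have e2 : ∀ s, c < s → s ≤ sstar →
      δ s = lam * v c / (1 + lam) + lam * v' sstar / (1 + lam) * (s - c) := by
    intro s h h'
    simp only [hδ, if_neg (not_le.2 h), if_pos h']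
  have e3 : ∀ s, sstar < s → δ s = (1 + lam * v s) / (1 + lam) := by
    intro s h
    simp only [hδ, if_neg (not_le.2 (hsc.trans h)), if_neg (not_le.2 h)]
  -- v is convex on [0,1]
  have hVconv : ConvexOn ℝ (Set.Icc (0:ℝ) 1) v := by
    apply MonotoneOn.convexOn_of_deriv (convex_Icc 0 1) hvc
    · rw [interior_Icc]
      exact fun t ht => ((hdiff t ht).differentiableAt).differentiableWithinAt
    · rw [interior_Icc]
      exact hconv.convexOn.monotoneOn_deriv (fun t ht => (hdiff t ht).differentiableAt)
  -- slope facts around sstar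
  have fact1 : ∀ x ∈ Set.Icc (0:ℝ) 1, x < sstar → v sstar - v x ≤ v' sstar * (sstar - x) := by
    intro x hx h
    have h2 := hVconv.slope_le_of_hasDerivAt hx hmems h hds
    rw [slope_def_field] at h2
    have hpos : (0:ℝ) < sstar - x := by linarith
    have h3 : (v sstar - v x) / (sstar - x) ≤ v' sstar := by
      have : (v x - v sstar) / (x - sstar) = (v sstar - v x) / (sstar - x) := by
        rw [← neg_div_neg_eq]; ring_nf
      linarith [h2, this ▸ h2]
    calc v sstar - v x = (v sstar - v x) / (sstar - x) * (sstar - x) := by field_simp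
      _ ≤ v' sstar * (sstar - x) := by
          exact mul_le_mul_of_nonneg_right h3 hpos.le
  have fact2 : ∀ z ∈ Set.Icc (0:ℝ) 1, sstar < z → v' sstar * (z - sstar) ≤ v z - v sstar := by
    intro z hz h
    have h2 := hVconv.le_slope_of_hasDerivAt hmems hz h hds
    rw [slope_def_field] at h2
    have hpos : (0:ℝ) < z - sstar := by linarith
    have h3 : v' sstar ≤ (v z - v sstar) / (z - sstar) := by
      have : (v sstar - v z) / (sstar - z) = (v z - v sstar) / (z - sstar) := by
        rw [← neg_div_neg_eq]; ring_nf
      linarith [this ▸ h2]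
    calc v' sstar * (z - sstar) ≤ (v z - v sstar) / (z - sstar) * (z - sstar) :=
          mul_le_mul_of_nonneg_right h3 hpos.le
      _ = v z - v sstar := by field_simp
  have fact3 : ∀ x ∈ Set.Icc (0:ℝ) 1, x < c → v c - v x ≤ v' sstar * (c - x) := by
    intro x hx h
    have hsl := hVconv.slope_mono_adjacent hx hmems h hsc
    have h1 : v sstar - v c ≤ v' sstar * (sstar - c) := fact1 c hmemc hsc
    have hp1 : (0:ℝ) < c - x := by linarith
    have hp2 : (0:ℝ) < sstar - c := by linarith
    have h2 : (v sstar - v c) / (sstar - c) ≤ v' sstar := by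
      rw [div_le_iff₀ hp2]; linarith
    have h3 : (v c - v x) / (c - x) ≤ v' sstar := le_trans hsl h2
    rw [div_le_iff₀ hp1] at h3; linarith
  -- piece convexities
  have baseA : ConvexOn ℝ (Set.Icc (0:ℝ) 1) (fun s => lam * v s / (1 + lam)) := by
    have := hVconv.smul (c := lam / (1 + lam)) (by positivity)
    refine this.congr fun s _ => ?_
    simp only [Pi.smul_apply, smul_eq_mul]; ring
  have baseC : ConvexOn ℝ (Set.Icc (0:ℝ) 1) (fun s => (1 + lam * v s) / (1 + lam)) := by
    have := baseA.add (convexOn_const (1 / (1 + lam)) (convex_Icc 0 1))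
    refine this.congr fun s _ => ?_
    simp only [Pi.add_apply]; ring
  have pieceA : ConvexOn ℝ (Set.Icc 0 c) δ := by
    refine (baseA.subset (Set.Icc_subset_Icc le_rfl hc1.le) (convex_Icc 0 c)).congr
      fun s hsm => (e1 s hsm.2).symm
  have pieceB : ConvexOn ℝ (Set.Icc c sstar) δ := by
    refine (convexOn_affine (p := lam * v' sstar / (1 + lam))
      (q := lam * v c / (1 + lam) - lam * v' sstar / (1 + lam) * c)
      (convex_Icc c sstar)).congr fun s hsm => ?_
    rcases eq_or_lt_of_le hsm.1 with rfl | hlt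
    · rw [e1 c le_rfl]; ring
    · rw [e2 s hlt hsm.2]; ring
  have pieceC : ConvexOn ℝ (Set.Icc sstar 1) δ := by
    refine (baseC.subset (Set.Icc_subset_Icc hs0.le le_rfl) (convex_Icc sstar 1)).congr
      fun s hsm => ?_
    rcases eq_or_lt_of_le hsm.1 with rfl | hlt
    · rw [e2 sstar hsc le_rfl]
      field_simp
      linear_combination -heq
    · exact (e3 s hlt).symm
  -- glue at sstar
  have convC1 : ConvexOn ℝ (Set.Icc c 1) δ := by
    apply glue_convexOn hsc.le hs1.le pieceB pieceC
    intro x hx z hz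
    have hδx : δ x = lam * v c / (1 + lam) + lam * v' sstar / (1 + lam) * (x - c) := by
      rcases eq_or_lt_of_le hx.1 with rfl | hlt
      · rw [e1 c le_rfl]; ring
      · exact e2 x hlt hx.2.le
    have hδs : δ sstar = lam * v c / (1 + lam) + lam * v' sstar / (1 + lam) * (sstar - c) :=
      e2 sstar hsc le_rfl
    have hδz : δ z = (1 + lam * v z) / (1 + lam) := e3 z hz.1
    have key := fact2 z ⟨hs0.le.trans hz.1.le, hz.2⟩ hz.1
    have hδseq : δ sstar = (1 + lam * v sstar) / (1 + lam) := by
      rw [hδs]; field_simp; linear_combination heq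
    rw [hδx, hδs, hδz]
    rw [div_le_div_iff₀ (by linarith [hx.2] : (0:ℝ) < sstar - x) (by linarith [hz.1] : (0:ℝ) < z - sstar)]
    have hz' : (0:ℝ) < z - sstar := by linarith [hz.1]
    have hx' : (0:ℝ) < sstar - x := by linarith [hx.2]
    have expand : ((1 + lam * v z) / (1 + lam) -
        (lam * v c / (1 + lam) + lam * v' sstar / (1 + lam) * (sstar - c)))
        = lam * (v z - v sstar) / (1 + lam) := by
      field_simp; linear_combination -heq
    rw [expand]
    have hinv : (0:ℝ) ≤ (1 + lam)⁻¹ := by positivity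
    have h1 : lam * v' sstar / (1 + lam) * (z - sstar) ≤ lam * (v z - v sstar) / (1 + lam) := by
      have key2 : lam * (v' sstar * (z - sstar)) ≤ lam * (v z - v sstar) :=
        mul_le_mul_of_nonneg_left key hlam.le
      have := mul_le_mul_of_nonneg_right key2 hinv
      rw [div_mul_eq_mul_div, div_eq_mul_inv, div_eq_mul_inv]
      nlinarith [this]
    calc (lam * v c / (1 + lam) + lam * v' sstar / (1 + lam) * (sstar - c) -
          (lam * v c / (1 + lam) + lam * v' sstar / (1 + lam) * (x - c))) * (z - sstar)
        = lam * v' sstar / (1 + lam) * (z - sstar) * (sstar - x) := by ring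
      _ ≤ lam * (v z - v sstar) / (1 + lam) * (sstar - x) :=
          mul_le_mul_of_nonneg_right h1 hx'.le
  -- glue at c
  have convFull : ConvexOn ℝ (Set.Icc (0:ℝ) 1) δ := by
    apply glue_convexOn hc0.le hc1.le pieceA convC1
    intro x hx z hz
    have hδx : δ x = lam * v x / (1 + lam) := e1 x hx.2.le
    have hδc : δ c = lam * v c / (1 + lam) := e1 c le_rfl
    have hp1 : (0:ℝ) < c - x := by linarith [hx.2]
    have hp2 : (0:ℝ) < z - c := by linarith [hz.1]
    have key := fact3 x ⟨hx.1, hx.2.le.trans hc1.le⟩ hx.2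
    have hinv : (0:ℝ) ≤ (1 + lam)⁻¹ := by positivity
    have lhs_le : (δ c - δ x) / (c - x) ≤ lam * v' sstar / (1 + lam) := by
      rw [hδx, hδc, div_le_iff₀ hp1]
      have key2 : lam * (v c - v x) ≤ lam * (v' sstar * (c - x)) :=
        mul_le_mul_of_nonneg_left key hlam.le
      have h5 := mul_le_mul_of_nonneg_right key2 hinv
      simp only [div_eq_mul_inv]
      nlinarith [h5]
    have rhs_ge : lam * v' sstar / (1 + lam) ≤ (δ z - δ c) / (z - c) := by
      rcases le_or_gt z sstar with hzs | hzs
      · rw [e2 z hz.1 hzs, hδc, le_div_iff₀ hp2]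
        exact le_of_eq (by ring)
      · have step : (δ sstar - δ c) / (sstar - c) ≤ (δ z - δ c) / (z - c) := by
          have := convC1.secant_mono (a := c) (x := sstar) (y := z)
            ⟨le_rfl, hc1.le⟩ ⟨hsc.le, hs1.le⟩ ⟨hz.1.le, hz.2⟩
            (ne_of_gt hsc) (ne_of_gt hz.1) hzs.le
          exact this
        have base : lam * v' sstar / (1 + lam) = (δ sstar - δ c) / (sstar - c) := by
          rw [e2 sstar hsc le_rfl, hδc, eq_div_iff (sub_ne_zero.2 hsc.ne')]
          ring
        rw [base]; exact step
    exact lhs_le.trans rhs_ge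
  refine ⟨convFull, ?_, ?_⟩
  · -- minorant
    intro t ht
    rcases le_or_gt t c with htc | htc
    · rw [show δ t = lam * v t / (1 + lam) from if_pos htc,
        show ψ t = lam * v t / (1 + lam) from if_pos htc]
    rcases le_or_gt t sstar with hts | hts
    · rw [e2 t htc hts, show ψ t = (1 + lam * v t) / (1 + lam) from if_neg (not_le.2 htc)]
      have key : v sstar - v t ≤ v' sstar * (sstar - t) := by
        rcases eq_or_lt_of_le hts with rfl | hlt
        · simp
        · exact fact1 t ht hlt
      have h' : lam * v c + lam * v' sstar * (t - c) ≤ 1 + lam * v t := by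
        nlinarith [mul_le_mul_of_nonneg_left key hlam.le]
      rw [show lam * v c / (1 + lam) + lam * v' sstar / (1 + lam) * (t - c)
        = (lam * v c + lam * v' sstar * (t - c)) / (1 + lam) from by ring]
      gcongr
    · rw [e3 t hts, show ψ t = (1 + lam * v t) / (1 + lam) from if_neg (not_le.2 htc)]
  · -- maximality
    intro g hg hgle t ht
    rcases le_or_gt t c with htc | htc
    · rw [show δ t = lam * v t / (1 + lam) from if_pos htc]
      have := hgle t ht
      rwa [show ψ t = lam * v t / (1 + lam) from if_pos htc] at this
    rcases le_or_gt t sstar with hts | hts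
    · rw [e2 t htc hts]
      set a := (sstar - t) / (sstar - c) with ha
      set b := (t - c) / (sstar - c) with hb
      have hp : (0:ℝ) < sstar - c := by linarith
      have ha0 : 0 ≤ a := by apply div_nonneg <;> linarith
      have hb0 : 0 ≤ b := by apply div_nonneg <;> linarith
      have hab : a + b = 1 := by
        rw [ha, hb, ← add_div]
        rw [show sstar - t + (t - c) = sstar - c from by ring]
        exact div_self (by linarith : sstar - c ≠ 0)
      have hcomb : a • c + b • sstar = t := by
        simp only [smul_eq_mul, ha, hb]; field_simp; ring
      have hgc := hgle c hmemc
      rw [show ψ c = lam * v c / (1 + lam) from if_pos le_rfl] at hgc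
      have hgs := hgle sstar hmems
      rw [show ψ sstar = (1 + lam * v sstar) / (1 + lam) from if_neg (not_le.2 hsc)] at hgs
      have h2 := hg.2 hmemc hmems ha0 hb0 hab
      rw [hcomb] at h2
      have h3 : a • g c + b • g sstar ≤
          a * (lam * v c / (1 + lam)) + b * ((1 + lam * v sstar) / (1 + lam)) := by
        simp only [smul_eq_mul]
        exact add_le_add (mul_le_mul_of_nonneg_left hgc ha0) (mul_le_mul_of_nonneg_left hgs hb0)
      have hY : (1 + lam * v sstar) / (1 + lam)
          = lam * v c / (1 + lam) + lam * v' sstar / (1 + lam) * (sstar - c) := by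
        field_simp
        linear_combination -heq
      have hbs : b * (sstar - c) = t - c := by
        rw [hb, div_mul_eq_mul_div, mul_div_assoc,
          div_self (by linarith : sstar - c ≠ 0), mul_one]
      have h4 : a * (lam * v c / (1 + lam)) + b * ((1 + lam * v sstar) / (1 + lam))
          = lam * v c / (1 + lam) + lam * v' sstar / (1 + lam) * (t - c) := by
        calc a * (lam * v c / (1 + lam)) + b * ((1 + lam * v sstar) / (1 + lam))
            = (a + b) * (lam * v c / (1 + lam))
              + lam * v' sstar / (1 + lam) * (b * (sstar - c)) := by rw [hY]; ring
          _ = lam * v c / (1 + lam) + lam * v' sstar / (1 + lam) * (t - c) := by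
              rw [hab, hbs, one_mul]
      linarith [h2.trans h3, h4.le, h4.ge]
    · rw [e3 t hts]
      have := hgle t ht
      rwa [show ψ t = (1 + lam * v t) / (1 + lam) from if_neg (not_le.2 htc)] at this
end

section
/- Let α ∈ (0,1) and c ∈ (0,1). Let v : [0,1] → [0,1] be continuous and strictly increasing with v(0) = 0, v(1) = 1 and v(c) = α, continuously differentiable and strictly convex on (0,1), and with v'(s) → 0 as s ↓ 0. Define φ(s) = v(s)/α for 0 ≤ s ≤ c and φ(s) = 1 for c < s ≤ 1. Then there exists a unique t₀ ∈ (0, c) such that v'(t₀)/α = (1 − v(t₀)/α)/(1 − t₀), and the convex envelope of φ on [0,1] is δ(s) = v(s)/α for 0 ≤ s ≤ t₀ and δ(s) = v(t₀)/α + (v'(t₀)/α)(s − t₀) for t₀ < s ≤ 1. -/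
open Set Filter
open scoped Classical

set_option maxHeartbeats 1000000 in
/-- for the min-ES distorted function `φ(s) = v(s)/α` on `[0,c]`, `1` on
`(c,1]`, there is a unique tangency point `t₀ ∈ (0,c)` with
`v'(t₀)/α = (1 − v(t₀)/α)/(1 − t₀)`, and the convex envelope of `φ` on `[0,1]` equals
`v(s)/α` on `[0,t₀]` and the tangent line `v(t₀)/α + (v'(t₀)/α)(s − t₀)` on `(t₀,1]`. -/
theorem ES_minrisk_convex_envelope
    (α c : ℝ) (hα : α ∈ Set.Ioo (0:ℝ) 1) (hc : c ∈ Set.Ioo (0:ℝ) 1)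
    (v v' : ℝ → ℝ)
    (hvc : ContinuousOn v (Set.Icc 0 1))
    (hvmono : StrictMonoOn v (Set.Icc 0 1))
    (hv0 : v 0 = 0) (hv1 : v 1 = 1) (hvcα : v c = α)
    (hvmaps : Set.MapsTo v (Set.Icc 0 1) (Set.Icc 0 1))
    (hdiff : ∀ s ∈ Set.Ioo (0:ℝ) 1, HasDerivAt v (v' s) s)
    (hv'cont : ContinuousOn v' (Set.Ioo 0 1))
    (hconv : StrictConvexOn ℝ (Set.Ioo 0 1) v)
    (hlim0 : Tendsto v' (nhdsWithin 0 (Set.Ioi 0)) (nhds 0)) :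
    (∃! t : ℝ, t ∈ Set.Ioo 0 c ∧ v' t / α = (1 - v t / α) / (1 - t)) ∧
      ∀ t : ℝ, t ∈ Set.Ioo 0 c → v' t / α = (1 - v t / α) / (1 - t) →
        IsConvexEnvelopeOn (Set.Icc 0 1)
          (fun s => if s ≤ c then v s / α else 1)
          (fun s => if s ≤ t then v s / α else v t / α + v' t / α * (s - t)) := by
  obtain ⟨hα0, hα1⟩ := hα
  obtain ⟨hc0, hc1⟩ := hc
  have hIccsub : Set.Ioo (0:ℝ) 1 ⊆ Set.Icc 0 1 := Set.Ioo_subset_Icc_self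
  have hcv : ConvexOn ℝ (Set.Ioo 0 1) v := hconv.convexOn
  -- `v` tends to `0` from the right at `0`
  have hvy0 : Tendsto v (nhdsWithin 0 (Set.Ioi 0)) (nhds 0) := by
    have h1 : Set.Ioo (0:ℝ) 1 ∈ nhdsWithin (0:ℝ) (Set.Ioi 0) :=
      Ioo_mem_nhdsGT_of_mem ⟨le_rfl, zero_lt_one⟩
    rw [nhdsWithin_restrict'' _ h1]
    have h2 : ContinuousWithinAt v (Set.Icc 0 1) 0 := hvc 0 ⟨le_rfl, zero_le_one⟩
    have h3 := h2.tendsto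
    rw [hv0] at h3
    exact h3.mono_left (nhdsWithin_mono _ (fun x hx => hIccsub hx.2))
  -- key limiting slope inequality at 0 : `v y ≤ v' y * y`
  have hB : ∀ y ∈ Set.Ioo (0:ℝ) 1, v y ≤ v' y * y := by
    rintro y ⟨hy0, hy1⟩
    have hmem : Set.Ioo (0:ℝ) y ∈ nhdsWithin (0:ℝ) (Set.Ioi 0) :=
      Ioo_mem_nhdsGT_of_mem ⟨le_rfl, hy0⟩
    have hf : Tendsto (fun x => v y - v x) (nhdsWithin 0 (Set.Ioi 0)) (nhds (v y - 0)) :=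
      tendsto_const_nhds.sub hvy0
    have hg : Tendsto (fun x => v' y * (y - x)) (nhdsWithin 0 (Set.Ioi 0))
        (nhds (v' y * (y - 0))) := by
      apply Tendsto.mono_left _ nhdsWithin_le_nhds
      exact tendsto_const_nhds.mul (tendsto_const_nhds.sub tendsto_id)
    have hle : ∀ᶠ x in nhdsWithin (0:ℝ) (Set.Ioi 0), v y - v x ≤ v' y * (y - x) := by
      filter_upwards [hmem] with x hx
      have hx01 : x ∈ Set.Ioo (0:ℝ) 1 := ⟨hx.1, hx.2.trans hy1⟩
      have hsl := hcv.slope_le_of_hasDerivAt hx01 ⟨hy0, hy1⟩ hx.2 (hdiff y ⟨hy0, hy1⟩)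
      rw [slope_def_field] at hsl
      have hxy : (0:ℝ) < y - x := by linarith [hx.2]
      have := mul_le_mul_of_nonneg_right hsl hxy.le
      rwa [div_mul_cancel₀ _ hxy.ne'] at this
    have := le_of_tendsto_of_tendsto hf hg hle
    simpa using this
  -- slope below right derivative, including left endpoint 0
  have hK1 : ∀ x, 0 ≤ x → ∀ y ∈ Set.Ioo (0:ℝ) 1, x < y → v y - v x ≤ v' y * (y - x) := by
    intro x hx0 y hy hxy
    rcases eq_or_lt_of_le hx0 with rfl | hx0'
    · rw [hv0, sub_zero, sub_zero]; exact hB y hy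
    · have hx01 : x ∈ Set.Ioo (0:ℝ) 1 := ⟨hx0', hxy.trans hy.2⟩
      have hsl := hcv.slope_le_of_hasDerivAt hx01 hy hxy (hdiff y hy)
      rw [slope_def_field] at hsl
      have hxy' : (0:ℝ) < y - x := by linarith
      have := mul_le_mul_of_nonneg_right hsl hxy'.le
      rwa [div_mul_cancel₀ _ hxy'.ne'] at this
  -- left derivative below slope (interior)
  have hK2 : ∀ x ∈ Set.Ioo (0:ℝ) 1, ∀ y ∈ Set.Ioo (0:ℝ) 1, x < y →
      v' x * (y - x) ≤ v y - v x := by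
    intro x hx y hy hxy
    have hsl := hcv.le_slope_of_hasDerivAt hx hy hxy (hdiff x hx)
    rw [slope_def_field] at hsl
    have hxy' : (0:ℝ) < y - x := by linarith
    have := mul_le_mul_of_nonneg_right hsl hxy'.le
    rwa [div_mul_cancel₀ _ hxy'.ne'] at this
  -- strict version
  have hK2s : ∀ x ∈ Set.Ioo (0:ℝ) 1, ∀ y ∈ Set.Ioo (0:ℝ) 1, x < y →
      v' x * (y - x) < v y - v x := by
    intro x hx y hy hxy
    have hsl := hconv.lt_slope_of_hasDerivAt hx hy hxy (hdiff x hx)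
    rw [slope_def_field] at hsl
    have hxy' : (0:ℝ) < y - x := by linarith
    have := mul_lt_mul_of_pos_right hsl hxy'
    rwa [div_mul_cancel₀ _ hxy'.ne'] at this
  -- monotonicity of v'
  have hK3 : ∀ x ∈ Set.Ioo (0:ℝ) 1, ∀ y ∈ Set.Ioo (0:ℝ) 1, x ≤ y → v' x ≤ v' y := by
    intro x hx y hy hxy
    rcases eq_or_lt_of_le hxy with rfl | hxy'
    · exact le_rfl
    · exact (hcv.le_slope_of_hasDerivAt hx hy hxy' (hdiff x hx)).trans
        (hcv.slope_le_of_hasDerivAt hx hy hxy' (hdiff y hy))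
  -- the tangency equation is equivalent to `v' t * (1 - t) + v t = α`
  have hiff : ∀ t : ℝ, t ∈ Set.Ioo 0 c →
      (v' t / α = (1 - v t / α) / (1 - t) ↔ v' t * (1 - t) + v t = α) := by
    intro t ht
    have h1t : (0:ℝ) < 1 - t := by linarith [ht.2]
    rw [div_eq_div_iff hα0.ne' h1t.ne']
    constructor
    · intro h
      have he : (1 - v t / α) * α = α - v t := by field_simp
      linarith [h, he]
    · intro h
      have he : (1 - v t / α) * α = α - v t := by field_simp
      linarith [h, he]
  -- strict monotonicity of F t = v' t * (1 - t) + v t on (0,1)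
  have hFmono : ∀ a ∈ Set.Ioo (0:ℝ) 1, ∀ b ∈ Set.Ioo (0:ℝ) 1, a < b →
      v' a * (1 - a) + v a < v' b * (1 - b) + v b := by
    intro a ha b hb hab
    have h1 := hK2s a ha b hb hab
    have h2 := hK3 a ha b hb hab.le
    have h3 : (v' b - v' a) * (1 - b) ≥ 0 :=
      mul_nonneg (by linarith) (by linarith [hb.2])
    nlinarith
  -- v' c > 0
  have hv'c : 0 < v' c := by
    have hhalf : c / 2 ∈ Set.Ioo (0:ℝ) 1 := ⟨by linarith, by linarith⟩
    have hs := hconv.slope_lt_of_hasDerivAt hhalf ⟨hc0, hc1⟩ (by linarith)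
      (hdiff c ⟨hc0, hc1⟩)
    rw [slope_def_field] at hs
    have hv : v (c / 2) < v c :=
      hvmono ⟨by linarith, by linarith⟩ ⟨hc0.le, hc1.le⟩ (by linarith)
    have : (0:ℝ) < (v c - v (c / 2)) / (c - c / 2) := div_pos (by linarith) (by linarith)
    linarith
  -- F tends to 0 at 0+
  have hFt : Tendsto (fun s => v' s * (1 - s) + v s) (nhdsWithin 0 (Set.Ioi 0)) (nhds 0) := by
    have h1 : Tendsto (fun s : ℝ => (1:ℝ) - s) (nhdsWithin (0:ℝ) (Set.Ioi 0)) (nhds 1) := by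
      apply Tendsto.mono_left _ nhdsWithin_le_nhds
      have : Tendsto (fun s : ℝ => (1:ℝ) - s) (nhds 0) (nhds (1 - 0)) :=
        tendsto_const_nhds.sub tendsto_id
      simpa using this
    have := (hlim0.mul h1).add hvy0
    simpa using this
  -- existence of the tangency point
  have hev2 : ∀ᶠ s in nhdsWithin (0:ℝ) (Set.Ioi 0), s ∈ Set.Ioo (0:ℝ) c :=
    Ioo_mem_nhdsGT_of_mem ⟨le_rfl, hc0⟩
  obtain ⟨ε, hεlt, hεmem⟩ := ((hFt.eventually_lt_const hα0).and hev2).exists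
  have hFc : α < v' c * (1 - c) + v c := by
    rw [hvcα]; nlinarith [hv'c]
  have hsub : Set.Icc ε c ⊆ Set.Ioo (0:ℝ) 1 := fun x hx =>
    ⟨lt_of_lt_of_le hεmem.1 hx.1, lt_of_le_of_lt hx.2 hc1⟩
  have hFcont : ContinuousOn (fun s => v' s * (1 - s) + v s) (Set.Icc ε c) := by
    apply ContinuousOn.add
    · exact (hv'cont.mono hsub).mul (continuousOn_const.sub continuousOn_id)
    · exact hvc.mono fun x hx => hIccsub (hsub hx)
  obtain ⟨t₀, ht₀mem, hFt₀⟩ :=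
    intermediate_value_Ioo (le_of_lt hεmem.2) hFcont (⟨hεlt, hFc⟩ : α ∈ Set.Ioo _ _)
  dsimp only at hFt₀
  have ht₀ : t₀ ∈ Set.Ioo 0 c := ⟨hεmem.1.trans ht₀mem.1, ht₀mem.2⟩
  have hIoocsub : Set.Ioo (0:ℝ) c ⊆ Set.Ioo 0 1 := fun x hx => ⟨hx.1, hx.2.trans hc1⟩
  constructor
  · refine ⟨t₀, ⟨ht₀, (hiff t₀ ht₀).mpr hFt₀⟩, ?_⟩
    rintro y ⟨hy, hyeq⟩
    have hyF : v' y * (1 - y) + v y = α := (hiff y hy).mp hyeq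
    rcases lt_trichotomy y t₀ with h | h | h
    · exfalso
      have := hFmono y (hIoocsub hy) t₀ (hIoocsub ht₀) h
      rw [hyF, hFt₀] at this; exact lt_irrefl _ this
    · exact h
    · exfalso
      have := hFmono t₀ (hIoocsub ht₀) y (hIoocsub hy) h
      rw [hyF, hFt₀] at this; exact lt_irrefl _ this
  -- the envelope statement
  intro t ht hteq
  have ht01 : t ∈ Set.Ioo (0:ℝ) 1 := hIoocsub ht
  have ht1 : t < 1 := ht01.2
  have heqF : v' t * (1 - t) + v t = α := (hiff t ht).mp hteq
  have heq : v' t * (1 - t) = α - v t := by linarith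
  have hvtα : v t < α := by
    have := hvmono (⟨ht.1.le, ht1.le⟩ : t ∈ Set.Icc (0:ℝ) 1) ⟨hc0.le, hc1.le⟩ ht.2
    rwa [hvcα] at this
  have hm : 0 < v' t := by nlinarith [heq]
  -- tangent line below curve on [0,1]
  have tb : ∀ s ∈ Set.Icc (0:ℝ) 1, v t + v' t * (s - t) ≤ v s := by
    rintro s ⟨hs0, hs1⟩
    rcases lt_trichotomy s t with h | h | h
    · have := hK1 s hs0 t ht01 h
      nlinarith
    · rw [h]; simp
    · rcases eq_or_lt_of_le hs1 with rfl | hs1'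
      · rw [hv1]; linarith
      · have := hK2 t ht01 s ⟨lt_trans ht.1 h, hs1'⟩ h
        linarith
  -- chord slope bounded by v' t on [0,t]
  have hP3 : ∀ x y : ℝ, 0 ≤ x → x ≤ y → y ≤ t → v y - v x ≤ v' t * (y - x) := by
    intro x y hx0 hxy hyt
    rcases eq_or_lt_of_le hxy with rfl | hxy'
    · simp
    · have hy01 : y ∈ Set.Ioo (0:ℝ) 1 := ⟨lt_of_le_of_lt hx0 hxy', lt_of_le_of_lt hyt ht1⟩
      have h1 := hK1 x hx0 y hy01 hxy'
      have h2 : v' y ≤ v' t := by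
        rcases eq_or_lt_of_le hyt with rfl | hyt'
        · exact le_rfl
        · exact hK3 y hy01 t ht01 hyt'.le
      nlinarith [sub_pos.mpr hxy']
  -- slope monotonicity of v on [0,t] (including 0)
  have hP2 : ∀ x y z : ℝ, 0 ≤ x → x < y → y < z → z < 1 →
      (v y - v x) * (z - y) ≤ (v z - v y) * (y - x) := by
    intro x y z hx0 hxy hyz hz1
    have hy01 : y ∈ Set.Ioo (0:ℝ) 1 := ⟨lt_of_le_of_lt hx0 hxy, hyz.trans hz1⟩
    have hz01 : z ∈ Set.Ioo (0:ℝ) 1 := ⟨hy01.1.trans hyz, hz1⟩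
    have h1 := hK1 x hx0 y hy01 hxy
    have h2 := hK2 y hy01 z hz01 hyz
    nlinarith [sub_pos.mpr hxy, sub_pos.mpr hyz]
  -- convexity of the unscaled envelope
  have hδ0conv : ConvexOn ℝ (Set.Icc (0:ℝ) 1)
      (fun s => if s ≤ t then v s else v t + v' t * (s - t)) := by
    refine convexOn_of_slope_mono_adjacent (convex_Icc 0 1) ?_
    intro x y z hx hz hxy hyz
    rw [div_le_div_iff₀ (by linarith) (by linarith)]
    by_cases hzt : z ≤ t
    · have hyt : y ≤ t := hyz.le.trans hzt
      have hxt : x ≤ t := hxy.le.trans hyt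
      rw [if_pos hzt, if_pos hyt, if_pos hxt]
      exact hP2 x y z hx.1 hxy hyz (lt_of_le_of_lt hzt ht1)
    · push_neg at hzt
      rw [if_neg (not_le.mpr hzt)]
      by_cases hyt : y ≤ t
      · have hxt : x ≤ t := hxy.le.trans hyt
        rw [if_pos hyt, if_pos hxt]
        have A1 : (v y - v x) * (t - y) ≤ (v t - v y) * (y - x) := by
          rcases lt_or_eq_of_le hyt with h | h
          · exact hP2 x y t hx.1 hxy h ht1
          · rw [h]; simp
        have A2 : v y - v x ≤ v' t * (y - x) := hP3 x y hx.1 hxy.le hyt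
        have A2' : (v y - v x) * (z - t) ≤ v' t * (y - x) * (z - t) :=
          mul_le_mul_of_nonneg_right A2 (by linarith)
        nlinarith
      · push_neg at hyt
        rw [if_neg (not_le.mpr hyt)]
        by_cases hxt : x ≤ t
        · rw [if_pos hxt]
          have A3 : v t - v x ≤ v' t * (t - x) := hP3 x t hx.1 hxt le_rfl
          have A3' : v t + v' t * (y - t) - v x ≤ v' t * (y - x) := by nlinarith
          have := mul_le_mul_of_nonneg_right A3' (by linarith : (0:ℝ) ≤ z - y)
          nlinarith
        · rw [if_neg hxt]
          nlinarith [sub_pos.mpr hxy, sub_pos.mpr hyz]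
  -- scaled convexity
  have hδconv : ConvexOn ℝ (Set.Icc (0:ℝ) 1)
      (fun s => if s ≤ t then v s / α else v t / α + v' t / α * (s - t)) := by
    have h := hδ0conv.smul (le_of_lt (inv_pos.mpr hα0))
    have hfun : (fun s => if s ≤ t then v s / α else v t / α + v' t / α * (s - t)) =
        fun s => α⁻¹ * (if s ≤ t then v s else v t + v' t * (s - t)) := by
      funext s
      by_cases hs : s ≤ t
      · rw [if_pos hs, if_pos hs, inv_mul_eq_div]
      · rw [if_neg hs, if_neg hs]; ring
    rw [hfun]
    simpa [Pi.smul_def, smul_eq_mul] using h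
  refine ⟨hδconv, ?_, ?_⟩
  · -- envelope below φ
    rintro s ⟨hs0, hs1⟩
    dsimp only
    by_cases hst : s ≤ t
    · rw [if_pos hst, if_pos (hst.trans ht.2.le)]
    · rw [if_neg hst]
      push_neg at hst
      have hcomb : v t / α + v' t / α * (s - t) = (v t + v' t * (s - t)) / α := by ring
      by_cases hsc : s ≤ c
      · rw [if_pos hsc, hcomb]
        have := tb s ⟨hs0, hs1⟩
        gcongr
      · rw [if_neg hsc, hcomb, div_le_one hα0]
        have h1 : v' t * (s - t) ≤ v' t * (1 - t) :=
          mul_le_mul_of_nonneg_left (by linarith) hm.le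
        linarith
  · -- maximality
    intro g hg hgle s hs
    dsimp only
    by_cases hst : s ≤ t
    · rw [if_pos hst]
      have h := hgle s hs
      dsimp only at h
      rwa [if_pos (hst.trans ht.2.le)] at h
    · rw [if_neg hst]
      push_neg at hst
      have h1t : (0:ℝ) < 1 - t := by linarith
      set a := (1 - s) / (1 - t) with ha_def
      set b := (s - t) / (1 - t) with hb_def
      have ha : 0 ≤ a := div_nonneg (by linarith [hs.2]) h1t.le
      have hb : 0 ≤ b := div_nonneg (by linarith) h1t.le
      have hab : a + b = 1 := by
        rw [ha_def, hb_def, ← add_div, div_eq_one_iff_eq h1t.ne']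
        ring
      have htIcc : t ∈ Set.Icc (0:ℝ) 1 := ⟨ht.1.le, ht1.le⟩
      have h1Icc : (1:ℝ) ∈ Set.Icc (0:ℝ) 1 := ⟨zero_le_one, le_rfl⟩
      have hcomb := hg.2 htIcc h1Icc ha hb hab
      simp only [smul_eq_mul] at hcomb
      have hpt : a * t + b * 1 = s := by
        rw [ha_def, hb_def]; field_simp; ring
      rw [hpt] at hcomb
      have hg1 : g 1 ≤ 1 := by
        have h := hgle 1 ⟨zero_le_one, le_rfl⟩
        dsimp only at h
        rwa [if_neg (by linarith : ¬ (1:ℝ) ≤ c)] at h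
      have hgt : g t ≤ v t / α := by
        have h := hgle t htIcc
        dsimp only at h
        rwa [if_pos ht.2.le] at h
      have h2 : g s ≤ a * (v t / α) + b * 1 := by
        calc g s ≤ a * g t + b * g 1 := hcomb
          _ ≤ a * (v t / α) + b * 1 :=
            add_le_add (mul_le_mul_of_nonneg_left hgt ha) (mul_le_mul_of_nonneg_left hg1 hb)
      have hfin : a * (v t / α) + b * 1 = v t / α + v' t / α * (s - t) := by
        rw [ha_def, hb_def]
        field_simp
        linear_combination (-(s - t)) * heq
      linarith [h2, hfin.symm.le, hfin.le]
end

section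
/- Let α ∈ (0,1) and x > 0. Set ξ_α = G_ξ(1 − α), X̲ = x / E[ξ · 1_{ξ ≤ ξ_α}] (equivalently X̲ = (x/E[ξ]) · 1/(1 − w(α))), and let X* = X̲ · 1_{ξ ≤ ξ_α}. Then: (i) E[ξ X*] = x; (ii) G_{X*}(α) = X̲, and for every nonnegative random variable X with E[ξ X] ≤ x one has G_X(α) ≤ X̲; consequently X* minimizes VaR_α(R) = −(1/T) ln(G_X(α)/x) over the budget set, with minimal value −(1/T) ln(X̲/x); and (iii) P(X* = 0) = α > 0, so the expected log-return of X* equals −∞. -/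
open MeasureTheory ProbabilityTheory Set Filter
open scoped ENNReal NNReal Classical

noncomputable section

/-- Expected log-return `E[(1/T) ln(X/x)]`, with the convention (`ln 0 = -∞`) that it is `-∞`
whenever `X = 0` with positive probability. -/
def expLogRet {Ω : Type*} [MeasurableSpace Ω] (μ : Measure Ω) (T x : ℝ) (X : Ω → ℝ) : EReal :=
  if 0 < μ {ω | X ω = 0} then ⊥
  else expER μ (fun ω => (1 / T) * Real.log (X ω / x))

/-- The distorted identity `w(s) = (1/E[ξ]) ∫_0^s G_ξ(1-z) dz`. -/
def wDist {Ω : Type*} [MeasurableSpace Ω] (μ : Measure Ω) (ξ : Ω → ℝ) (s : ℝ) : ℝ :=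
  (∫ z in (0:ℝ)..s, qf μ ξ (1 - z)) / (∫ ω, ξ ω ∂μ)

/-! ### Auxiliary lemmas on the Gaussian CDF -/

/-- Gaussian CDF. -/
def gPhi (m₀ : ℝ) (v : ℝ≥0) (t : ℝ) : ℝ := ((gaussianReal m₀ v) (Iic t)).toReal

lemma gPhi_mono (m₀ : ℝ) (v : ℝ≥0) : Monotone (gPhi m₀ v) := fun a b hab =>
  ENNReal.toReal_mono (measure_ne_top _ _) (measure_mono (Iic_subset_Iic.2 hab))

lemma gauss_Ioc (m₀ : ℝ) {v : ℝ≥0} (hv : v ≠ 0) {a b : ℝ} (hab : a ≤ b) :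
    gPhi m₀ v b = gPhi m₀ v a + ((gaussianReal m₀ v) (Ioc a b)).toReal := by
  rw [gPhi, gPhi, ← ENNReal.toReal_add (measure_ne_top _ _) (measure_ne_top _ _)]
  congr 1
  rw [← Iic_union_Ioc_eq_Iic hab]
  exact measure_union (Iic_disjoint_Ioc le_rfl) measurableSet_Ioc

lemma gPhi_strictMono (m₀ : ℝ) {v : ℝ≥0} (hv : v ≠ 0) : StrictMono (gPhi m₀ v) := by
  intro a b hab
  rw [gauss_Ioc m₀ hv hab.le]
  have h1 : 0 < (gaussianReal m₀ v) (Ioc a b) := by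
    rw [gaussianReal_apply _ hv]
    rw [lintegral_pos_iff_support (measurable_gaussianPDF _ _)]
    have : Function.support (gaussianPDF m₀ v) = univ := by
      ext y; simp [Function.mem_support, (gaussianPDF_pos m₀ hv y).ne']
    rw [this, Measure.restrict_apply MeasurableSet.univ, univ_inter, Real.volume_Ioc]
    simpa using hab
  have h2 : (gaussianReal m₀ v) (Ioc a b) ≠ ⊤ := measure_ne_top _ _
  have := ENNReal.toReal_pos h1.ne' h2
  linarith

lemma gPhi_lipschitz (m₀ : ℝ) {v : ℝ≥0} (hv : v ≠ 0) {a b : ℝ} (hab : a ≤ b) :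
    gPhi m₀ v b - gPhi m₀ v a ≤ (Real.sqrt (2 * Real.pi * v))⁻¹ * (b - a) := by
  rw [gauss_Ioc m₀ hv hab]
  have hC : (0:ℝ) ≤ (Real.sqrt (2 * Real.pi * v))⁻¹ := by positivity
  have hle : (gaussianReal m₀ v) (Ioc a b)
      ≤ ENNReal.ofReal ((Real.sqrt (2 * Real.pi * v))⁻¹ * (b - a)) := by
    rw [gaussianReal_apply _ hv]
    calc ∫⁻ y in Ioc a b, gaussianPDF m₀ v y
        ≤ ∫⁻ _ in Ioc a b, ENNReal.ofReal (Real.sqrt (2 * Real.pi * v))⁻¹ := by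
          refine setLIntegral_mono measurable_const fun y _ => ?_
          rw [gaussianPDF]
          apply ENNReal.ofReal_le_ofReal
          rw [gaussianPDFReal]
          have h1 : Real.exp (-(y - m₀) ^ 2 / (2 * v)) ≤ 1 := by
            rw [Real.exp_le_one_iff]
            exact div_nonpos_of_nonpos_of_nonneg (neg_nonpos.2 (sq_nonneg _)) (by positivity)
          have h3 : (0:ℝ) ≤ (Real.sqrt (2 * Real.pi * v))⁻¹ := by positivity
          nlinarith [Real.exp_pos (-(y - m₀) ^ 2 / (2 * v))]
      _ = ENNReal.ofReal ((Real.sqrt (2 * Real.pi * v))⁻¹ * (b - a)) := by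
          rw [setLIntegral_const, Real.volume_Ioc, ENNReal.ofReal_mul hC]
  have := ENNReal.toReal_le_of_le_ofReal
    (mul_nonneg (by positivity) (by linarith)) hle
  linarith

lemma gPhi_continuous (m₀ : ℝ) {v : ℝ≥0} (hv : v ≠ 0) : Continuous (gPhi m₀ v) := by
  set C : ℝ := (Real.sqrt (2 * Real.pi * v))⁻¹ with hC
  have hC0 : 0 ≤ C := by positivity
  have key : ∀ a b : ℝ, dist (gPhi m₀ v a) (gPhi m₀ v b) ≤ C * dist a b := by
    intro a b
    rcases le_total a b with h | h
    · rw [Real.dist_eq, Real.dist_eq, abs_of_nonpos (by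
        have := gPhi_mono m₀ v h; linarith), abs_of_nonpos (by linarith)]
      have := gPhi_lipschitz m₀ hv h
      linarith
    · rw [Real.dist_eq, Real.dist_eq, abs_of_nonneg (by
        have := gPhi_mono m₀ v h; linarith), abs_of_nonneg (by linarith)]
      have := gPhi_lipschitz m₀ hv h
      linarith
  exact (LipschitzWith.of_dist_le_mul (K := ⟨C, hC0⟩) key).continuous

lemma gPhi_tendsto_atTop (m₀ : ℝ) (v : ℝ≥0) : Tendsto (gPhi m₀ v) atTop (nhds 1) := by
  have h := tendsto_measure_Iic_atTop (gaussianReal m₀ v)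
  have h2 : Tendsto (fun t => ((gaussianReal m₀ v) (Iic t)).toReal) atTop
      (nhds ((gaussianReal m₀ v) univ).toReal) :=
    (ENNReal.tendsto_toReal (measure_ne_top _ _)).comp h
  simp only [measure_univ, ENNReal.toReal_one] at h2
  exact h2

lemma gPhi_tendsto_atBot (m₀ : ℝ) {v : ℝ≥0} (hv : v ≠ 0) :
    Tendsto (gPhi m₀ v) atBot (nhds 0) := by
  have h := tendsto_measure_Ioc_atBot (gaussianReal m₀ v) 0
  have h2 : Tendsto (fun t => ((gaussianReal m₀ v) (Ioc t 0)).toReal) atBot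
      (nhds ((gaussianReal m₀ v) (Iic 0)).toReal) :=
    (ENNReal.tendsto_toReal (measure_ne_top _ _)).comp h
  have h3 : Tendsto (fun t => gPhi m₀ v 0 - ((gaussianReal m₀ v) (Ioc t 0)).toReal) atBot
      (nhds (gPhi m₀ v 0 - ((gaussianReal m₀ v) (Iic 0)).toReal)) :=
    tendsto_const_nhds.sub h2
  have heq : (fun t => gPhi m₀ v 0 - ((gaussianReal m₀ v) (Ioc t 0)).toReal)
      =ᶠ[atBot] gPhi m₀ v := by
    filter_upwards [eventually_le_atBot (0:ℝ)] with t ht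
    have := gauss_Ioc m₀ hv ht
    simp only [this]; ring
  have h0 : gPhi m₀ v 0 - ((gaussianReal m₀ v) (Iic 0)).toReal = 0 := by
    rw [gPhi]; ring
  rw [← h0]
  exact h3.congr' heq

lemma gPhi_surj (m₀ : ℝ) {v : ℝ≥0} (hv : v ≠ 0) {u : ℝ} (hu : u ∈ Ioo (0:ℝ) 1) :
    ∃ t, gPhi m₀ v t = u := by
  obtain ⟨a, ha⟩ := ((gPhi_tendsto_atBot m₀ hv).eventually
    (eventually_lt_nhds hu.1)).exists
  obtain ⟨b, hb⟩ := ((gPhi_tendsto_atTop m₀ v).eventually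
    (eventually_gt_nhds hu.2)).exists
  have hab : a ≤ b := by
    by_contra h
    exact absurd (gPhi_mono m₀ v (le_of_not_ge h)) (by intro hle; linarith)
  obtain ⟨t, _, ht⟩ := intermediate_value_Icc hab ((gPhi_continuous m₀ hv).continuousOn)
    ⟨ha.le, hb.le⟩
  exact ⟨t, ht⟩

lemma gauss_lintegral_exp (m₀ : ℝ) {v : ℝ≥0} (hv : v ≠ 0) :
    ∫⁻ y, ENNReal.ofReal (Real.exp y) ∂(gaussianReal m₀ v)
      = ENNReal.ofReal (Real.exp (m₀ + v / 2)) := by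
  have hv' : (0:ℝ) < v := lt_of_le_of_ne (NNReal.coe_nonneg v) (by
    simpa [eq_comm] using NNReal.coe_ne_zero.2 hv)
  rw [gaussianReal_of_var_ne_zero _ hv,
    lintegral_withDensity_eq_lintegral_mul _ (measurable_gaussianPDF _ _)
      (Real.measurable_exp.ennreal_ofReal)]
  have key : ∀ y, gaussianPDF m₀ v y * ENNReal.ofReal (Real.exp y)
      = ENNReal.ofReal (Real.exp (m₀ + v / 2)) * gaussianPDF (m₀ + v) v y := by
    intro y
    rw [gaussianPDF, gaussianPDF, ← ENNReal.ofReal_mul (gaussianPDFReal_nonneg _ _ _),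
      ← ENNReal.ofReal_mul (Real.exp_pos _).le]
    congr 1
    rw [gaussianPDFReal, gaussianPDFReal]
    have hexp : Real.exp (-(y - m₀) ^ 2 / (2 * v)) * Real.exp y
        = Real.exp (m₀ + v / 2) * Real.exp (-(y - (m₀ + v)) ^ 2 / (2 * v)) := by
      rw [← Real.exp_add, ← Real.exp_add, Real.exp_eq_exp]
      field_simp
      ring
    calc (Real.sqrt (2 * Real.pi * v))⁻¹ * Real.exp (-(y - m₀) ^ 2 / (2 * v)) * Real.exp y
        = (Real.sqrt (2 * Real.pi * v))⁻¹
            * (Real.exp (-(y - m₀) ^ 2 / (2 * v)) * Real.exp y) := by ring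
      _ = (Real.sqrt (2 * Real.pi * v))⁻¹
            * (Real.exp (m₀ + v / 2) * Real.exp (-(y - (m₀ + v)) ^ 2 / (2 * v))) := by
          rw [hexp]
      _ = Real.exp (m₀ + v / 2)
            * ((Real.sqrt (2 * Real.pi * v))⁻¹
              * Real.exp (-(y - (m₀ + v)) ^ 2 / (2 * v))) := by
          ring
  simp only [Pi.mul_apply]
  simp_rw [key]
  rw [lintegral_const_mul _ (measurable_gaussianPDF _ _), lintegral_gaussianPDF_eq_one _ hv,
    mul_one]

set_option maxHeartbeats 3200000 in
/-- the min-VaR portfolio. With `ξ_α = G_ξ(1−α)`,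
`X̲ = x / E[ξ 1_{ξ ≤ ξ_α}]` and `X* = X̲ 1_{ξ ≤ ξ_α}`: (i) the budget binds and
`X̲ = (x/E[ξ])/(1 − w(α))`; (ii) `G_{X*}(α) = X̲` and every feasible `X` has
`G_X(α) ≤ X̲`, so `X*` minimizes `VaR_α` of the log-return, with minimal value
`−(1/T) ln(X̲/x)`; (iii) `P(X* = 0) = α > 0`, so `E[R*] = −∞`. -/
theorem min_VaR_portfolio
    {Ω : Type*} [MeasurableSpace Ω] (μ : Measure Ω) [IsProbabilityMeasure μ]
    (ξ : Ω → ℝ) (hξm : Measurable ξ) (hξpos : ∀ ω, 0 < ξ ω) (hξint : Integrable ξ μ)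
    (T r θ : ℝ) (hT : 0 < T) (hr : 0 < r) (hθ : 0 < θ)
    (hlog : μ.map (fun ω => Real.log (ξ ω))
      = gaussianReal (-(r + θ ^ 2 / 2) * T) ((θ ^ 2 * T).toNNReal))
    (α x : ℝ) (hα : α ∈ Set.Ioo (0:ℝ) 1) (hx : 0 < x)
    (ξα Xlow : ℝ) (Xstar : Ω → ℝ)
    (hξα : ξα = qf μ ξ (1 - α))
    (hXlow : Xlow = x / ∫ ω in {ω | ξ ω ≤ ξα}, ξ ω ∂μ)
    (hXstar : ∀ ω, Xstar ω = if ξ ω ≤ ξα then Xlow else 0) :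
    -- (i) the budget constraint binds, and the equivalent expression for X̲
    (∫⁻ ω, ENNReal.ofReal (ξ ω * Xstar ω) ∂μ = ENNReal.ofReal x) ∧
    (Xlow = x / (∫ ω, ξ ω ∂μ) * (1 / (1 - wDist μ ξ α))) ∧
    -- (ii) quantile of the optimum and optimality of X* for VaR
    (qf μ Xstar α = Xlow) ∧
    (∀ X : Ω → ℝ, Measurable X → (∀ᵐ ω ∂μ, 0 ≤ X ω) →
      ∫⁻ ω, ENNReal.ofReal (ξ ω * X ω) ∂μ ≤ ENNReal.ofReal x →
      qf μ X α ≤ Xlow) ∧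
    (∀ X : Ω → ℝ, Measurable X → (∀ᵐ ω ∂μ, 0 ≤ X ω) →
      ∫⁻ ω, ENNReal.ofReal (ξ ω * X ω) ∂μ ≤ ENNReal.ofReal x →
      -((1 / T) * Real.log (Xlow / x)) ≤ -((1 / T) * Real.log (qf μ X α / x))) ∧
    (-((1 / T) * Real.log (qf μ Xstar α / x)) = -((1 / T) * Real.log (Xlow / x))) ∧
    -- (iii) P(X* = 0) = α and the expected log-return is -∞
    (μ {ω | Xstar ω = 0} = ENNReal.ofReal α) ∧
    (expLogRet μ T x Xstar = ⊥) := by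
  obtain ⟨hα0, hα1⟩ := hα
  have hvpos : (0:ℝ) < θ ^ 2 * T := by positivity
  set v : ℝ≥0 := (θ ^ 2 * T).toNNReal with hvdef
  have hv : v ≠ 0 := by
    rw [hvdef, ← NNReal.coe_ne_zero, Real.coe_toNNReal _ hvpos.le]
    exact hvpos.ne'
  have hvco : (v:ℝ) = θ ^ 2 * T := Real.coe_toNNReal _ hvpos.le
  set m₀ : ℝ := -(r + θ ^ 2 / 2) * T with hm₀
  have hlogm : Measurable fun ω => Real.log (ξ ω) := Real.measurable_log.comp hξm
  set F : ℝ → ℝ := fun y => (μ {ω | ξ ω ≤ y}).toReal with hFdef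
  have hFap : ∀ y, F y = (μ {ω | ξ ω ≤ y}).toReal := fun _ => rfl
  -- basics about F
  have hF0 : ∀ y : ℝ, y ≤ 0 → μ {ω | ξ ω ≤ y} = 0 := by
    intro y hy
    have hset : {ω | ξ ω ≤ y} = ∅ := by
      ext ω
      simp only [mem_setOf_eq, mem_empty_iff_false, iff_false, not_le]
      exact lt_of_le_of_lt hy (hξpos ω)
    rw [hset]; simp
  have hFg : ∀ y : ℝ, 0 < y → μ {ω | ξ ω ≤ y} = (gaussianReal m₀ v) (Iic (Real.log y)) := by
    intro y hy
    have hset : {ω | ξ ω ≤ y} = (fun ω => Real.log (ξ ω)) ⁻¹' (Iic (Real.log y)) := by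
      ext ω
      simp only [mem_setOf_eq, mem_preimage, mem_Iic]
      exact (Real.log_le_log_iff (hξpos ω) hy).symm
    rw [hset, ← Measure.map_apply hlogm measurableSet_Iic, hlog]
  have hFΦ : ∀ y : ℝ, 0 < y → F y = gPhi m₀ v (Real.log y) := by
    intro y hy
    rw [hFap, hFg y hy, gPhi]
  have hFmono : Monotone F := by
    intro a b hab
    rw [hFap, hFap]
    exact ENNReal.toReal_mono (measure_ne_top _ _)
      (measure_mono fun ω h => le_trans h hab)
  have hFstrict : ∀ a b : ℝ, 0 < a → a < b → F a < F b := by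
    intro a b ha hab
    rw [hFΦ a ha, hFΦ b (ha.trans hab)]
    exact gPhi_strictMono m₀ hv (Real.log_lt_log ha hab)
  have hFeq : ∀ y, μ {ω | ξ ω ≤ y} = ENNReal.ofReal (F y) := by
    intro y
    rw [hFap, ENNReal.ofReal_toReal (measure_ne_top _ _)]
  have hF01 : ∀ y, 0 ≤ F y ∧ F y ≤ 1 := by
    intro y
    refine ⟨ENNReal.toReal_nonneg, ?_⟩
    rw [hFap]
    exact ENNReal.toReal_le_of_le_ofReal zero_le_one (by simpa using prob_le_one)
  -- quantile facts
  have hqfS : ∀ u : ℝ, qf μ ξ u = sInf {y : ℝ | u < F y} := by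
    intro u
    rfl
  have hqf : ∀ u : ℝ, u ∈ Ioo (0:ℝ) 1 → 0 < qf μ ξ u ∧ F (qf μ ξ u) = u := by
    intro u hu
    obtain ⟨t, ht⟩ := gPhi_surj m₀ hv hu
    have hc : (0:ℝ) < Real.exp t := Real.exp_pos t
    have hFc : F (Real.exp t) = u := by rw [hFΦ _ hc, Real.log_exp, ht]
    have hset : {y : ℝ | u < F y} = Ioi (Real.exp t) := by
      ext y
      simp only [mem_setOf_eq, mem_Ioi]
      constructor
      · intro h
        by_contra hyc
        push_neg at hyc
        have := hFmono hyc
        rw [hFc] at this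
        linarith
      · intro h
        rw [← hFc]
        exact hFstrict _ _ hc h
    have : qf μ ξ u = Real.exp t := by rw [hqfS, hset, csInf_Ioi]
    rw [this]
    exact ⟨hc, hFc⟩
  have hqle : ∀ u : ℝ, u ∈ Ioo (0:ℝ) 1 → ∀ y : ℝ, 0 < y → (qf μ ξ u ≤ y ↔ u ≤ F y) := by
    intro u hu y hy
    constructor
    · intro h
      have h2 := (hqf u hu).2
      rw [← h2]
      exact hFmono h
    · intro h
      by_contra hlt
      push_neg at hlt
      have := hFstrict y (qf μ ξ u) hy hlt
      rw [(hqf u hu).2] at this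
      linarith
  -- ξα facts
  have h1α : (1 - α) ∈ Ioo (0:ℝ) 1 := ⟨by linarith, by linarith⟩
  have hξα_pos : 0 < ξα := by rw [hξα]; exact (hqf _ h1α).1
  have hFξα : F ξα = 1 - α := by rw [hξα]; exact (hqf _ h1α).2
  set B : Set Ω := {ω | ξ ω ≤ ξα} with hBdef
  have hBm : MeasurableSet B := hξm measurableSet_Iic
  have hμB : μ B = ENNReal.ofReal (1 - α) := by rw [hBdef, hFeq, hFξα]
  have hμBc : μ Bᶜ = ENNReal.ofReal α := by
    have h2 := measure_compl hBm (measure_ne_top μ B)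
    rw [hμB, measure_univ] at h2
    rw [h2, ← ENNReal.ofReal_one, ← ENNReal.ofReal_sub 1 (by linarith : (0:ℝ) ≤ 1 - α)]
    norm_num
  -- the integral over B
  set I : ℝ := ∫ ω in B, ξ ω ∂μ with hIdef
  have hIpos : 0 < I := by
    rw [hIdef]
    rw [setIntegral_pos_iff_support_of_nonneg_ae
      (ae_restrict_of_ae (ae_of_all _ fun ω => (hξpos ω).le)) hξint.integrableOn]
    have hsupp : Function.support ξ ∩ B = B := by
      apply inter_eq_self_of_subset_right
      intro ω _
      exact (hξpos ω).ne'
    rw [hsupp, hμB]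
    rw [ENNReal.ofReal_pos]
    linarith
  set Eξ : ℝ := ∫ ω, ξ ω ∂μ with hEdef
  have hIleE : I ≤ Eξ := by
    rw [hIdef, hEdef]
    exact setIntegral_le_integral hξint (ae_of_all _ fun ω => (hξpos ω).le)
  have hEpos : 0 < Eξ := lt_of_lt_of_le hIpos hIleE
  -- value of Eξ
  have hEval : Eξ = Real.exp (-r * T) := by
    have h1 : ENNReal.ofReal Eξ = ∫⁻ ω, ENNReal.ofReal (ξ ω) ∂μ :=
      ofReal_integral_eq_lintegral_ofReal hξint (ae_of_all _ fun ω => (hξpos ω).le)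
    have h2 : ∀ ω, ENNReal.ofReal (ξ ω) = ENNReal.ofReal (Real.exp (Real.log (ξ ω))) := by
      intro ω
      rw [Real.exp_log (hξpos ω)]
    have h3 : ∫⁻ ω, ENNReal.ofReal (ξ ω) ∂μ
        = ∫⁻ y, ENNReal.ofReal (Real.exp y) ∂(μ.map fun ω => Real.log (ξ ω)) := by
      rw [lintegral_map Real.measurable_exp.ennreal_ofReal hlogm]
      simp_rw [← h2]
    have h4 : m₀ + (v:ℝ) / 2 = -r * T := by rw [hvco, hm₀]; ring
    have h5 : ENNReal.ofReal Eξ = ENNReal.ofReal (Real.exp (-r * T)) := by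
      rw [h1, h3, hlog, gauss_lintegral_exp m₀ hv, h4]
      
    exact (ENNReal.ofReal_eq_ofReal_iff (le_of_lt hEpos) (Real.exp_pos _).le).1 h5
  have hEle1 : Eξ ≤ 1 := by
    rw [hEval, Real.exp_le_one_iff]
    nlinarith
  have hIle1 : I ≤ 1 := le_trans hIleE hEle1
  -- Xlow facts
  have hXlow' : Xlow = x / I := by rw [hXlow, hIdef, hBdef]
  have hXlowpos : 0 < Xlow := by rw [hXlow']; exact div_pos hx hIpos
  have hXlowI : Xlow * I = x := by rw [hXlow']; field_simp
  have hXlowx : x ≤ Xlow := by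
    rw [hXlow', le_div_iff₀ hIpos]
    nlinarith
  -- (i) budget identity
  have part1 : ∫⁻ ω, ENNReal.ofReal (ξ ω * Xstar ω) ∂μ = ENNReal.ofReal x := by
    have hpt : ∀ ω, ENNReal.ofReal (ξ ω * Xstar ω)
        = B.indicator (fun ω => ENNReal.ofReal (ξ ω) * ENNReal.ofReal Xlow) ω := by
      intro ω
      rw [hXstar ω]
      by_cases h : ξ ω ≤ ξα
      · rw [if_pos h, indicator_of_mem (by exact h : ω ∈ B),
          ENNReal.ofReal_mul (hξpos ω).le]
      · rw [if_neg h, indicator_of_notMem (by exact h : ω ∉ B), mul_zero]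
        simp
    simp_rw [hpt]
    rw [lintegral_indicator hBm, lintegral_mul_const _ hξm.ennreal_ofReal]
    have hlB : ∫⁻ ω in B, ENNReal.ofReal (ξ ω) ∂μ = ENNReal.ofReal I :=
      (ofReal_integral_eq_lintegral_ofReal hξint.integrableOn
        (ae_restrict_of_ae (ae_of_all _ fun ω => (hξpos ω).le))).symm
    rw [hlB, ← ENNReal.ofReal_mul hIpos.le]
    rw [mul_comm] at hXlowI
    rw [hXlowI]
  -- the key identity
  have hkey : ∫ z in (0:ℝ)..α, qf μ ξ (1 - z) = Eξ - I := by
    set G : ℝ → ℝ := fun u => qf μ ξ u with hGdef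
    have hGap : ∀ u, G u = qf μ ξ u := fun _ => rfl
    have hGmonoOn : MonotoneOn G (Ioo (0:ℝ) 1) := by
      intro u hu u' hu' huu
      rw [hGap, hGap]
      refine (hqle u hu _ (hqf u' hu').1).2 ?_
      rw [(hqf u' hu').2]
      exact huu
    set mm : Measure ℝ := volume.restrict (Ioo (0:ℝ) 1) with hmm
    have hGaem : AEMeasurable G mm :=
      aemeasurable_restrict_of_monotoneOn measurableSet_Ioo hGmonoOn
    haveI hmprob : IsProbabilityMeasure mm := ⟨by
      rw [hmm, Measure.restrict_apply MeasurableSet.univ, univ_inter, Real.volume_Ioo]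
      norm_num⟩
    haveI : IsProbabilityMeasure (mm.map G) := Measure.isProbabilityMeasure_map hGaem
    haveI : IsProbabilityMeasure (μ.map ξ) := Measure.isProbabilityMeasure_map hξm.aemeasurable
    have hmap : mm.map G = μ.map ξ := by
      refine Measure.ext_of_Iic _ _ (fun y => ?_)
      rw [Measure.map_apply_of_aemeasurable hGaem measurableSet_Iic,
        Measure.map_apply hξm measurableSet_Iic]
      rw [hmm, Measure.restrict_apply' measurableSet_Ioo]
      have hpre : ξ ⁻¹' (Iic y) = {ω | ξ ω ≤ y} := rfl
      rcases le_or_gt y 0 with hy | hy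
      · have hempty : G ⁻¹' (Iic y) ∩ Ioo (0:ℝ) 1 = ∅ := by
          ext u
          simp only [mem_inter_iff, mem_preimage, mem_Iic, mem_Ioo, mem_empty_iff_false,
            iff_false, not_and]
          intro hGy h0 h1
          have h2 := (hqf u ⟨h0, h1⟩).1
          rw [← hGap] at h2
          linarith
        rw [hempty, hpre, hF0 y hy]
        simp
      · have hset2 : G ⁻¹' (Iic y) ∩ Ioo (0:ℝ) 1 = Iic (F y) ∩ Ioo (0:ℝ) 1 := by
          ext u
          simp only [mem_inter_iff, mem_preimage, mem_Iic, mem_Ioo]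
          constructor
          · rintro ⟨h1, h2⟩
            rw [hGap] at h1
            exact ⟨(hqle u h2 y hy).1 h1, h2⟩
          · rintro ⟨h1, h2⟩
            refine ⟨?_, h2⟩
            rw [hGap]
            exact (hqle u h2 y hy).2 h1
        rw [hset2, hpre, hFeq y]
        rcases lt_or_ge (F y) 1 with hF1 | hF1
        · have hIoc : Iic (F y) ∩ Ioo (0:ℝ) 1 = Ioc 0 (F y) := by
            ext u
            simp only [mem_inter_iff, mem_Iic, mem_Ioo, mem_Ioc]
            constructor
            · rintro ⟨h1, h2, h3⟩; exact ⟨h2, h1⟩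
            · rintro ⟨h1, h2⟩; exact ⟨h2, h1, lt_of_le_of_lt h2 hF1⟩
          rw [hIoc, Real.volume_Ioc]
          simp
        · have hF1' : F y = 1 := le_antisymm (hF01 y).2 hF1
          have hIoo : Iic (F y) ∩ Ioo (0:ℝ) 1 = Ioo 0 1 := by
            rw [hF1']
            apply inter_eq_self_of_subset_right
            intro u hu
            exact le_of_lt hu.2
          rw [hIoo, Real.volume_Ioo, hF1']
          simp
    have hhm : Measurable ((Ioi ξα).indicator (id : ℝ → ℝ)) :=
      measurable_id.indicator measurableSet_Ioi
    have hident : ∀ u ∈ Ioo (0:ℝ) 1,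
        (Ioi ξα).indicator id (G u) = (Ioi (1 - α)).indicator G u := by
      intro u hu
      by_cases hcase : 1 - α < u
      · have hGgt : ξα < G u := by
          by_contra hle
          push_neg at hle
          rw [hGap] at hle
          have h2 := (hqle u hu ξα hξα_pos).1 hle
          rw [hFξα] at h2
          linarith
        simp only [Set.indicator_apply, mem_Ioi]
        rw [if_pos hGgt, if_pos hcase]
        rfl
      · have hGle : G u ∉ Ioi ξα := by
          intro hgt
          have h2 : qf μ ξ u ≤ ξα := (hqle u hu ξα hξα_pos).2 (by
            rw [hFξα]
            linarith [le_of_not_gt hcase])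
          rw [← hGap] at h2
          exact absurd (mem_Ioi.1 hgt) (not_lt.2 h2)
        have hGle' : ¬ ξα < G u := fun h => hGle (mem_Ioi.2 h)
        simp only [Set.indicator_apply, mem_Ioi]
        rw [if_neg hGle', if_neg hcase]
    have hstep1 : ∫ z in (0:ℝ)..α, qf μ ξ (1 - z) = ∫ u in (1 - α)..(1:ℝ), G u := by
      have h := intervalIntegral.integral_comp_sub_left (a := 0) (b := α)
        (fun u => qf μ ξ u) 1
      simp only [sub_zero] at h
      exact h
    have hstep2 : ∫ u in (1 - α)..(1:ℝ), G u = ∫ u in Ioo (1 - α) 1, G u := by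
      rw [intervalIntegral.integral_of_le (by linarith : (1:ℝ) - α ≤ 1)]
      exact (setIntegral_congr_set Ioo_ae_eq_Ioc).symm
    have hstep3 : ∫ u in Ioo (1 - α) 1, G u
        = ∫ u in Ioo (0:ℝ) 1, (Ioi ξα).indicator id (G u) := by
      have hseteq : Ioo (0:ℝ) 1 ∩ Ioi (1 - α) = Ioo (1 - α) 1 := by
        ext u
        simp only [mem_Ioo, mem_inter_iff, mem_Ioi]
        constructor
        · rintro ⟨⟨h1, h2⟩, h3⟩; exact ⟨h3, h2⟩
        · rintro ⟨h1, h2⟩; exact ⟨⟨by linarith, h2⟩, h1⟩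
      calc ∫ u in Ioo (1 - α) 1, G u
          = ∫ u in Ioo (0:ℝ) 1, (Ioi (1 - α)).indicator G u := by
            rw [setIntegral_indicator measurableSet_Ioi, hseteq]
        _ = ∫ u in Ioo (0:ℝ) 1, (Ioi ξα).indicator id (G u) := by
            refine setIntegral_congr_fun measurableSet_Ioo fun u hu => ?_
            exact (hident u hu).symm
    have hstep4 : ∫ u in Ioo (0:ℝ) 1, (Ioi ξα).indicator id (G u)
        = ∫ ω, (Ioi ξα).indicator id (ξ ω) ∂μ := by
      have h1 : ∫ t, (Ioi ξα).indicator id t ∂(mm.map G)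
          = ∫ u, (Ioi ξα).indicator id (G u) ∂mm :=
        integral_map hGaem hhm.aestronglyMeasurable
      have h2 : ∫ t, (Ioi ξα).indicator id t ∂(μ.map ξ)
          = ∫ ω, (Ioi ξα).indicator id (ξ ω) ∂μ :=
        integral_map hξm.aemeasurable hhm.aestronglyMeasurable
      rw [← h2, ← hmap, h1, hmm]
    have hstep5 : ∫ ω, (Ioi ξα).indicator id (ξ ω) ∂μ = Eξ - I := by
      have hfun : (fun ω => (Ioi ξα).indicator id (ξ ω)) = Bᶜ.indicator ξ := by
        funext ω
        by_cases hc : ξ ω ≤ ξα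
        · have h1 : ¬ ξα < ξ ω := not_lt.2 hc
          have h2 : ω ∉ Bᶜ := fun h => h hc
          simp only [Set.indicator_apply, mem_Ioi]
          rw [if_neg h1, if_neg h2]
        · have h1 : ξα < ξ ω := not_le.1 hc
          have h2 : ω ∈ Bᶜ := hc
          simp only [Set.indicator_apply, mem_Ioi]
          rw [if_pos h1, if_pos h2]
          rfl
      rw [hfun, integral_indicator hBm.compl]
      have hcompl := integral_add_compl hBm hξint
      have hE2 : Eξ = ∫ ω, ξ ω ∂μ := hEdef
      have hI2 : I = ∫ ω in B, ξ ω ∂μ := hIdef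
      linarith
    rw [hstep1, hstep2, hstep3, hstep4, hstep5]
  have part2 : Xlow = x / Eξ * (1 / (1 - wDist μ ξ α)) := by
    have hw : wDist μ ξ α = (Eξ - I) / Eξ := by rw [wDist, hkey, hEdef]
    rw [hw, hXlow']
    have h1 : 1 - (Eξ - I) / Eξ = I / Eξ := by field_simp; ring
    rw [h1]
    field_simp
  -- (ii-b) quantile of Xstar
  have part3 : qf μ Xstar α = Xlow := by
    have hSet : {y : ℝ | α < (μ {ω | Xstar ω ≤ y}).toReal} = Ici Xlow := by
      ext y
      simp only [mem_setOf_eq, mem_Ici]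
      rcases le_or_gt Xlow y with h1 | h1
      · have huniv : {ω | Xstar ω ≤ y} = univ := by
          ext ω; simp only [mem_setOf_eq, mem_univ, iff_true]
          rw [hXstar ω]
          by_cases h : ξ ω ≤ ξα
          · rw [if_pos h]; exact h1
          · rw [if_neg h]; linarith [hXlowpos]
        rw [huniv, measure_univ]
        simp only [ENNReal.toReal_one]
        exact iff_of_true hα1 h1
      · rcases le_or_gt 0 y with h2 | h2
        · have hBc2 : {ω | Xstar ω ≤ y} = Bᶜ := by
            ext ω; simp only [mem_setOf_eq, mem_compl_iff]
            rw [hXstar ω]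
            constructor
            · intro hle hmem
              have hm2 : ξ ω ≤ ξα := hmem
              rw [if_pos hm2] at hle
              linarith
            · intro hnmem
              have hm2 : ¬ ξ ω ≤ ξα := hnmem
              rw [if_neg hm2]; exact h2
          rw [hBc2, hμBc, ENNReal.toReal_ofReal hα0.le]
          constructor
          · intro h; linarith
          · intro h; linarith
        · have hemp : {ω | Xstar ω ≤ y} = ∅ := by
            ext ω; simp only [mem_setOf_eq, mem_empty_iff_false, iff_false, not_le]
            rw [hXstar ω]
            by_cases h : ξ ω ≤ ξα
            · rw [if_pos h]; linarith
            · rw [if_neg h]; linarith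
          rw [hemp]
          simp only [measure_empty, ENNReal.toReal_zero]
          constructor
          · intro h; linarith
          · intro h; linarith
    show sInf {y : ℝ | α < (μ {ω | Xstar ω ≤ y}).toReal} = Xlow
    rw [hSet, csInf_Ici]
  -- (ii-c) optimality
  have part4 : ∀ X : Ω → ℝ, Measurable X → (∀ᵐ ω ∂μ, 0 ≤ X ω) →
      ∫⁻ ω, ENNReal.ofReal (ξ ω * X ω) ∂μ ≤ ENNReal.ofReal x → qf μ X α ≤ Xlow := by
    intro X hXm hX0 hbud
    by_contra hcon
    push_neg at hcon
    set q := qf μ X α with hqdef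
    set y : ℝ := (Xlow + q) / 2 with hydef
    have hy1 : Xlow < y := by rw [hydef]; linarith
    have hy2 : y < q := by rw [hydef]; linarith
    have hy0 : 0 < y := lt_trans hXlowpos hy1
    have hSlb : ∀ z ∈ {z : ℝ | α < (μ {ω | X ω ≤ z}).toReal}, (0:ℝ) ≤ z := by
      intro z hz
      by_contra hz0
      push_neg at hz0
      have hnull : μ {ω | X ω ≤ z} = 0 := by
        refine measure_mono_null ?_ (ae_iff.1 hX0)
        intro ω h
        simp only [mem_setOf_eq, not_le] at h ⊢
        exact lt_of_le_of_lt h hz0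
      simp only [mem_setOf_eq, hnull, ENNReal.toReal_zero] at hz
      linarith
    have hynotin : ¬ α < (μ {ω | X ω ≤ y}).toReal := by
      intro hin
      have hqy : q ≤ y := csInf_le ⟨0, hSlb⟩ hin
      linarith
    push_neg at hynotin
    set A : Set Ω := {ω | y < X ω} with hAdef
    have hAm : MeasurableSet A := measurableSet_lt measurable_const hXm
    have hAc : Aᶜ = {ω | X ω ≤ y} := by
      ext ω; simp [hAdef, not_lt]
    have hμA : ENNReal.ofReal (1 - α) ≤ μ A := by
      have h1 : μ {ω | X ω ≤ y} ≤ ENNReal.ofReal α := by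
        rw [← ENNReal.ofReal_toReal (measure_ne_top μ {ω | X ω ≤ y})]
        exact ENNReal.ofReal_le_ofReal hynotin
      have h3 : μ A = 1 - μ {ω | X ω ≤ y} := by
        rw [← hAc]
        have h4 := measure_compl hAm.compl (measure_ne_top μ Aᶜ)
        rw [compl_compl, measure_univ] at h4
        exact h4
      rw [h3]
      calc ENNReal.ofReal (1 - α) = 1 - ENNReal.ofReal α := by
            rw [← ENNReal.ofReal_one, ← ENNReal.ofReal_sub _ hα0.le]
        _ ≤ 1 - μ {ω | X ω ≤ y} := tsub_le_tsub_left h1 1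
    have hμABr : (μ B).toReal ≤ (μ A).toReal := by
      apply ENNReal.toReal_mono (measure_ne_top μ A)
      rw [hμB]
      exact hμA
    have hIA : I ≤ ∫ ω in A, ξ ω ∂μ := by
      have hdAB : Disjoint (A ∩ B) (A \ B) := Set.disjoint_left.2 (fun ω h1 h2 => h2.2 h1.2)
      have hdBA : Disjoint (A ∩ B) (B \ A) := Set.disjoint_left.2 (fun ω h1 h2 => h2.2 h1.1)
      have hsplitA : ∫ ω in A, ξ ω ∂μ = ∫ ω in A ∩ B, ξ ω ∂μ + ∫ ω in A \ B, ξ ω ∂μ := by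
        rw [← setIntegral_union hdAB (hAm.diff hBm) hξint.integrableOn hξint.integrableOn,
          Set.inter_union_diff]
      have hsplitB : I = ∫ ω in A ∩ B, ξ ω ∂μ + ∫ ω in B \ A, ξ ω ∂μ := by
        rw [hIdef, ← setIntegral_union hdBA (hBm.diff hAm) hξint.integrableOn
          hξint.integrableOn, Set.inter_comm A B, Set.inter_union_diff]
      have h5 : ∫ ω in B \ A, ξ ω ∂μ ≤ ξα * (μ (B \ A)).toReal := by
        have h5' := setIntegral_mono_on hξint.integrableOn
          (integrableOn_const (measure_ne_top μ _)) (hBm.diff hAm)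
          (fun ω hω => (hω.1 : ξ ω ≤ ξα))
        rwa [setIntegral_const, smul_eq_mul, mul_comm] at h5'
      have h6 : ξα * (μ (A \ B)).toReal ≤ ∫ ω in A \ B, ξ ω ∂μ := by
        have h6' := setIntegral_mono_on
          (integrableOn_const (measure_ne_top μ _)) hξint.integrableOn
          (hAm.diff hBm)
          (fun ω hω => le_of_lt (not_le.1 (hω.2 : ¬ ξ ω ≤ ξα)))
        rwa [setIntegral_const, smul_eq_mul, mul_comm] at h6'
      have h7 : (μ (B \ A)).toReal ≤ (μ (A \ B)).toReal := by
        have hb : (μ B).toReal = (μ (A ∩ B)).toReal + (μ (B \ A)).toReal := by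
          rw [← ENNReal.toReal_add (measure_ne_top _ _) (measure_ne_top _ _),
            ← measure_union hdBA (hBm.diff hAm), Set.inter_comm A B, Set.inter_union_diff]
        have ha : (μ A).toReal = (μ (A ∩ B)).toReal + (μ (A \ B)).toReal := by
          rw [← ENNReal.toReal_add (measure_ne_top _ _) (measure_ne_top _ _),
            ← measure_union hdAB (hAm.diff hBm), Set.inter_union_diff]
        linarith
      have h8 : ξα * (μ (B \ A)).toReal ≤ ξα * (μ (A \ B)).toReal :=
        mul_le_mul_of_nonneg_left h7 hξα_pos.le
      linarith
    have hbound : ENNReal.ofReal (y * I) ≤ ENNReal.ofReal x := by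
      calc ENNReal.ofReal (y * I)
          ≤ ENNReal.ofReal (y * ∫ ω in A, ξ ω ∂μ) := by
            exact ENNReal.ofReal_le_ofReal (mul_le_mul_of_nonneg_left hIA hy0.le)
        _ = ENNReal.ofReal y * ENNReal.ofReal (∫ ω in A, ξ ω ∂μ) := ENNReal.ofReal_mul hy0.le
        _ = ENNReal.ofReal y * ∫⁻ ω in A, ENNReal.ofReal (ξ ω) ∂μ := by
            rw [ofReal_integral_eq_lintegral_ofReal hξint.integrableOn
              (ae_restrict_of_ae (ae_of_all _ fun ω => (hξpos ω).le))]
        _ = ∫⁻ ω in A, ENNReal.ofReal y * ENNReal.ofReal (ξ ω) ∂μ :=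
            (lintegral_const_mul _ hξm.ennreal_ofReal).symm
        _ ≤ ∫⁻ ω in A, ENNReal.ofReal (ξ ω * X ω) ∂μ := by
            refine setLIntegral_mono (hξm.mul hXm).ennreal_ofReal fun ω hω => ?_
            rw [← ENNReal.ofReal_mul hy0.le]
            apply ENNReal.ofReal_le_ofReal
            have hyX : y < X ω := hω
            nlinarith [hξpos ω]
        _ ≤ ∫⁻ ω, ENNReal.ofReal (ξ ω * X ω) ∂μ := setLIntegral_le_lintegral _ _
        _ ≤ ENNReal.ofReal x := hbud
    have hfin : y * I ≤ x := (ENNReal.ofReal_le_ofReal_iff hx.le).1 hbound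
    have := mul_lt_mul_of_pos_right hy1 hIpos
    linarith
  -- (ii-d)
  have part5 : ∀ X : Ω → ℝ, Measurable X → (∀ᵐ ω ∂μ, 0 ≤ X ω) →
      ∫⁻ ω, ENNReal.ofReal (ξ ω * X ω) ∂μ ≤ ENNReal.ofReal x →
      -((1 / T) * Real.log (Xlow / x)) ≤ -((1 / T) * Real.log (qf μ X α / x)) := by
    intro X hXm hX0 hbud
    have hq := part4 X hXm hX0 hbud
    have hq0 : 0 ≤ qf μ X α := by
      apply Real.sInf_nonneg
      intro y hy
      by_contra hy0
      push_neg at hy0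
      have hnull : μ {ω | X ω ≤ y} = 0 := by
        refine measure_mono_null ?_ (ae_iff.1 hX0)
        intro ω h
        simp only [mem_setOf_eq, not_le] at h ⊢
        exact lt_of_le_of_lt h hy0
      simp only [mem_setOf_eq, hnull, ENNReal.toReal_zero] at hy
      linarith
    have hlogle : Real.log (qf μ X α / x) ≤ Real.log (Xlow / x) := by
      rcases eq_or_lt_of_le hq0 with h0 | h0
      · rw [← h0]
        rw [zero_div, Real.log_zero]
        apply Real.log_nonneg
        rw [le_div_iff₀ hx]
        nlinarith [hXlowx]
      · rw [Real.log_le_log_iff (div_pos h0 hx) (div_pos hXlowpos hx)]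
        gcongr
    have h1T : (0:ℝ) ≤ 1 / T := by positivity
    have := mul_le_mul_of_nonneg_left hlogle h1T
    linarith
  -- (ii-e)
  have part6 : -((1 / T) * Real.log (qf μ Xstar α / x))
      = -((1 / T) * Real.log (Xlow / x)) := by rw [part3]
  -- (iii)
  have part7 : μ {ω | Xstar ω = 0} = ENNReal.ofReal α := by
    have hset : {ω | Xstar ω = 0} = Bᶜ := by
      ext ω
      simp only [mem_setOf_eq, mem_compl_iff]
      constructor
      · intro h0 hmem
        have hm2 : ξ ω ≤ ξα := hmem
        rw [hXstar ω, if_pos hm2] at h0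
        exact hXlowpos.ne' h0
      · intro hnmem
        have hm2 : ¬ ξ ω ≤ ξα := hnmem
        rw [hXstar ω, if_neg hm2]
    rw [hset, hμBc]
  have part8 : expLogRet μ T x Xstar = ⊥ := by
    rw [expLogRet, if_pos]
    rw [part7, ENNReal.ofReal_pos]
    exact hα0
  exact ⟨part1, part2, part3, part4, part5, part6, part7, part8⟩

end
end
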